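/- arXiv:1008.4764 — 5 statements merged into one kernel-verified Lean document; each statement's English description precedes it below -/
import Mathlib

section
/- Let a_{m+1} ∈ ℝ^n and b_{m+1} ∈ ℝ satisfy ⟨a_{m+1},x⟩ + b_{m+1} > 0 for all x ∈ P (a redundant inequality whose hyperplane does not meet P), and let Z_{P'} := {z ∈ ℂ^{m+1} : there exists x ∈ P with |z_i|² = ⟨a_i,x⟩ + b_i for all i = 1,…,m+1}. Then the map Z_{P'} → Z_P × S¹ sending z to ((z_1,…,z_m), z_{m+1}/|z_{m+1}|), where S¹ = {w ∈ ℂ : |w| = 1}, is a homeomorphism. -/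
/-- Adding a redundant linear inequality (whose hyperplane does not meet `P`)
to the presentation of `P` multiplies the moment-angle manifold `Z_P` by a circle:
the map `Z_{P'} → Z_P × S¹`, `z ↦ ((z₁,…,z_m), z_{m+1}/|z_{m+1}|)`, is a homeomorphism. -/
theorem redundant_inequality_gives_circle_factor (n m : ℕ) (hn : 1 ≤ n) (hm : 1 ≤ m)
    (a : Fin m → (Fin n → ℝ)) (b : Fin m → ℝ)
    (P : Set (Fin n → ℝ))
    (hP : P = {x | ∀ i, 0 ≤ ∑ j, a i j * x j + b i})
    (hPbdd : Bornology.IsBounded P)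
    (hPint : (interior P).Nonempty)
    (a' : Fin n → ℝ) (b' : ℝ)
    (hred : ∀ x ∈ P, 0 < ∑ j, a' j * x j + b')
    (ZP : Set (Fin m → ℂ))
    (hZP : ZP = {z | ∃ x ∈ P, ∀ i, ‖z i‖ ^ 2 = ∑ j, a i j * x j + b i})
    (ZP' : Set (Fin (m + 1) → ℂ))
    (hZP' : ZP' = {z | ∃ x ∈ P,
      (∀ i : Fin m, ‖z i.castSucc‖ ^ 2 = ∑ j, a i j * x j + b i) ∧
      ‖z (Fin.last m)‖ ^ 2 = ∑ j, a' j * x j + b'}) :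
    ∃ e : ZP' ≃ₜ ZP × Metric.sphere (0 : ℂ) 1,
      ∀ z : ZP',
        ((e z).1 : Fin m → ℂ) = (fun i => (z : Fin (m + 1) → ℂ) i.castSucc) ∧
        ((e z).2 : ℂ) = (z : Fin (m + 1) → ℂ) (Fin.last m) /
          (‖(z : Fin (m + 1) → ℂ) (Fin.last m)‖ : ℂ) := by
  classical
  -- The linear map x ↦ (∑ j, a i j * x j)_i
  set L : (Fin n → ℝ) →ₗ[ℝ] (Fin m → ℝ) :=
    { toFun := fun x i => ∑ j, a i j * x j
      map_add' := by
        intro x y; funext i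
        simp [mul_add, Finset.sum_add_distrib]
      map_smul' := by
        intro c x; funext i
        simp only [Pi.smul_apply, smul_eq_mul, RingHom.id_apply]
        rw [Finset.mul_sum]
        exact Finset.sum_congr rfl fun j _ => by ring } with hL
  -- L is injective
  have hLinj : LinearMap.ker L = ⊥ := by
    rw [LinearMap.ker_eq_bot']
    intro v hv
    by_contra hv0
    obtain ⟨x₀, hx₀i⟩ := hPint
    have hx₀P : x₀ ∈ P := interior_subset hx₀i
    have hLv : ∀ i, ∑ j, a i j * v j = 0 := by
      intro i
      simpa [hL] using congrFun hv i
    have hline : ∀ t : ℝ, x₀ + t • v ∈ P := by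
      intro t
      rw [hP]
      intro i
      have hsum : ∑ j, a i j * (x₀ + t • v) j
          = ∑ j, a i j * x₀ j + t * ∑ j, a i j * v j := by
        rw [Finset.mul_sum, ← Finset.sum_add_distrib]
        exact Finset.sum_congr rfl fun j _ => by
          simp [Pi.add_apply, Pi.smul_apply, smul_eq_mul]; ring
      have hP0 : 0 ≤ ∑ j, a i j * x₀ j + b i := by
        rw [hP] at hx₀P; exact hx₀P i
      rw [hsum, hLv i]
      simpa using hP0
    obtain ⟨C, hC⟩ := hPbdd.exists_norm_le
    have hvpos : 0 < ‖v‖ := norm_pos_iff.mpr hv0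
    set t : ℝ := (C + ‖x₀‖ + 1) / ‖v‖ with ht
    have hx0C : ‖x₀‖ ≤ C := hC x₀ hx₀P
    have hx0nn : 0 ≤ ‖x₀‖ := norm_nonneg _
    have htpos : 0 ≤ t := by
      apply div_nonneg _ hvpos.le
      linarith
    have h1 : ‖t • v‖ = C + ‖x₀‖ + 1 := by
      rw [norm_smul, Real.norm_eq_abs, abs_of_nonneg htpos, ht,
        div_mul_cancel₀ _ hvpos.ne']
    have h2 : ‖x₀ + t • v‖ ≤ C := hC _ (hline t)
    have h3 : ‖t • v‖ ≤ ‖x₀ + t • v‖ + ‖x₀‖ := by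
      have h4 := norm_sub_le (x₀ + t • v) x₀
      have h5 : x₀ + t • v - x₀ = t • v := by abel
      rwa [h5] at h4
    linarith
  obtain ⟨g, hg⟩ := L.exists_leftInverse_of_injective hLinj
  -- The continuous "witness recovery" map
  set F : (Fin m → ℂ) → (Fin n → ℝ) := fun w => g (fun i => ‖w i‖ ^ 2 - b i) with hF
  have hFx : ∀ (w : Fin m → ℂ) (x : Fin n → ℝ),
      (∀ i, ‖w i‖ ^ 2 = ∑ j, a i j * x j + b i) → F w = x := by
    intro w x h
    have hwx : (fun i => ‖w i‖ ^ 2 - b i) = L x := by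
      funext i
      show ‖w i‖ ^ 2 - b i = ∑ j, a i j * x j
      rw [h i]; ring
    rw [hF]
    simp only [hwx]
    simpa using LinearMap.congr_fun hg x
  have hFc : Continuous F :=
    (LinearMap.continuous_of_finiteDimensional g).comp
      (continuous_pi fun i =>
        ((continuous_norm.comp (continuous_apply i)).pow 2).sub continuous_const)
  have hnr : ∀ r : ℝ, 0 ≤ r → ‖(r : ℂ)‖ = r := fun r hr => by
    rw [Complex.norm_real, Real.norm_eq_abs, abs_of_nonneg hr]
  set cf : (Fin m → ℂ) → ℝ := fun w => ∑ j, a' j * F w j + b' with hcf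
  have hcfc : Continuous cf := by
    apply Continuous.add _ continuous_const
    exact continuous_finset_sum _ fun j _ =>
      continuous_const.mul ((continuous_apply j).comp hFc)
  -- value of cf on points of ZP
  have hcfval : ∀ (w : Fin m → ℂ) (x : Fin n → ℝ), x ∈ P →
      (∀ i, ‖w i‖ ^ 2 = ∑ j, a i j * x j + b i) →
      cf w = ∑ j, a' j * x j + b' ∧ 0 < cf w := by
    intro w x hxP h
    have hFw : F w = x := hFx w x h
    constructor
    · rw [hcf]; simp [hFw]
    · rw [hcf]; simp only [hFw]; exact hred x hxP
  -- basic facts about points of ZP'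
  have hmem : ∀ z ∈ ZP', (fun i : Fin m => z i.castSucc) ∈ ZP := by
    intro z hz
    rw [hZP'] at hz
    obtain ⟨x, hxP, h1, _⟩ := hz
    rw [hZP]
    exact ⟨x, hxP, h1⟩
  have hlast : ∀ z ∈ ZP', 0 < ‖z (Fin.last m)‖ := by
    intro z hz
    rw [hZP'] at hz
    obtain ⟨x, hxP, _, h2⟩ := hz
    have h3 : 0 < ‖z (Fin.last m)‖ ^ 2 := h2 ▸ hred x hxP
    nlinarith [norm_nonneg (z (Fin.last m))]
  -- forward map
  set φ : ZP' → ZP × Metric.sphere (0 : ℂ) 1 := fun z =>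
    (⟨fun i => (z : Fin (m + 1) → ℂ) i.castSucc, hmem z z.2⟩,
     ⟨(z : Fin (m + 1) → ℂ) (Fin.last m) / (‖(z : Fin (m + 1) → ℂ) (Fin.last m)‖ : ℂ), by
        have h := hlast z z.2
        rw [mem_sphere_zero_iff_norm, norm_div, hnr _ (norm_nonneg _),
          div_self h.ne']⟩) with hφ
  -- inverse map
  have hψmem : ∀ p : ZP × Metric.sphere (0 : ℂ) 1,
      Fin.snoc (p.1 : Fin m → ℂ)
        ((p.2 : ℂ) * (Real.sqrt (cf (p.1 : Fin m → ℂ)) : ℂ)) ∈ ZP' := by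
    intro p
    have hw := p.1.2
    simp only [hZP, Set.mem_setOf_eq] at hw
    obtain ⟨x, hxP, hx⟩ := hw
    obtain ⟨hc1, hc2⟩ := hcfval _ x hxP hx
    have hs : ‖(p.2 : ℂ)‖ = 1 := mem_sphere_zero_iff_norm.mp p.2.2
    simp only [hZP', Set.mem_setOf_eq]
    refine ⟨x, hxP, ?_, ?_⟩
    · intro i
      rw [Fin.snoc_castSucc]
      exact hx i
    · rw [Fin.snoc_last, norm_mul, hs, hnr _ (Real.sqrt_nonneg _), one_mul,
        Real.sq_sqrt hc2.le, hc1]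
  set ψ : ZP × Metric.sphere (0 : ℂ) 1 → ZP' := fun p =>
    ⟨Fin.snoc (p.1 : Fin m → ℂ)
      ((p.2 : ℂ) * (Real.sqrt (cf (p.1 : Fin m → ℂ)) : ℂ)), hψmem p⟩ with hψ
  have hli : Function.LeftInverse ψ φ := by
    intro z
    have hz := z.2
    simp only [hZP', Set.mem_setOf_eq] at hz
    obtain ⟨x, hxP, h1, h2⟩ := hz
    obtain ⟨hc1, _⟩ := hcfval (fun i => (z : Fin (m + 1) → ℂ) i.castSucc) x hxP h1
    have hlp := hlast z z.2
    have hsq : Real.sqrt (cf fun i => (z : Fin (m + 1) → ℂ) i.castSucc)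
        = ‖(z : Fin (m + 1) → ℂ) (Fin.last m)‖ := by
      rw [hc1, ← h2, Real.sqrt_sq (norm_nonneg _)]
    have hne : ((‖(z : Fin (m + 1) → ℂ) (Fin.last m)‖ : ℝ) : ℂ) ≠ 0 :=
      Complex.ofReal_ne_zero.mpr hlp.ne'
    apply Subtype.ext
    simp only [hψ, hφ]
    funext i
    induction i using Fin.lastCases with
    | last =>
        rw [Fin.snoc_last, hsq, div_mul_cancel₀ _ hne]
    | cast i =>
        rw [Fin.snoc_castSucc]
  have hri : Function.RightInverse ψ φ := by
    intro p
    have hw := p.1.2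
    simp only [hZP, Set.mem_setOf_eq] at hw
    obtain ⟨x, hxP, hx⟩ := hw
    obtain ⟨_, hc2⟩ := hcfval _ x hxP hx
    have hs : ‖(p.2 : ℂ)‖ = 1 := mem_sphere_zero_iff_norm.mp p.2.2
    have hsnorm : ‖(Fin.snoc (p.1 : Fin m → ℂ)
        ((p.2 : ℂ) * (Real.sqrt (cf (p.1 : Fin m → ℂ)) : ℂ)) : Fin (m+1) → ℂ)
        (Fin.last m)‖ = Real.sqrt (cf (p.1 : Fin m → ℂ)) := by
      rw [Fin.snoc_last, norm_mul, hs, hnr _ (Real.sqrt_nonneg _), one_mul]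
    have hsqne : (Real.sqrt (cf (p.1 : Fin m → ℂ)) : ℝ) ≠ 0 :=
      (Real.sqrt_pos.mpr hc2).ne'
    have h1 : φ (ψ p) = ((φ (ψ p)).1, (φ (ψ p)).2) := rfl
    apply Prod.ext
    · apply Subtype.ext
      show (fun i : Fin m => ((ψ p : Fin (m+1) → ℂ)) i.castSucc) = (p.1 : Fin m → ℂ)
      funext i
      simp only [hψ, Fin.snoc_castSucc]
    · apply Subtype.ext
      show ((ψ p : Fin (m+1) → ℂ)) (Fin.last m) /
          (‖((ψ p : Fin (m+1) → ℂ)) (Fin.last m)‖ : ℂ) = (p.2 : ℂ)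
      simp only [hψ]
      rw [hsnorm, Fin.snoc_last, mul_div_assoc,
        div_self (Complex.ofReal_ne_zero.mpr hsqne), mul_one]
  have hφc : Continuous φ := by
    rw [hφ]
    apply Continuous.prodMk
    · apply Continuous.subtype_mk
      exact continuous_pi fun i => (continuous_apply _).comp continuous_subtype_val
    · apply Continuous.subtype_mk
      apply Continuous.div
      · exact (continuous_apply _).comp continuous_subtype_val
      · exact Complex.continuous_ofReal.comp
          (continuous_norm.comp ((continuous_apply _).comp continuous_subtype_val))
      · intro z
        exact Complex.ofReal_ne_zero.mpr (hlast z z.2).ne'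
  have hψc : Continuous ψ := by
    rw [hψ]
    apply Continuous.subtype_mk
    apply continuous_pi
    intro i
    induction i using Fin.lastCases with
    | last =>
        simp only [Fin.snoc_last]
        exact (continuous_subtype_val.comp continuous_snd).mul
          (Complex.continuous_ofReal.comp (Real.continuous_sqrt.comp
            (hcfc.comp (continuous_subtype_val.comp continuous_fst))))
    | cast i =>
        simp only [Fin.snoc_castSucc]
        exact (continuous_apply _).comp (continuous_subtype_val.comp continuous_fst)
  exact ⟨Homeomorph.mk ⟨φ, ψ, hli, hri⟩ hφc hψc, fun z => ⟨rfl, rfl⟩⟩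
end

section
/- Assume the presentation of P is generic. Then there exists a homeomorphism φ : Z_{K_P} → Z_P which is T^m-equivariant: φ(t·z) = t·φ(z) for all t ∈ T^m and z ∈ Z_{K_P}. -/
open Finset Bornology

namespace ZZ

noncomputable section

open scoped Classical

variable {n m : ℕ}

def fv (a : Fin m → Fin n → ℝ) (b : Fin m → ℝ) (x : Fin n → ℝ) : Fin m → ℝ :=
  fun i => ∑ j, a i j * x j + b i

variable (a : Fin m → Fin n → ℝ) (b : Fin m → ℝ)

def Pset : Set (Fin n → ℝ) := {x | ∀ i, 0 ≤ fv a b x i}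

def Qset : Set (Fin m → ℝ) := fv a b '' Pset a b

def good (I : Finset (Fin m)) : Prop := ∃ x ∈ Pset a b, ∀ i ∈ I, fv a b x i = 0

def fQ (I : Finset (Fin m)) : Set (Fin m → ℝ) := {q | q ∈ Qset a b ∧ ∀ i ∈ I, q i = 0}

def supC (y : Fin m → ℝ) : Finset (Fin m) := univ.filter (fun i => y i < 1)

def fC (I : Finset (Fin m)) : Set (Fin m → ℝ) :=
  {y | (∀ j, 0 ≤ y j ∧ y j ≤ 1) ∧ (∀ i ∈ I, y i = 0) ∧ good a b (supC y)}

lemma fv_add_smul (x d : Fin n → ℝ) (t : ℝ) :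
    fv a b (x + t • d) = fun i => fv a b x i + t * ∑ j, a i j * d j := by
  funext i
  simp only [fv, Pi.add_apply, Pi.smul_apply, smul_eq_mul]
  have h : ∀ j ∈ univ, a i j * (x j + t * d j) = a i j * x j + t * (a i j * d j) := by
    intro j _ ; ring
  rw [Finset.sum_congr rfl h, Finset.sum_add_distrib, ← Finset.mul_sum]
  ring

lemma fv_combo (x x' : Fin n → ℝ) (t : ℝ) :
    fv a b (x + t • (x' - x)) = fv a b x + t • (fv a b x' - fv a b x) := by
  rw [fv_add_smul]
  funext i
  simp only [Pi.add_apply, Pi.smul_apply, Pi.sub_apply, smul_eq_mul]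
  have : ∑ j, a i j * (x' j - x j) = fv a b x' i - fv a b x i := by
    simp only [fv]
    have h : ∀ j ∈ univ, a i j * (x' j - x j) = a i j * x' j - a i j * x j := by
      intro j _; ring
    rw [Finset.sum_congr rfl h, Finset.sum_sub_distrib]
    ring
  rw [this]

lemma range_combo {p r : Fin m → ℝ} (hp : p ∈ Set.range (fv a b))
    (hr : r ∈ Set.range (fv a b)) (t : ℝ) : p + t • (r - p) ∈ Set.range (fv a b) := by
  obtain ⟨x, rfl⟩ := hp; obtain ⟨x', rfl⟩ := hr
  exact ⟨x + t • (x' - x), fv_combo a b x x' t⟩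

lemma mem_Qset_iff {q : Fin m → ℝ} :
    q ∈ Qset a b ↔ q ∈ Set.range (fv a b) ∧ ∀ i, 0 ≤ q i := by
  constructor
  · rintro ⟨x, hx, rfl⟩; exact ⟨⟨x, rfl⟩, hx⟩
  · rintro ⟨⟨x, rfl⟩, h⟩; exact ⟨x, h, rfl⟩

lemma good_iff {I : Finset (Fin m)} : good a b I ↔ (fQ a b I).Nonempty := by
  constructor
  · rintro ⟨x, hx, h⟩; exact ⟨fv a b x, ⟨x, hx, rfl⟩, h⟩
  · rintro ⟨q, ⟨x, hx, rfl⟩, h⟩; exact ⟨x, hx, h⟩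

lemma good_mono {I J : Finset (Fin m)} (h : I ⊆ J) (hJ : good a b J) : good a b I := by
  obtain ⟨x, hx, hz⟩ := hJ; exact ⟨x, hx, fun i hi => hz i (h hi)⟩

lemma dual_vector {ι : Type} [Fintype ι] [DecidableEq ι] {v : ι → Fin n → ℝ}
    (hv : LinearIndependent ℝ v) (w : ι → ℝ) :
    ∃ d : Fin n → ℝ, ∀ k, ∑ j, v k j * d j = w k := by
  set G : Matrix ι ι ℝ := Matrix.of (fun k l => ∑ j, v k j * v l j) with hG
  have key : ∀ c : ι → ℝ, ∀ k, G.mulVec c k = ∑ j, v k j * (∑ l, c l * v l j) := by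
    intro c k
    simp only [Matrix.mulVec, dotProduct, hG, Matrix.of_apply, Finset.sum_mul,
      Finset.mul_sum]
    rw [Finset.sum_comm]
    exact Finset.sum_congr rfl fun j _ => Finset.sum_congr rfl fun l _ => by ring
  have hinj : Function.Injective (Matrix.mulVecLin G) := by
    rw [← LinearMap.ker_eq_bot, LinearMap.ker_eq_bot']
    intro c hc
    have hc' : G.mulVec c = 0 := hc
    have hsq : ∑ j, (∑ l, c l * v l j) ^ 2 = 0 := by
      have h2 : ∑ j, (∑ l, c l * v l j) ^ 2 = ∑ k, c k * G.mulVec c k := by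
        simp only [key, Finset.mul_sum]
        rw [Finset.sum_comm]
        refine Finset.sum_congr rfl fun j _ => ?_
        rw [sq, Finset.sum_mul]
        refine Finset.sum_congr rfl fun l _ => ?_
        rw [Finset.mul_sum]
        exact Finset.sum_congr rfl fun i _ => by ring
      rw [h2, hc']
      simp
    have hz : ∀ j, ∑ l, c l * v l j = 0 := by
      intro j
      have h3 := (Finset.sum_eq_zero_iff_of_nonneg (fun j _ => sq_nonneg _)).mp hsq j (mem_univ j)
      exact pow_eq_zero_iff two_ne_zero |>.mp h3
    have h0 : ∑ l, c l • v l = 0 := by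
      funext j
      rw [Finset.sum_apply]
      simpa using hz j
    funext i
    exact Fintype.linearIndependent_iff.mp hv c h0 i
  obtain ⟨c, hcw⟩ := (LinearMap.injective_iff_surjective).mp hinj w
  refine ⟨fun j => ∑ l, c l * v l j, fun k => ?_⟩
  rw [← key c k]
  exact congrFun hcw k

lemma exists_relint
    (hgen : ∀ x ∈ Pset a b, LinearIndependent ℝ (fun i : {i : Fin m // fv a b x i = 0} => a i.1))
    {I : Finset (Fin m)} (hI : good a b I) :
    ∃ x ∈ Pset a b, (∀ i ∈ I, fv a b x i = 0) ∧ (∀ j ∉ I, 0 < fv a b x j) := by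
  obtain ⟨x, hxP, hxI⟩ := hI
  obtain ⟨d, hd⟩ := dual_vector (hgen x hxP) (fun k => if (k : Fin m) ∈ I then (0:ℝ) else 1)
  set g : Fin m → ℝ := fun k => ∑ j, a k j * d j with hg
  set s : Finset (Fin m) := univ.filter (fun k => 0 < fv a b x k ∧ g k < 0) with hs
  set ε : ℝ := if h : s.Nonempty then min 1 (s.inf' h (fun k => fv a b x k / (2 * (-g k)))) else 1
    with hε
  have hεpos : 0 < ε := by
    rw [hε]
    split
    · rename_i h
      refine lt_min one_pos ?_
      rw [Finset.lt_inf'_iff]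
      intro k hk
      rw [hs] at hk
      simp only [Finset.mem_filter] at hk
      exact div_pos hk.2.1 (by linarith [hk.2.2])
    · exact one_pos
  have hεle : ∀ k ∈ s, ε ≤ fv a b x k / (2 * (-g k)) := by
    intro k hk
    rw [hε, dif_pos ⟨k, hk⟩]
    exact le_trans (min_le_right _ _) (Finset.inf'_le _ hk)
  have hval : ∀ k, fv a b (x + ε • d) k = fv a b x k + ε * g k := by
    intro k; rw [fv_add_smul]
  have hkey : ∀ k, (0 ≤ fv a b (x + ε • d) k) ∧ (k ∈ I → fv a b (x + ε • d) k = 0) ∧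
      (k ∉ I → 0 < fv a b (x + ε • d) k) := by
    intro k
    rcases eq_or_lt_of_le (hxP k) with h0 | hpos
    · have hgk : g k = (if k ∈ I then (0:ℝ) else 1) := hd ⟨k, h0.symm⟩
      by_cases hkI : k ∈ I
      · rw [if_pos hkI] at hgk
        have : fv a b (x + ε • d) k = 0 := by rw [hval, ← h0, hgk]; ring
        exact ⟨le_of_eq this.symm, fun _ => this, fun h => absurd hkI h⟩
      · rw [if_neg hkI] at hgk
        have : fv a b (x + ε • d) k = ε := by rw [hval, ← h0, hgk]; ring
        exact ⟨by rw [this]; exact le_of_lt hεpos, fun h => absurd h hkI, fun _ => by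
          rw [this]; exact hεpos⟩
    · have hbig : 0 < fv a b (x + ε • d) k := by
        rcases le_or_gt 0 (g k) with hge | hlt
        · rw [hval]; nlinarith
        · have hks : k ∈ s := by rw [hs]; simp [hpos, hlt]
          have := hεle k hks
          rw [hval]
          have h2 : ε * (2 * (-g k)) ≤ fv a b x k := by
            exact (le_div_iff₀ (by linarith)).mp this
          nlinarith
      have hne : k ∉ I := by
        intro hkI
        have := hxI k hkI
        -- fv x k = 0 contradicts hpos
        rw [this] at hpos; exact lt_irrefl _ hpos
      exact ⟨le_of_lt hbig, fun h => absurd h hne, fun _ => hbig⟩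
  exact ⟨x + ε • d, fun k => (hkey k).1, fun i hi => (hkey i).2.1 hi,
    fun j hj => (hkey j).2.2 hj⟩

def qpt (I : Finset (Fin m)) : Fin m → ℝ :=
  if h : ∃ q, q ∈ Set.range (fv a b) ∧ (∀ i, 0 ≤ q i) ∧ (∀ i ∈ I, q i = 0) ∧
      (∀ j ∉ I, 0 < q j) then h.choose else 0

lemma qpt_spec
    (hgen : ∀ x ∈ Pset a b, LinearIndependent ℝ (fun i : {i : Fin m // fv a b x i = 0} => a i.1))
    {I : Finset (Fin m)} (hI : good a b I) :
    qpt a b I ∈ Set.range (fv a b) ∧ (∀ i, 0 ≤ qpt a b I i) ∧ (∀ i ∈ I, qpt a b I i = 0) ∧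
      (∀ j ∉ I, 0 < qpt a b I j) := by
  have hex : ∃ q, q ∈ Set.range (fv a b) ∧ (∀ i, 0 ≤ q i) ∧ (∀ i ∈ I, q i = 0) ∧
      (∀ j ∉ I, 0 < q j) := by
    obtain ⟨x, hx, h1, h2⟩ := exists_relint a b hgen hI
    exact ⟨fv a b x, ⟨x, rfl⟩, hx, h1, h2⟩
  rw [qpt, dif_pos hex]
  exact hex.choose_spec


def lamf (I : Finset (Fin m)) (y : Fin m → ℝ) : ℝ :=
  if h : (Iᶜ : Finset (Fin m)).Nonempty then (Iᶜ).sup' h (fun j => 1 - y j) else 0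

def retr (I : Finset (Fin m)) (j0 : Fin m) (y : Fin m → ℝ) : Fin m → ℝ :=
  fun k => if k ∈ insert j0 I then 0 else 1 - (1 - y k) / lamf I y

def mfil (I : Finset (Fin m)) (y : Fin m → ℝ) : Finset (Fin m) :=
  (Iᶜ).filter (fun j => 1 - y j = lamf I y)

def blend (I : Finset (Fin m)) (t : ℝ) (r : Fin m → ℝ) : Fin m → ℝ :=
  fun k => if k ∈ I then 0 else 1 - t * (1 - r k)

lemma lamf_ge {I : Finset (Fin m)} {y : Fin m → ℝ} {j : Fin m} (hj : j ∉ I) :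
    1 - y j ≤ lamf I y := by
  have hne : (Iᶜ : Finset (Fin m)).Nonempty := ⟨j, Finset.mem_compl.mpr hj⟩
  rw [lamf, dif_pos hne]
  exact Finset.le_sup' (fun j => 1 - y j) (Finset.mem_compl.mpr hj)

lemma lamf_le_one {I : Finset (Fin m)} {y : Fin m → ℝ} (hy : ∀ j, 0 ≤ y j) :
    lamf I y ≤ 1 := by
  rw [lamf]
  split
  · exact Finset.sup'_le _ _ fun j _ => by linarith [hy j]
  · exact zero_le_one

lemma lamf_nonneg {I : Finset (Fin m)} {y : Fin m → ℝ} (hy : ∀ j, y j ≤ 1) :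
    0 ≤ lamf I y := by
  rw [lamf]
  split
  · rename_i h
    obtain ⟨j, hj⟩ := h
    exact le_trans (by linarith [hy j]) (Finset.le_sup' (fun j => 1 - y j) hj)
  · exact le_refl 0

lemma mfil_nonempty {I : Finset (Fin m)} {y : Fin m → ℝ} (h : 0 < lamf I y) :
    (mfil I y).Nonempty := by
  have hne : (Iᶜ : Finset (Fin m)).Nonempty := by
    by_contra hc
    rw [lamf, dif_neg hc] at h
    exact lt_irrefl _ h
  obtain ⟨j, hj, hval⟩ := Finset.exists_mem_eq_sup' hne (fun j => 1 - y j)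
  refine ⟨j, Finset.mem_filter.mpr ⟨hj, ?_⟩⟩
  rw [← hval, lamf, dif_pos hne]

variable (a : Fin m → Fin n → ℝ) (b : Fin m → ℝ)

def hmap : (I : Finset (Fin m)) → (y : Fin m → ℝ) → (Fin m → ℝ) := fun I y =>
  if h : (mfil I y).Nonempty ∧ 0 < lamf I y then
    qpt a b I + lamf I y •
      (hmap (insert ((mfil I y).min' h.1) I) (retr I ((mfil I y).min' h.1) y) - qpt a b I)
  else qpt a b I
termination_by I => (Iᶜ : Finset (Fin m)).card
decreasing_by
  have hj : (mfil I y).min' h.1 ∈ (Iᶜ : Finset (Fin m)) :=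
    Finset.filter_subset _ _ ((mfil I y).min'_mem h.1)
  rw [Finset.compl_insert]
  exact Finset.card_lt_card (Finset.erase_ssubset hj)

lemma hmap_eq_pos {I : Finset (Fin m)} {y : Fin m → ℝ} (h : 0 < lamf I y) :
    hmap a b I y = qpt a b I + lamf I y •
      (hmap a b (insert ((mfil I y).min' (mfil_nonempty h)) I)
        (retr I ((mfil I y).min' (mfil_nonempty h)) y) - qpt a b I) := by
  rw [hmap, dif_pos ⟨mfil_nonempty h, h⟩]

lemma hmap_eq_zero {I : Finset (Fin m)} {y : Fin m → ℝ} (h : ¬ 0 < lamf I y) :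
    hmap a b I y = qpt a b I := by
  rw [hmap, dif_neg (by tauto)]

lemma jmin_spec {I : Finset (Fin m)} {y : Fin m → ℝ} (h : 0 < lamf I y) :
    (mfil I y).min' (mfil_nonempty h) ∉ I ∧
      1 - y ((mfil I y).min' (mfil_nonempty h)) = lamf I y := by
  have := (mfil I y).min'_mem (mfil_nonempty h)
  unfold mfil at this
  rw [Finset.mem_filter, Finset.mem_compl] at this
  exact this

lemma supC_retr {I : Finset (Fin m)} {y : Fin m → ℝ} {j0 : Fin m}
    (hy0 : ∀ i ∈ I, y i = 0) (hj0 : 1 - y j0 = lamf I y) (h : 0 < lamf I y) :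
    supC (retr I j0 y) = supC y := by
  ext k
  simp only [supC, Finset.mem_filter, Finset.mem_univ, true_and]
  simp only [retr]
  by_cases hk : k ∈ insert j0 I
  · have hyk : y k < 1 := by
      rcases Finset.mem_insert.mp hk with h1 | h1
      · subst h1; linarith
      · rw [hy0 k h1]; exact zero_lt_one
    refine iff_of_true ?_ hyk
    rw [if_pos hk]; exact zero_lt_one
  · rw [if_neg hk]
    constructor
    · intro h1
      have h2 : 0 < (1 - y k) / lamf I y := by linarith
      have := (div_pos_iff.mp h2)
      rcases this with ⟨h3, _⟩ | ⟨_, h4⟩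
      · linarith
      · linarith
    · intro h1
      have : 0 < (1 - y k) / lamf I y := div_pos (by linarith) h
      linarith

lemma retr_mem_fC {I : Finset (Fin m)} {y : Fin m → ℝ} {j0 : Fin m}
    (hy : y ∈ fC a b I) (hj0 : 1 - y j0 = lamf I y) (h : 0 < lamf I y) :
    retr I j0 y ∈ fC a b (insert j0 I) := by
  obtain ⟨hb, hz, hg⟩ := hy
  refine ⟨?_, ?_, ?_⟩
  · intro k
    by_cases hk : k ∈ insert j0 I
    · simp only [retr]; rw [if_pos hk]
      exact ⟨le_refl 0, zero_le_one⟩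
    · simp only [retr]; rw [if_neg hk]
      have hkI : k ∉ I := fun hc => hk (Finset.mem_insert_of_mem hc)
      constructor
      · have h1 : (1 - y k) / lamf I y ≤ 1 := by
          rw [div_le_one h]; exact lamf_ge hkI
        linarith
      · have h2 : 0 ≤ (1 - y k) / lamf I y := div_nonneg (by linarith [(hb k).2]) (le_of_lt h)
        linarith
  · intro i hi; simp only [retr]; rw [if_pos hi]
  · rw [supC_retr hz hj0 h]; exact hg

lemma blend_retr {I : Finset (Fin m)} {y : Fin m → ℝ} {j0 : Fin m}
    (hy0 : ∀ i ∈ I, y i = 0) (hj0 : 1 - y j0 = lamf I y) (h : 0 < lamf I y) :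
    blend I (lamf I y) (retr I j0 y) = y := by
  funext k
  simp only [blend, retr]
  by_cases hkI : k ∈ I
  · rw [if_pos hkI, hy0 k hkI]
  · rw [if_neg hkI]
    by_cases hk : k ∈ insert j0 I
    · have : k = j0 := by
        rcases Finset.mem_insert.mp hk with h1 | h1
        · exact h1
        · exact absurd h1 hkI
      subst this
      rw [if_pos hk]
      linarith
    · rw [if_neg hk]
      field_simp
      ring

lemma lamf_blend {I : Finset (Fin m)} {t : ℝ} {r : Fin m → ℝ} (ht : 0 < t)
    (hr0 : ∀ k, 0 ≤ r k) {j : Fin m} (hj : j ∉ I) (hrj : r j = 0) :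
    lamf I (blend I t r) = t := by
  have hne : (Iᶜ : Finset (Fin m)).Nonempty := ⟨j, Finset.mem_compl.mpr hj⟩
  rw [lamf, dif_pos hne]
  have h1 : ∀ k ∈ (Iᶜ : Finset (Fin m)), 1 - blend I t r k = t * (1 - r k) := by
    intro k hk
    rw [Finset.mem_compl] at hk
    simp only [blend, if_neg hk]
    ring
  rw [Finset.sup'_congr hne rfl h1]
  have h2 : (Iᶜ).sup' hne (fun k => t * (1 - r k)) = t * (Iᶜ).sup' hne (fun k => 1 - r k) := by
    rw [Finset.comp_sup'_eq_sup'_comp hne (fun x => t * x) (fun x y => mul_max_of_nonneg x y (le_of_lt ht))]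
    rfl
  rw [h2]
  have h3 : (Iᶜ).sup' hne (fun k => 1 - r k) = 1 := by
    refine le_antisymm (Finset.sup'_le _ _ fun k _ => by linarith [hr0 k]) ?_
    have := Finset.le_sup' (fun k => 1 - r k) (Finset.mem_compl.mpr hj)
    rw [hrj] at this
    linarith
  rw [h3, mul_one]

lemma retr_blend {I : Finset (Fin m)} {t : ℝ} {r : Fin m → ℝ} {j0 : Fin m} (ht : 0 < t)
    (hr0 : ∀ k, 0 ≤ r k) (hj0 : j0 ∉ I) (hz : ∀ k ∈ insert j0 I, r k = 0) :
    retr I j0 (blend I t r) = r := by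
  have hlam : lamf I (blend I t r) = t :=
    lamf_blend ht hr0 hj0 (hz j0 (Finset.mem_insert_self _ _))
  funext k
  simp only [retr, hlam]
  by_cases hk : k ∈ insert j0 I
  · rw [if_pos hk, (hz k hk)]
  · rw [if_neg hk]
    have hkI : k ∉ I := fun hc => hk (Finset.mem_insert_of_mem hc)
    simp only [blend, if_neg hkI]
    have : (1 - (1 - t * (1 - r k))) = t * (1 - r k) := by ring
    rw [this]
    field_simp
    ring



-- ### chunk 3a : more helpers

def apex (I : Finset (Fin m)) : Fin m → ℝ := fun k => if k ∈ I then 0 else 1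

lemma apex_mem_fC {I : Finset (Fin m)} (hI : good a b I) : apex I ∈ fC a b I := by
  refine ⟨fun j => ?_, fun i hi => by simp [apex, if_pos hi], ?_⟩
  · by_cases h : j ∈ I <;> simp [apex, h]
  · have : supC (apex (m := m) I) = I := by
      ext k
      simp only [supC, Finset.mem_filter, Finset.mem_univ, true_and]
      simp only [apex]
      by_cases h : k ∈ I <;> simp [h]
    rw [this]; exact hI

lemma lamf_apex {I : Finset (Fin m)} : lamf I (apex I) = 0 := by
  rw [lamf]
  split
  · rename_i h
    have : ∀ j ∈ (Iᶜ : Finset (Fin m)), 1 - apex I j = 0 := by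
      intro j hj
      rw [Finset.mem_compl] at hj
      simp [apex, if_neg hj]
    rw [Finset.sup'_congr h rfl this]
    exact Finset.sup'_const h 0
  · rfl

lemma eq_apex_of_nonpos {I : Finset (Fin m)} {y : Fin m → ℝ} (hy : y ∈ fC a b I)
    (h : ¬ 0 < lamf I y) : y = apex I := by
  funext k
  by_cases hk : k ∈ I
  · simp [apex, if_pos hk, hy.2.1 k hk]
  · simp only [apex, if_neg hk]
    have h1 := lamf_ge (I := I) (y := y) hk
    have h2 := (hy.1 k).2
    push_neg at h
    linarith

lemma hmap_apex {I : Finset (Fin m)} : hmap a b I (apex I) = qpt a b I :=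
  hmap_eq_zero a b (by rw [lamf_apex]; exact lt_irrefl 0)

lemma fv_continuous : Continuous (fv a b) := by
  apply continuous_pi
  intro i
  apply Continuous.add ?_ continuous_const
  apply continuous_finset_sum
  intro j _
  exact continuous_const.mul (continuous_apply j)

lemma Pset_closed : IsClosed (Pset a b) := by
  have : Pset a b = ⋂ i, {x : Fin n → ℝ | 0 ≤ fv a b x i} := by
    ext x; simp [Pset, Set.mem_iInter]
  rw [this]
  exact isClosed_iInter fun i =>
    isClosed_le continuous_const ((continuous_apply i).comp (fv_continuous a b))

lemma Qset_compact (hbdd : IsBounded (Pset a b)) : IsCompact (Qset a b) :=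
  ((Metric.isCompact_of_isClosed_isBounded (Pset_closed a b) hbdd)).image (fv_continuous a b)

lemma Qset_norm_bound (hbdd : IsBounded (Pset a b)) :
    ∃ C : ℝ, 0 ≤ C ∧ ∀ q ∈ Qset a b, ‖q‖ ≤ C := by
  obtain ⟨C, hC⟩ := isBounded_iff_forall_norm_le.mp (Qset_compact a b hbdd).isBounded
  refine ⟨max C 0, le_max_right _ _, fun q hq => le_trans (hC q hq) (le_max_left _ _)⟩

lemma qpt_mem_fQ
    (hgen : ∀ x ∈ Pset a b, LinearIndependent ℝ (fun i : {i : Fin m // fv a b x i = 0} => a i.1))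
    {I : Finset (Fin m)} (hI : good a b I) : qpt a b I ∈ fQ a b I := by
  obtain ⟨h1, h2, h3, _⟩ := qpt_spec a b hgen hI
  exact ⟨(mem_Qset_iff a b).mpr ⟨h1, h2⟩, h3⟩

lemma fQ_anti {I J : Finset (Fin m)} (h : I ⊆ J) : fQ a b J ⊆ fQ a b I :=
  fun q hq => ⟨hq.1, fun i hi => hq.2 i (h hi)⟩

lemma fQ_combo {I : Finset (Fin m)} {p q : Fin m → ℝ} (hp : p ∈ fQ a b I)
    (hq : q ∈ fQ a b I) {t : ℝ} (ht0 : 0 ≤ t) (ht1 : t ≤ 1) :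
    p + t • (q - p) ∈ fQ a b I := by
  obtain ⟨hpQ, hpz⟩ := hp
  obtain ⟨hqQ, hqz⟩ := hq
  rw [mem_Qset_iff] at hpQ hqQ
  refine ⟨(mem_Qset_iff a b).mpr ⟨range_combo a b hpQ.1 hqQ.1 t, fun k => ?_⟩, fun i hi => ?_⟩
  · have h1 := hpQ.2 k
    have h2 := hqQ.2 k
    simp only [Pi.add_apply, Pi.smul_apply, Pi.sub_apply, smul_eq_mul]
    nlinarith
  · simp [hpz i hi, hqz i hi]

def lamQ (I : Finset (Fin m)) (q : Fin m → ℝ) : ℝ :=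
  if h : (Iᶜ : Finset (Fin m)).Nonempty then
    (Iᶜ).sup' h (fun j => 1 - q j / qpt a b I j) else 0

lemma lamQ_qpt
    (hgen : ∀ x ∈ Pset a b, LinearIndependent ℝ (fun i : {i : Fin m // fv a b x i = 0} => a i.1))
    {I : Finset (Fin m)} (hI : good a b I) : lamQ a b I (qpt a b I) = 0 := by
  obtain ⟨_, _, _, hpos⟩ := qpt_spec a b hgen hI
  rw [lamQ]
  split
  · rename_i h
    have heq : ∀ k ∈ (Iᶜ : Finset (Fin m)), 1 - qpt a b I k / qpt a b I k = 0 := by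
      intro k hk
      rw [Finset.mem_compl] at hk
      rw [div_self (ne_of_gt (hpos k hk))]
      ring
    rw [Finset.sup'_congr h rfl heq]
    exact Finset.sup'_const h 0
  · rfl

lemma ray_exit
    (hgen : ∀ x ∈ Pset a b, LinearIndependent ℝ (fun i : {i : Fin m // fv a b x i = 0} => a i.1))
    (hbdd : IsBounded (Pset a b)) {I : Finset (Fin m)} (hI : good a b I)
    {q : Fin m → ℝ} (hq : q ∈ fQ a b I) (hne : q ≠ qpt a b I) :
    ∃ j ∉ I, q j < qpt a b I j := by
  obtain ⟨hrange, hnn, hzero, hpos⟩ := qpt_spec a b hgen hI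
  by_contra hc
  push_neg at hc
  obtain ⟨C, hC0, hC⟩ := Qset_norm_bound a b hbdd
  obtain ⟨qQ, qz⟩ := hq
  rw [mem_Qset_iff] at qQ
  -- find a coordinate where they differ
  obtain ⟨j, hj⟩ : ∃ j, q j ≠ qpt a b I j := Function.ne_iff.mp hne
  have hjI : j ∉ I := by
    intro hjI
    exact hj (by rw [qz j hjI, hzero j hjI])
  have hgt : qpt a b I j < q j := lt_of_le_of_ne (hc j hjI) (Ne.symm hj)
  -- the ray stays in Qset
  have hray : ∀ t : ℝ, 0 ≤ t → qpt a b I + t • (q - qpt a b I) ∈ Qset a b := by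
    intro t ht
    rw [mem_Qset_iff]
    refine ⟨range_combo a b hrange qQ.1 t, fun k => ?_⟩
    simp only [Pi.add_apply, Pi.smul_apply, Pi.sub_apply, smul_eq_mul]
    by_cases hk : k ∈ I
    · rw [qz k hk, hzero k hk]; simp
    · have h1 := hpos k hk
      have h2 := hc k hk
      nlinarith
  -- contradiction with boundedness
  set t := (C + 1 - qpt a b I j) / (q j - qpt a b I j) with htdef
  have htpos : 0 ≤ t := by
    apply div_nonneg ?_ (by linarith)
    have h5 : ‖qpt a b I j‖ ≤ C := le_trans (norm_le_pi_norm _ j)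
      (hC _ ((mem_Qset_iff a b).mpr ⟨hrange, hnn⟩))
    rw [Real.norm_eq_abs, abs_le] at h5
    linarith [h5.1, h5.2]
  have hval : (qpt a b I + t • (q - qpt a b I)) j = C + 1 := by
    simp only [Pi.add_apply, Pi.smul_apply, Pi.sub_apply, smul_eq_mul, htdef]
    rw [div_mul_eq_mul_div, mul_div_assoc, div_self (ne_of_gt (by linarith)), mul_one]
    ring
  have hle := le_trans (norm_le_pi_norm (qpt a b I + t • (q - qpt a b I)) j)
    (hC _ (hray t htpos))
  rw [hval, Real.norm_eq_abs, abs_of_nonneg (by linarith : (0:ℝ) ≤ C + 1)] at hle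
  linarith


lemma lamQ_of_combo
    (hgen : ∀ x ∈ Pset a b, LinearIndependent ℝ (fun i : {i : Fin m // fv a b x i = 0} => a i.1))
    {I : Finset (Fin m)} (hI : good a b I) {v : Fin m → ℝ} {j0 : Fin m} (hj0 : j0 ∉ I)
    (hv : v ∈ fQ a b (insert j0 I)) {t : ℝ} (ht : 0 ≤ t) :
    lamQ a b I (qpt a b I + t • (v - qpt a b I)) = t := by
  obtain ⟨_, _, _, hpos⟩ := qpt_spec a b hgen hI
  have hne : (Iᶜ : Finset (Fin m)).Nonempty := ⟨j0, Finset.mem_compl.mpr hj0⟩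
  have hvz : v j0 = 0 := hv.2 j0 (Finset.mem_insert_self _ _)
  have hvnn : ∀ k, 0 ≤ v k := ((mem_Qset_iff a b).mp hv.1).2
  rw [lamQ, dif_pos hne]
  have heq : ∀ k ∈ (Iᶜ : Finset (Fin m)),
      1 - (qpt a b I + t • (v - qpt a b I)) k / qpt a b I k = t * (1 - v k / qpt a b I k) := by
    intro k hk
    rw [Finset.mem_compl] at hk
    have h0 := hpos k hk
    simp only [Pi.add_apply, Pi.smul_apply, Pi.sub_apply, smul_eq_mul]
    field_simp
    ring
  rw [Finset.sup'_congr hne rfl heq]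
  have h2 : (Iᶜ).sup' hne (fun k => t * (1 - v k / qpt a b I k)) =
      t * (Iᶜ).sup' hne (fun k => 1 - v k / qpt a b I k) := by
    rw [Finset.comp_sup'_eq_sup'_comp hne (fun x => t * x)
      (fun x y => mul_max_of_nonneg x y ht)]
    rfl
  rw [h2]
  have h3 : (Iᶜ).sup' hne (fun k => 1 - v k / qpt a b I k) = 1 := by
    refine le_antisymm (Finset.sup'_le _ _ fun k hk => ?_) ?_
    · rw [Finset.mem_compl] at hk
      have := div_nonneg (hvnn k) (le_of_lt (hpos k hk))
      linarith
    · have hle := Finset.le_sup' (fun k => 1 - v k / qpt a b I k)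
        (Finset.mem_compl.mpr hj0)
      rw [hvz] at hle
      simp only [zero_div, sub_zero] at hle; exact hle
  rw [h3, mul_one]

lemma lamQ_pos
    (hgen : ∀ x ∈ Pset a b, LinearIndependent ℝ (fun i : {i : Fin m // fv a b x i = 0} => a i.1))
    (hbdd : IsBounded (Pset a b)) {I : Finset (Fin m)} (hI : good a b I)
    {q : Fin m → ℝ} (hq : q ∈ fQ a b I) (hne : q ≠ qpt a b I) : 0 < lamQ a b I q := by
  obtain ⟨j, hjI, hjlt⟩ := ray_exit a b hgen hbdd hI hq hne
  obtain ⟨_, _, _, hpos⟩ := qpt_spec a b hgen hI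
  have hne' : (Iᶜ : Finset (Fin m)).Nonempty := ⟨j, Finset.mem_compl.mpr hjI⟩
  rw [lamQ, dif_pos hne']
  have h1 : 0 < 1 - q j / qpt a b I j := by
    have h0 := hpos j hjI
    have : q j / qpt a b I j < 1 := (div_lt_one h0).mpr hjlt
    linarith
  exact lt_of_lt_of_le h1 (Finset.le_sup' (fun j => 1 - q j / qpt a b I j)
    (Finset.mem_compl.mpr hjI))

lemma lamQ_le_one
    (hgen : ∀ x ∈ Pset a b, LinearIndependent ℝ (fun i : {i : Fin m // fv a b x i = 0} => a i.1))
    {I : Finset (Fin m)} (hI : good a b I) {q : Fin m → ℝ} (hq : q ∈ fQ a b I) :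
    lamQ a b I q ≤ 1 := by
  obtain ⟨_, _, _, hpos⟩ := qpt_spec a b hgen hI
  have hnn : ∀ k, 0 ≤ q k := ((mem_Qset_iff a b).mp hq.1).2
  rw [lamQ]
  split
  · refine Finset.sup'_le _ _ fun k hk => ?_
    rw [Finset.mem_compl] at hk
    have := div_nonneg (hnn k) (le_of_lt (hpos k hk))
    linarith
  · exact zero_le_one

lemma lamQ_attain {I : Finset (Fin m)} (hne : (Iᶜ : Finset (Fin m)).Nonempty)
    (q : Fin m → ℝ) : ∃ j ∉ I, 1 - q j / qpt a b I j = lamQ a b I q := by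
  obtain ⟨j, hj, hval⟩ := Finset.exists_mem_eq_sup' hne (fun j => 1 - q j / qpt a b I j)
  exact ⟨j, Finset.mem_compl.mp hj, by rw [lamQ, dif_pos hne, ← hval]⟩

lemma good_ne_univ
    (hgen : ∀ x ∈ Pset a b, LinearIndependent ℝ (fun i : {i : Fin m // fv a b x i = 0} => a i.1))
    (hbdd : IsBounded (Pset a b)) (hPne : (Pset a b).Nonempty) (hm : 1 ≤ m)
    {I : Finset (Fin m)} (hI : good a b I) : (Iᶜ : Finset (Fin m)).Nonempty := by
  rw [Finset.nonempty_iff_ne_empty]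
  intro hcompl
  have huniv : I = Finset.univ := (Finset.compl_eq_empty_iff I).mp hcompl
  subst huniv
  obtain ⟨x, hxP, hx0⟩ := hI
  have hgood0 : good a b (∅ : Finset (Fin m)) := by
    obtain ⟨x0, hx0P⟩ := hPne
    exact ⟨x0, hx0P, fun i hi => absurd hi (Finset.notMem_empty i)⟩
  obtain ⟨x0, hx0P, _, hx0pos⟩ := exists_relint a b hgen hgood0
  have hx0pos' : ∀ i, 0 < fv a b x0 i := fun i => hx0pos i (Finset.notMem_empty i)
  have hray : ∀ t : ℝ, 0 ≤ t → x + t • (x0 - x) ∈ Pset a b := by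
    intro t ht i
    have := congrFun (fv_combo a b x x0 t) i
    rw [this]
    simp only [Pi.add_apply, Pi.smul_apply, Pi.sub_apply, smul_eq_mul]
    rw [hx0 i (Finset.mem_univ i)]
    have := hx0pos' i
    nlinarith
  obtain ⟨C, hC⟩ := isBounded_iff_forall_norm_le.mp hbdd
  have hxne : x0 ≠ x := by
    intro h
    have h0 := hx0 ⟨0, hm⟩ (Finset.mem_univ _)
    rw [← h] at h0
    exact absurd h0 (ne_of_gt (hx0pos' ⟨0, hm⟩))
  obtain ⟨j, hj⟩ : ∃ j, x0 j ≠ x j := Function.ne_iff.mp hxne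
  set t := (C + 1 + |x j|) / |x0 j - x j| with htdef
  have habs : 0 < |x0 j - x j| := abs_pos.mpr (sub_ne_zero.mpr hj)
  have hCnn : 0 ≤ C := le_trans (norm_nonneg x) (hC x hxP)
  have ht0 : 0 ≤ t := div_nonneg (by positivity) (le_of_lt habs)
  have hp := hC _ (hray t ht0)
  have hpj : |x j + t * (x0 j - x j)| ≤ C := by
    refine le_trans ?_ hp
    have := norm_le_pi_norm (x + t • (x0 - x)) j
    simpa [Real.norm_eq_abs] using this
  have htv : t * |x0 j - x j| = C + 1 + |x j| := by
    rw [htdef, div_mul_cancel₀]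
    exact ne_of_gt habs
  have h7 : |t * (x0 j - x j)| = C + 1 + |x j| := by
    rw [abs_mul, abs_of_nonneg ht0, htv]
  have h8 : C + 1 ≤ |x j + t * (x0 j - x j)| := by
    have h9 := abs_add_le (x j + t * (x0 j - x j)) (- x j)
    rw [abs_neg] at h9
    have h11 : x j + t * (x0 j - x j) + - x j = t * (x0 j - x j) := by ring
    rw [h11, h7] at h9
    linarith
  linarith


lemma mem_supC_iff {y : Fin m → ℝ} {k : Fin m} : k ∈ supC y ↔ y k < 1 := by
  simp [supC]

lemma good_insert_of {I : Finset (Fin m)} {y : Fin m → ℝ} (hy : y ∈ fC a b I)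
    {j0 : Fin m} (hj0v : y j0 < 1) : good a b (insert j0 I) := by
  refine good_mono a b ?_ hy.2.2
  intro k hk
  rcases Finset.mem_insert.mp hk with h1 | h1
  · subst h1; exact mem_supC_iff.mpr hj0v
  · exact mem_supC_iff.mpr (by rw [hy.2.1 k h1]; exact zero_lt_one)

lemma retr_swap {I : Finset (Fin m)} {y : Fin m → ℝ} {j j' : Fin m}
    (hy0 : ∀ i ∈ I, y i = 0) (hj : j ∉ I) (hj' : j' ∉ I)
    (hjv : 1 - y j = lamf I y) (hj'v : 1 - y j' = lamf I y) (h : 0 < lamf I y) :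
    retr I j y = retr I j' y := by
  funext k
  simp only [retr]
  by_cases hk : k ∈ I
  · rw [if_pos (Finset.mem_insert_of_mem hk), if_pos (Finset.mem_insert_of_mem hk)]
  · by_cases hkj : k = j
    · subst hkj
      rw [if_pos (Finset.mem_insert_self _ _)]
      by_cases hkj' : k = j'
      · subst hkj'; rw [if_pos (Finset.mem_insert_self _ _)]
      · rw [if_neg (by simp [hkj', hk]), hjv, div_self (ne_of_gt h)]
        ring
    · by_cases hkj' : k = j'
      · subst hkj'
        rw [if_pos (Finset.mem_insert_self _ _), if_neg (by simp [hkj, hk]), hj'v,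
          div_self (ne_of_gt h)]
        ring
      · rw [if_neg (by simp [hkj, hk]), if_neg (by simp [hkj', hk])]

lemma supC_blend {I : Finset (Fin m)} {t : ℝ} {r : Fin m → ℝ} (ht : 0 < t) (ht1 : t ≤ 1)
    (hr : ∀ k ∈ I, r k = 0) : supC (blend I t r) = supC r := by
  ext k
  simp only [mem_supC_iff, blend]
  by_cases hk : k ∈ I
  · rw [if_pos hk, hr k hk]
  · rw [if_neg hk]
    constructor
    · intro h1
      by_contra h2
      push_neg at h2
      nlinarith
    · intro h1
      nlinarith

lemma blend_mem_fC {I : Finset (Fin m)} {t : ℝ} {r : Fin m → ℝ} (ht : 0 < t) (ht1 : t ≤ 1)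
    {J : Finset (Fin m)} (hIJ : I ⊆ J) (hr : r ∈ fC a b J) :
    blend I t r ∈ fC a b I := by
  refine ⟨fun k => ?_, fun i hi => by simp [blend, if_pos hi], ?_⟩
  · simp only [blend]
    by_cases hk : k ∈ I
    · rw [if_pos hk]; exact ⟨le_refl 0, zero_le_one⟩
    · rw [if_neg hk]
      have h1 := (hr.1 k).1
      have h2 := (hr.1 k).2
      constructor <;> nlinarith
  · rw [supC_blend ht ht1 (fun k hk => hr.2.1 k (hIJ hk))]
    exact hr.2.2

-- compactness of fC
lemma fC_compact {I : Finset (Fin m)} : IsCompact (fC a b I) := by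
  have hcover : fC a b I = ⋃ J ∈ {J : Finset (Fin m) | good a b J ∧ I ⊆ J},
      Set.pi Set.univ (fun k => if k ∈ I then ({0} : Set ℝ) else
        if k ∈ J then Set.Icc 0 1 else {1}) := by
    ext y
    simp only [Set.mem_iUnion, Set.mem_pi, Set.mem_univ, forall_true_left, Set.mem_setOf_eq]
    constructor
    · rintro ⟨hb, hz, hg⟩
      refine ⟨supC y ∪ I, ⟨?_, Finset.subset_union_right⟩, ?_⟩
      · apply good_mono a b ?_ hg
        intro k hk
        rcases Finset.mem_union.mp hk with h1 | h1
        · exact h1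
        · exact mem_supC_iff.mpr (by rw [hz k h1]; exact zero_lt_one)
      · intro k
        by_cases hk : k ∈ I
        · rw [if_pos hk]; exact hz k hk
        · rw [if_neg hk]
          by_cases hk2 : k ∈ supC y ∪ I
          · rw [if_pos hk2]; exact ⟨(hb k).1, (hb k).2⟩
          · rw [if_neg hk2]
            have : k ∉ supC y := fun hc => hk2 (Finset.mem_union_left _ hc)
            rw [mem_supC_iff] at this
            push_neg at this
            exact le_antisymm (hb k).2 this
    · rintro ⟨J, ⟨hJg, hIJ⟩, hy⟩
      have hb : ∀ k, 0 ≤ y k ∧ y k ≤ 1 := by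
        intro k
        have := hy k
        by_cases hk : k ∈ I
        · rw [if_pos hk] at this
          rw [Set.mem_singleton_iff] at this
          rw [this]; exact ⟨le_refl 0, zero_le_one⟩
        · rw [if_neg hk] at this
          by_cases hk2 : k ∈ J
          · rw [if_pos hk2] at this; exact this
          · rw [if_neg hk2] at this
            rw [Set.mem_singleton_iff] at this
            rw [this]; exact ⟨zero_le_one, le_refl 1⟩
      refine ⟨hb, fun i hi => ?_, ?_⟩
      · have := hy i
        rw [if_pos hi] at this
        exact this
      · apply good_mono a b ?_ hJg
        intro k hk
        rw [mem_supC_iff] at hk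
        by_contra hkJ
        have := hy k
        rw [if_neg (fun hc => hkJ (hIJ hc)), if_neg hkJ, Set.mem_singleton_iff] at this
        rw [this] at hk
        exact lt_irrefl _ hk
  rw [hcover]
  apply Set.Finite.isCompact_biUnion (Set.toFinite _)
  intro J _
  apply isCompact_univ_pi
  intro k
  by_cases hk : k ∈ I
  · rw [if_pos hk]; exact isCompact_singleton
  · rw [if_neg hk]
    by_cases hk2 : k ∈ J
    · rw [if_pos hk2]; exact isCompact_Icc
    · rw [if_neg hk2]; exact isCompact_singleton

lemma cont_sup' {X : Type*} [TopologicalSpace X] {β : Type*} (s : Finset β)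
    (hs : s.Nonempty) (F : β → X → ℝ) (hF : ∀ b, Continuous (F b)) :
    Continuous fun x => s.sup' hs (fun b => F b x) := by
  induction hs using Finset.Nonempty.cons_induction with
  | singleton a => simpa using hF a
  | cons a s ha hs ih =>
      have heq : (fun x => (Finset.cons a s ha).sup' (by simp) (fun b => F b x)) =
          fun x => max (F a x) (s.sup' hs (fun b => F b x)) := by
        funext x
        rw [Finset.sup'_cons hs]
      rw [heq]
      exact (hF a).max ih

lemma cont_lamf {I : Finset (Fin m)} : Continuous (lamf I : (Fin m → ℝ) → ℝ) := by
  unfold lamf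
  split
  · rename_i h
    exact cont_sup' _ h (fun j (y : Fin m → ℝ) => 1 - y j)
      (fun j => (continuous_const.sub (continuous_apply j) :
        Continuous fun y : Fin m → ℝ => 1 - y j))
  · exact continuous_const

lemma cwa_finite_union {X Y : Type*} [TopologicalSpace X] [TopologicalSpace Y]
    {f : X → Y} {β : Type*} (s : Finset β) (F : β → Set X) {x : X}
    (h : ∀ b ∈ s, ContinuousWithinAt f (F b) x) :
    ContinuousWithinAt f (⋃ b ∈ s, F b) x := by
  induction s using Finset.induction_on with
  | empty => simpa using continuousWithinAt_of_notMem_closure (by simp)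
  | insert _ _ ha ih =>
      rename_i c t
      rw [Finset.set_biUnion_insert]
      exact (h c (Finset.mem_insert_self _ _)).union
        (ih fun b hb => h b (Finset.mem_insert_of_mem hb))


lemma lamQ_ge {I : Finset (Fin m)} {q : Fin m → ℝ} {j : Fin m} (hj : j ∉ I) :
    1 - q j / qpt a b I j ≤ lamQ a b I q := by
  have hne : (Iᶜ : Finset (Fin m)).Nonempty := ⟨j, Finset.mem_compl.mpr hj⟩
  rw [lamQ, dif_pos hne]
  exact Finset.le_sup' (fun k => 1 - q k / qpt a b I k) (Finset.mem_compl.mpr hj)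

lemma fC_insert {I : Finset (Fin m)} {y : Fin m → ℝ} (hy : y ∈ fC a b I) {j : Fin m}
    (hyj : y j = 0) : y ∈ fC a b (insert j I) := by
  refine ⟨hy.1, fun i hi => ?_, hy.2.2⟩
  rcases Finset.mem_insert.mp hi with h | h
  · subst h; exact hyj
  · exact hy.2.1 i h

structure Pkg (a : Fin m → Fin n → ℝ) (b : Fin m → ℝ) (I : Finset (Fin m)) : Prop where
  maps : ∀ y ∈ fC a b I, hmap a b I y ∈ fQ a b I
  supp : ∀ y ∈ fC a b I, ∀ j, (hmap a b I y j = 0 ↔ y j = 0)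
  coh : ∀ y ∈ fC a b I, ∀ j ∉ I, y j = 0 → hmap a b I y = hmap a b (insert j I) y
  cont : ContinuousOn (hmap a b I) (fC a b I)
  inj : Set.InjOn (hmap a b I) (fC a b I)
  surj : Set.SurjOn (hmap a b I) (fC a b I) (fQ a b I)

lemma master
    (hgen : ∀ x ∈ Pset a b, LinearIndependent ℝ (fun i : {i : Fin m // fv a b x i = 0} => a i.1))
    (hbdd : IsBounded (Pset a b)) (hPne : (Pset a b).Nonempty) (hm : 1 ≤ m) :
    ∀ N (I : Finset (Fin m)), (Iᶜ : Finset (Fin m)).card ≤ N → good a b I → Pkg a b I := by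
  intro N
  induction N with
  | zero =>
    intro I hcard hI
    have h := good_ne_univ a b hgen hbdd hPne hm hI
    have := Finset.Nonempty.card_pos h
    omega
  | succ N ih =>
    intro I hcard hI
    have hIc : (Iᶜ : Finset (Fin m)).Nonempty := good_ne_univ a b hgen hbdd hPne hm hI
    obtain ⟨hqrange, hqnn, hqzero, hqpos⟩ := qpt_spec a b hgen hI
    have hqQ : qpt a b I ∈ fQ a b I := qpt_mem_fQ a b hgen hI
    have deep : ∀ j ∉ I, good a b (insert j I) → Pkg a b (insert j I) := by
      intro j hj hg
      apply ih _ ?_ hg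
      rw [Finset.compl_insert, Finset.card_erase_of_mem (Finset.mem_compl.mpr hj)]
      omega
    have deep2 : ∀ j ∉ I, ∀ j', j' ∉ I → j ≠ j' → good a b (insert j' (insert j I)) →
        Pkg a b (insert j' (insert j I)) := by
      intro j hj j' hj' hne hg
      apply ih _ ?_ hg
      have hj'mem : j' ∉ insert j I := by simp [Finset.mem_insert, hj', Ne.symm hne]
      rw [Finset.compl_insert, Finset.card_erase_of_mem (Finset.mem_compl.mpr hj'mem),
        Finset.compl_insert, Finset.card_erase_of_mem (Finset.mem_compl.mpr hj)]
      omega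
    -- key unfolding with an arbitrary attaining index
    have hkey : ∀ y ∈ fC a b I, ∀ (hpos : 0 < lamf I y), ∀ j, j ∉ I → 1 - y j = lamf I y →
        hmap a b I y = qpt a b I + lamf I y • (hmap a b (insert j I) (retr I j y) - qpt a b I) := by
      intro y hy hpos j hjI hjv
      obtain ⟨hj0I, hj0v⟩ := jmin_spec (I := I) (y := y) hpos
      rw [hmap_eq_pos a b hpos]
      set j0 := (mfil I y).min' (mfil_nonempty hpos) with hj0def
      by_cases hjj : j0 = j
      · rw [hjj]
      · have hretr_eq : retr I j y = retr I j0 y :=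
          retr_swap hy.2.1 hjI hj0I hjv hj0v hpos
        have hr0 : retr I j0 y ∈ fC a b (insert j0 I) := retr_mem_fC a b hy hj0v hpos
        have hrj : retr I j0 y j = 0 := by
          simp only [retr]
          rw [if_neg (by simp [Ne.symm hjj, hjI]), hjv, div_self (ne_of_gt hpos)]
          ring
        have hrj0 : retr I j0 y j0 = 0 := by
          simp only [retr]
          rw [if_pos (Finset.mem_insert_self _ _)]
        have hgood0 : good a b (insert j0 I) :=
          good_insert_of a b hy (by nlinarith [hj0v, hpos] : y j0 < 1)
        have hgoodj : good a b (insert j I) :=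
          good_insert_of a b hy (by nlinarith [hjv, hpos] : y j < 1)
        have hd0 := deep j0 hj0I hgood0
        have hdj := deep j hjI hgoodj
        have h1 : hmap a b (insert j0 I) (retr I j0 y) =
            hmap a b (insert j (insert j0 I)) (retr I j0 y) :=
          hd0.coh _ hr0 j (by simp [Ne.symm hjj, hjI]) hrj
        have hr0' : retr I j0 y ∈ fC a b (insert j I) := by
          rw [← hretr_eq]; exact retr_mem_fC a b hy hjv hpos
        have h2 : hmap a b (insert j I) (retr I j0 y) =
            hmap a b (insert j0 (insert j I)) (retr I j0 y) :=
          hdj.coh _ hr0' j0 (by simp [hjj, hj0I]) hrj0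
        rw [hretr_eq, h1, h2, Finset.insert_comm]
    -- existential form
    have hex : ∀ y ∈ fC a b I, ∀ (_ : 0 < lamf I y), ∃ j0, j0 ∉ I ∧ 1 - y j0 = lamf I y ∧
        hmap a b I y = qpt a b I + lamf I y •
          (hmap a b (insert j0 I) (retr I j0 y) - qpt a b I) := by
      intro y hy hpos
      obtain ⟨h1, h2⟩ := jmin_spec (I := I) (y := y) hpos
      exact ⟨_, h1, h2, hkey y hy hpos _ h1 h2⟩
    -- coherence
    have hcoh : ∀ y ∈ fC a b I, ∀ j ∉ I, y j = 0 →
        hmap a b I y = hmap a b (insert j I) y := by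
      intro y hy j hjI hyj
      have hge := lamf_ge (I := I) (y := y) hjI
      rw [hyj] at hge
      have hlam1 : lamf I y = 1 :=
        le_antisymm (lamf_le_one (fun k => (hy.1 k).1)) (by linarith)
      have hpos : 0 < lamf I y := by rw [hlam1]; exact one_pos
      have hjv : 1 - y j = lamf I y := by rw [hlam1, hyj]; ring
      have hretr : retr I j y = y := by
        funext k
        simp only [retr]
        by_cases hk : k ∈ insert j I
        · rw [if_pos hk]
          rcases Finset.mem_insert.mp hk with h | h
          · subst h; exact hyj.symm
          · exact (hy.2.1 k h).symm
        · rw [if_neg hk, hlam1, div_one]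
          ring
      rw [hkey y hy hpos j hjI hjv, hretr, hlam1, one_smul]
      abel
    -- maps
    have hmaps : ∀ y ∈ fC a b I, hmap a b I y ∈ fQ a b I := by
      intro y hy
      by_cases hpos : 0 < lamf I y
      · obtain ⟨j0, hj0I, hj0v, hyeq⟩ := hex y hy hpos
        rw [hyeq]
        have hr0 : retr I j0 y ∈ fC a b (insert j0 I) := retr_mem_fC a b hy hj0v hpos
        have hgood0 : good a b (insert j0 I) :=
          good_insert_of a b hy (by nlinarith [hj0v, hpos] : y j0 < 1)
        have hv := (deep j0 hj0I hgood0).maps _ hr0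
        exact fQ_combo a b hqQ (fQ_anti a b (Finset.subset_insert j0 I) hv)
          (lamf_nonneg (fun k => (hy.1 k).2)) (lamf_le_one (fun k => (hy.1 k).1))
      · rw [hmap_eq_zero a b hpos]; exact hqQ
    -- support preservation
    have hsupp : ∀ y ∈ fC a b I, ∀ j, (hmap a b I y j = 0 ↔ y j = 0) := by
      intro y hy j
      by_cases hjI : j ∈ I
      · exact iff_of_true ((hmaps y hy).2 j hjI) (hy.2.1 j hjI)
      · by_cases hpos : 0 < lamf I y
        · obtain ⟨j0, hj0I, hj0v, hyeq⟩ := hex y hy hpos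
          by_cases hlam1 : lamf I y = 1
          · have hyj0 : y j0 = 0 := by rw [hlam1] at hj0v; linarith
            have heq := hcoh y hy j0 hj0I hyj0
            have hymem : y ∈ fC a b (insert j0 I) := fC_insert a b hy hyj0
            have hgood0 : good a b (insert j0 I) :=
              good_insert_of a b hy (by rw [hyj0]; exact zero_lt_one)
            rw [heq]
            exact (deep j0 hj0I hgood0).supp y hymem j
          · have hlt : lamf I y < 1 :=
              lt_of_le_of_ne (lamf_le_one (fun k => (hy.1 k).1)) hlam1
            rw [hyeq]
            have hr0 : retr I j0 y ∈ fC a b (insert j0 I) := retr_mem_fC a b hy hj0v hpos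
            have hgood0 : good a b (insert j0 I) :=
              good_insert_of a b hy (by nlinarith [hj0v, hpos] : y j0 < 1)
            have hv := (deep j0 hj0I hgood0).maps _ hr0
            have hvnn : 0 ≤ hmap a b (insert j0 I) (retr I j0 y) j :=
              ((mem_Qset_iff a b).mp hv.1).2 j
            have hq0 := hqpos j hjI
            have hval : 0 < (qpt a b I + lamf I y •
                (hmap a b (insert j0 I) (retr I j0 y) - qpt a b I)) j := by
              simp only [Pi.add_apply, Pi.smul_apply, Pi.sub_apply, smul_eq_mul]
              nlinarith
            have hyj : 0 < y j := by
              have := lamf_ge (I := I) (y := y) hjI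
              linarith
            exact iff_of_false (ne_of_gt hval) (ne_of_gt hyj)
        · have hapex := eq_apex_of_nonpos a b hy hpos
          rw [hapex, hmap_apex]
          have h1 : apex (m := m) I j = 1 := by simp [apex, if_neg hjI]
          rw [h1]
          exact iff_of_false (ne_of_gt (hqpos j hjI)) one_ne_zero
    -- continuity
    have hcont : ContinuousOn (hmap a b I) (fC a b I) := by
      intro y₀ hy₀
      by_cases hpos : 0 < lamf I y₀
      · have hcover : fC a b I ⊆ ⋃ j ∈ (Iᶜ : Finset (Fin m)),
            {y | y ∈ fC a b I ∧ 1 - y j = lamf I y} := by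
          intro y hy
          obtain ⟨j, hj, hval⟩ := Finset.exists_mem_eq_sup' hIc (fun j => 1 - y j)
          have : 1 - y j = lamf I y := by rw [lamf, dif_pos hIc, ← hval]
          exact Set.mem_biUnion hj ⟨hy, this⟩
        apply ContinuousWithinAt.mono ?_ hcover
        apply cwa_finite_union
        intro j hjc
        have hjI : j ∉ I := Finset.mem_compl.mp hjc
        set D := {y | y ∈ fC a b I ∧ 1 - y j = lamf I y} with hDdef
        by_cases hy₀D : y₀ ∈ D
        · set U := {y : Fin m → ℝ | 0 < lamf I y} with hUdef
          have hUopen : IsOpen U := isOpen_lt continuous_const cont_lamf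
          rw [← continuousWithinAt_inter (hUopen.mem_nhds hpos)]
          have hDmem : ∀ y ∈ D ∩ U, hmap a b I y = qpt a b I + lamf I y •
              (hmap a b (insert j I) (retr I j y) - qpt a b I) := by
            rintro y ⟨⟨hyfC, hyat⟩, hyU⟩
            exact hkey y hyfC hyU j hjI hyat
          apply ContinuousWithinAt.congr ?_ hDmem (hDmem y₀ ⟨hy₀D, hpos⟩)
          have hretcwa : ContinuousWithinAt (fun y => retr I j y) (D ∩ U) y₀ := by
            apply ContinuousAt.continuousWithinAt
            apply continuousAt_pi.mpr
            intro k
            by_cases hk : k ∈ insert j I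
            · simp only [retr, if_pos hk]; exact continuousAt_const
            · simp only [retr, if_neg hk]
              apply ContinuousAt.sub continuousAt_const
              exact ContinuousAt.div
                (continuousAt_const.sub (continuous_apply k).continuousAt)
                cont_lamf.continuousAt (ne_of_gt hpos)
          have hmapsTo : Set.MapsTo (fun y => retr I j y) (D ∩ U) (fC a b (insert j I)) := by
            rintro y ⟨⟨hyfC, hyat⟩, hyU⟩
            exact retr_mem_fC a b hyfC hyat hyU
          have hgoodj : good a b (insert j I) := by
            apply good_insert_of a b hy₀D.1
            have := hy₀D.2
            nlinarith [hpos]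
          have hdeep := (deep j hjI hgoodj).cont
          have hcomp : ContinuousWithinAt (fun y => hmap a b (insert j I) (retr I j y))
              (D ∩ U) y₀ :=
            (hdeep _ (hmapsTo ⟨hy₀D, hpos⟩)).comp hretcwa hmapsTo
          exact continuousWithinAt_const.add
            ((cont_lamf.continuousAt.continuousWithinAt).smul
              (hcomp.sub continuousWithinAt_const))
        · have hDclosed : IsClosed D := by
            have hDeq : D = fC a b I ∩ {y | 1 - y j = lamf I y} := by
              ext y; simp [hDdef, Set.mem_inter_iff]
            rw [hDeq]
            exact IsClosed.inter (fC_compact a b).isClosed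
              (isClosed_eq (continuous_const.sub (continuous_apply j)) cont_lamf)
          exact continuousWithinAt_of_notMem_closure (by
            rw [hDclosed.closure_eq]; exact hy₀D)
      · obtain ⟨C, hC0, hC⟩ := Qset_norm_bound a b hbdd
        have hbound : ∀ y ∈ fC a b I, ‖hmap a b I y - qpt a b I‖ ≤ lamf I y * (2 * C) := by
          intro y hy
          by_cases hp : 0 < lamf I y
          · obtain ⟨j0, hj0I, hj0v, hyeq⟩ := hex y hy hp
            have hr0 : retr I j0 y ∈ fC a b (insert j0 I) := retr_mem_fC a b hy hj0v hp
            have hgood0 : good a b (insert j0 I) :=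
              good_insert_of a b hy (by nlinarith [hj0v, hp] : y j0 < 1)
            have hv := (deep j0 hj0I hgood0).maps _ hr0
            rw [hyeq, add_sub_cancel_left, norm_smul, Real.norm_eq_abs,
              abs_of_nonneg (lamf_nonneg (fun k => (hy.1 k).2))]
            apply mul_le_mul_of_nonneg_left ?_ (lamf_nonneg (fun k => (hy.1 k).2))
            calc ‖hmap a b (insert j0 I) (retr I j0 y) - qpt a b I‖
                ≤ ‖hmap a b (insert j0 I) (retr I j0 y)‖ + ‖qpt a b I‖ := norm_sub_le _ _
              _ ≤ C + C := add_le_add (hC _ hv.1) (hC _ hqQ.1)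
              _ = 2 * C := by ring
          · rw [hmap_eq_zero a b hp]
            simp only [sub_self, norm_zero]
            have := lamf_nonneg (I := I) (fun k => (hy.1 k).2)
            positivity
        have hlam0 : lamf I y₀ = 0 :=
          le_antisymm (not_lt.mp hpos) (lamf_nonneg (fun k => (hy₀.1 k).2))
        have hval : hmap a b I y₀ = qpt a b I := hmap_eq_zero a b hpos
        have h1 : Filter.Tendsto (fun y => hmap a b I y - qpt a b I)
            (nhdsWithin y₀ (fC a b I)) (nhds 0) := by
          refine squeeze_zero_norm' (eventually_nhdsWithin_of_forall hbound) ?_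
          have h2 : Filter.Tendsto (fun y => lamf I y * (2 * C))
              (nhdsWithin y₀ (fC a b I)) (nhds (lamf I y₀ * (2 * C))) :=
            (((cont_lamf).tendsto y₀).mono_left nhdsWithin_le_nhds).mul_const _
          rw [hlam0, zero_mul] at h2
          exact h2
        have h3 := h1.add (tendsto_const_nhds (x := qpt a b I))
        rw [zero_add] at h3
        have h4 : (fun y => hmap a b I y - qpt a b I + qpt a b I) = hmap a b I := by
          funext y; abel
        rw [h4] at h3
        rw [ContinuousWithinAt, hval]
        exact h3
    -- injectivity
    have hinj : Set.InjOn (hmap a b I) (fC a b I) := by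
      intro y hy y' hy' heq
      by_cases hp : 0 < lamf I y <;> by_cases hp' : 0 < lamf I y'
      · obtain ⟨j0, hj0I, hj0v, hyeq⟩ := hex y hy hp
        obtain ⟨j1, hj1I, hj1v, hyeq'⟩ := hex y' hy' hp'
        have hr0 : retr I j0 y ∈ fC a b (insert j0 I) := retr_mem_fC a b hy hj0v hp
        have hr1 : retr I j1 y' ∈ fC a b (insert j1 I) := retr_mem_fC a b hy' hj1v hp'
        have hgood0 : good a b (insert j0 I) :=
          good_insert_of a b hy (by nlinarith [hj0v, hp] : y j0 < 1)
        have hgood1 : good a b (insert j1 I) :=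
          good_insert_of a b hy' (by nlinarith [hj1v, hp'] : y' j1 < 1)
        have hv0 := (deep j0 hj0I hgood0).maps _ hr0
        have hv1 := (deep j1 hj1I hgood1).maps _ hr1
        have hlq0 : lamQ a b I (hmap a b I y) = lamf I y := by
          rw [hyeq]; exact lamQ_of_combo a b hgen hI hj0I hv0 (le_of_lt hp)
        have hlq1 : lamQ a b I (hmap a b I y') = lamf I y' := by
          rw [hyeq']; exact lamQ_of_combo a b hgen hI hj1I hv1 (le_of_lt hp')
        have hteq : lamf I y = lamf I y' := by rw [← hlq0, heq, hlq1]
        have hveq : hmap a b (insert j0 I) (retr I j0 y) =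
            hmap a b (insert j1 I) (retr I j1 y') := by
          have h5 := heq
          rw [hyeq, hyeq', ← hteq] at h5
          have h6 := add_left_cancel h5
          have h7 := smul_right_injective (Fin m → ℝ) (ne_of_gt hp) h6
          exact sub_left_inj.mp h7
        by_cases hjj : j0 = j1
        · subst hjj
          have hre := (deep j0 hj0I hgood0).inj hr0 hr1 hveq
          have hb0 := blend_retr hy.2.1 hj0v hp
          have hb1 := blend_retr hy'.2.1 hj1v hp'
          rw [← hb0, ← hb1, hre, hteq]
        · have hr1j0 : retr I j1 y' j0 = 0 := by
            have hz0 : hmap a b (insert j0 I) (retr I j0 y) j0 = 0 :=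
              hv0.2 j0 (Finset.mem_insert_self _ _)
            have hz1 : hmap a b (insert j1 I) (retr I j1 y') j0 = 0 := by
              rw [← hveq]; exact hz0
            exact ((deep j1 hj1I hgood1).supp _ hr1 j0).mp hz1
          have hr0j1 : retr I j0 y j1 = 0 := by
            have hz1 : hmap a b (insert j1 I) (retr I j1 y') j1 = 0 :=
              hv1.2 j1 (Finset.mem_insert_self _ _)
            have hz0 : hmap a b (insert j0 I) (retr I j0 y) j1 = 0 := by
              rw [hveq]; exact hz1
            exact ((deep j0 hj0I hgood0).supp _ hr0 j1).mp hz0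
          have hc0 : hmap a b (insert j0 I) (retr I j0 y) =
              hmap a b (insert j1 (insert j0 I)) (retr I j0 y) :=
            (deep j0 hj0I hgood0).coh _ hr0 j1 (by simp [Ne.symm hjj, hj1I]) hr0j1
          have hc1 : hmap a b (insert j1 I) (retr I j1 y') =
              hmap a b (insert j0 (insert j1 I)) (retr I j1 y') :=
            (deep j1 hj1I hgood1).coh _ hr1 j0 (by simp [hjj, hj0I]) hr1j0
          have hgoodJ : good a b (insert j1 (insert j0 I)) :=
            good_insert_of a b hr0 (by rw [hr0j1]; exact zero_lt_one)
          have hPkgJ := deep2 j0 hj0I j1 hj1I hjj hgoodJ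
          have hmem0 : retr I j0 y ∈ fC a b (insert j1 (insert j0 I)) :=
            fC_insert a b hr0 hr0j1
          have hmem1 : retr I j1 y' ∈ fC a b (insert j1 (insert j0 I)) := by
            rw [Finset.insert_comm]
            exact fC_insert a b hr1 hr1j0
          have hfinal : hmap a b (insert j1 (insert j0 I)) (retr I j0 y) =
              hmap a b (insert j1 (insert j0 I)) (retr I j1 y') := by
            rw [← hc0, hveq, hc1, Finset.insert_comm]
          have hre := hPkgJ.inj hmem0 hmem1 hfinal
          have hb0 := blend_retr hy.2.1 hj0v hp
          have hb1 := blend_retr hy'.2.1 hj1v hp'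
          rw [← hb0, ← hb1, hre, hteq]
      · exfalso
        obtain ⟨j0, hj0I, hj0v, hyeq⟩ := hex y hy hp
        have hr0 : retr I j0 y ∈ fC a b (insert j0 I) := retr_mem_fC a b hy hj0v hp
        have hgood0 : good a b (insert j0 I) :=
          good_insert_of a b hy (by nlinarith [hj0v, hp] : y j0 < 1)
        have hv0 := (deep j0 hj0I hgood0).maps _ hr0
        have hlq0 : lamQ a b I (hmap a b I y) = lamf I y := by
          rw [hyeq]; exact lamQ_of_combo a b hgen hI hj0I hv0 (le_of_lt hp)
        rw [heq, hmap_eq_zero a b hp', lamQ_qpt a b hgen hI] at hlq0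
        exact absurd hlq0.symm (ne_of_gt hp)
      · exfalso
        obtain ⟨j1, hj1I, hj1v, hyeq'⟩ := hex y' hy' hp'
        have hr1 : retr I j1 y' ∈ fC a b (insert j1 I) := retr_mem_fC a b hy' hj1v hp'
        have hgood1 : good a b (insert j1 I) :=
          good_insert_of a b hy' (by nlinarith [hj1v, hp'] : y' j1 < 1)
        have hv1 := (deep j1 hj1I hgood1).maps _ hr1
        have hlq1 : lamQ a b I (hmap a b I y') = lamf I y' := by
          rw [hyeq']; exact lamQ_of_combo a b hgen hI hj1I hv1 (le_of_lt hp')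
        rw [← heq, hmap_eq_zero a b hp, lamQ_qpt a b hgen hI] at hlq1
        exact absurd hlq1.symm (ne_of_gt hp')
      · rw [eq_apex_of_nonpos a b hy hp, eq_apex_of_nonpos a b hy' hp']
    -- surjectivity
    have hsurj : Set.SurjOn (hmap a b I) (fC a b I) (fQ a b I) := by
      intro q hq
      by_cases hqe : q = qpt a b I
      · exact ⟨apex I, apex_mem_fC a b hI, by rw [hmap_apex, hqe]⟩
      · have ht0 : 0 < lamQ a b I q := lamQ_pos a b hgen hbdd hI hq hqe
        have ht1 : lamQ a b I q ≤ 1 := lamQ_le_one a b hgen hI hq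
        obtain ⟨jQ, hjQI, hjQv⟩ := lamQ_attain a b hIc q
        set t := lamQ a b I q with htdef
        set r' : Fin m → ℝ := qpt a b I + t⁻¹ • (q - qpt a b I) with hr'def
        have hqnn' : ∀ k, 0 ≤ q k := ((mem_Qset_iff a b).mp hq.1).2
        have hr'Q : r' ∈ fQ a b (insert jQ I) := by
          constructor
          · rw [mem_Qset_iff]
            refine ⟨range_combo a b hqrange ((mem_Qset_iff a b).mp hq.1).1 _, fun k => ?_⟩
            by_cases hk : k ∈ I
            · simp only [hr'def, Pi.add_apply, Pi.smul_apply, Pi.sub_apply, smul_eq_mul,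
                hq.2 k hk, hqzero k hk]
              norm_num
            · have h5 : 1 - q k / qpt a b I k ≤ t := lamQ_ge a b hk
              have h5' : qpt a b I k - q k ≤ t * qpt a b I k := by
                have h7 := mul_le_mul_of_nonneg_right h5 (le_of_lt (hqpos k hk))
                rw [sub_mul, one_mul, div_mul_cancel₀ _ (ne_of_gt (hqpos k hk))] at h7
                linarith
              have h6 : 0 ≤ t * r' k := by
                simp only [hr'def, Pi.add_apply, Pi.smul_apply, Pi.sub_apply, smul_eq_mul]
                rw [mul_add, ← mul_assoc, mul_inv_cancel₀ (ne_of_gt ht0), one_mul]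
                linarith
              by_contra hneg
              push_neg at hneg
              have := mul_neg_of_pos_of_neg ht0 hneg
              linarith
          · intro i hi
            rcases Finset.mem_insert.mp hi with h | h
            · subst h
              have h10 := hqpos i hjQI
              have hqj : q i = qpt a b I i * (1 - t) := by
                have h9 := hjQv
                field_simp at h9
                linarith
              simp only [hr'def, Pi.add_apply, Pi.smul_apply, Pi.sub_apply, smul_eq_mul, hqj]
              field_simp
              ring
            · simp only [hr'def, Pi.add_apply, Pi.smul_apply, Pi.sub_apply, smul_eq_mul,
                hq.2 i h, hqzero i h]
              norm_num
        have hgoodJ : good a b (insert jQ I) := (good_iff a b).mpr ⟨r', hr'Q⟩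
        obtain ⟨r, hrfC, hrval⟩ := (deep jQ hjQI hgoodJ).surj hr'Q
        have hrjQ : r jQ = 0 := hrfC.2.1 jQ (Finset.mem_insert_self _ _)
        have hrnn : ∀ k, 0 ≤ r k := fun k => (hrfC.1 k).1
        have hbmem : blend I t r ∈ fC a b I :=
          blend_mem_fC a b ht0 ht1 (Finset.subset_insert jQ I) hrfC
        refine ⟨blend I t r, hbmem, ?_⟩
        have hlamb : lamf I (blend I t r) = t := lamf_blend ht0 hrnn hjQI hrjQ
        have hposb : 0 < lamf I (blend I t r) := by rw [hlamb]; exact ht0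
        have hattain : 1 - blend I t r jQ = lamf I (blend I t r) := by
          simp only [blend, if_neg hjQI]
          rw [hlamb, hrjQ]
          ring
        rw [hkey (blend I t r) hbmem hposb jQ hjQI hattain]
        have hretr : retr I jQ (blend I t r) = r :=
          retr_blend ht0 hrnn hjQI (fun k hk => hrfC.2.1 k hk)
        rw [hretr, hrval, hlamb]
        funext k
        simp only [hr'def, Pi.add_apply, Pi.smul_apply, Pi.sub_apply, smul_eq_mul]
        field_simp
        ring
    exact ⟨hmaps, hsupp, hcoh, hcont, hinj, hsurj⟩


lemma pim_scale {q : Fin m → ℝ} {z : Fin m → ℂ} (hq : ∀ i, 0 ≤ q i)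
    (hsupp : ∀ i, q i = 0 ↔ ‖z i‖ ^ 2 = 0) :
    (fun i => ‖((Real.sqrt (q i) / ‖z i‖) • z i : ℂ)‖ ^ 2) = q := by
  funext i
  by_cases hz : z i = 0
  · have h0 : q i = 0 := (hsupp i).mpr (by simp [hz])
    simp [hz, h0]
  · have hr : 0 < ‖z i‖ := norm_pos_iff.mpr hz
    rw [norm_smul, Real.norm_eq_abs,
      abs_of_nonneg (div_nonneg (Real.sqrt_nonneg _) hr.le),
      div_mul_cancel₀ _ (ne_of_gt hr)]
    exact Real.sq_sqrt (hq i)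

end
end ZZ

/-- For a generic presentation of `P`, there is a `T^m`-equivariant
homeomorphism between the moment-angle complex `Z_{K_P}` of the dual simplicial complex
`K_P` and the intersection-of-quadrics model `Z_P`. -/
theorem ZKP_equivariantly_homeomorphic_ZP (n m : ℕ) (hn : 1 ≤ n) (hm : 1 ≤ m)
    (a : Fin m → (Fin n → ℝ)) (b : Fin m → ℝ)
    (P : Set (Fin n → ℝ))
    (hP : P = {x | ∀ i, 0 ≤ ∑ j, a i j * x j + b i})
    (hPbdd : Bornology.IsBounded P)
    (hPint : (interior P).Nonempty)
    (hgeneric : ∀ x ∈ P, LinearIndependent ℝ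
      (fun i : {i : Fin m // ∑ j, a i j * x j + b i = 0} => a i.1))
    (F : Fin m → Set (Fin n → ℝ))
    (hF : ∀ i, F i = {x ∈ P | ∑ j, a i j * x j + b i = 0})
    (KP : Set (Set (Fin m)))
    (hKP : KP = {I | I = ∅ ∨ (⋂ i ∈ I, F i).Nonempty})
    (ZKP : Set (Fin m → ℂ))
    (hZKP : ZKP = {z | (∀ i, ‖z i‖ ≤ 1) ∧ {i | ‖z i‖ < 1} ∈ KP})
    (ZP : Set (Fin m → ℂ))
    (hZP : ZP = {z | ∃ x ∈ P, ∀ i, ‖z i‖ ^ 2 = ∑ j, a i j * x j + b i}) :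
    ∃ e : ZKP ≃ₜ ZP,
      ∀ t : Fin m → ℂ, (∀ i, ‖t i‖ = 1) →
        ∀ z w : ZKP, (∀ i, (w : Fin m → ℂ) i = t i * (z : Fin m → ℂ) i) →
          ∀ i, (e w : Fin m → ℂ) i = t i * (e z : Fin m → ℂ) i := by
  classical
  have hPeq : P = ZZ.Pset a b := by rw [hP]; rfl
  have hgen : ∀ x ∈ ZZ.Pset a b, LinearIndependent ℝ
      (fun i : {i : Fin m // ZZ.fv a b x i = 0} => a i.1) := by
    intro x hx
    exact hgeneric x (by rw [hPeq]; exact hx)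
  have hbdd : Bornology.IsBounded (ZZ.Pset a b) := by rw [← hPeq]; exact hPbdd
  have hPne : (ZZ.Pset a b).Nonempty := by
    rw [← hPeq]
    exact ⟨hPint.choose, interior_subset hPint.choose_spec⟩
  have hgood0 : ZZ.good a b (∅ : Finset (Fin m)) := by
    obtain ⟨x, hx⟩ := hPne
    exact ⟨x, hx, fun i hi => absurd hi (Finset.notMem_empty i)⟩
  have pkg : ZZ.Pkg a b (∅ : Finset (Fin m)) :=
    ZZ.master a b hgen hbdd hPne hm (((∅ : Finset (Fin m))ᶜ).card) ∅ le_rfl hgood0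
  set C : Set (Fin m → ℝ) := ZZ.fC a b ∅ with hCdef
  set Q : Set (Fin m → ℝ) := ZZ.fQ a b ∅ with hQdef
  set pim : (Fin m → ℂ) → (Fin m → ℝ) := fun z i => ‖z i‖ ^ 2 with hpimdef
  have hpimcont : Continuous pim :=
    continuous_pi fun i => ((continuous_apply i).norm).pow 2
  have hZP' : ZP = {z | pim z ∈ Q} := by
    rw [hZP]
    ext z
    simp only [Set.mem_setOf_eq]
    constructor
    · rintro ⟨x, hxP, hx⟩
      have hxPs : x ∈ ZZ.Pset a b := by rw [← hPeq]; exact hxP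
      refine ⟨⟨x, hxPs, ?_⟩, fun i hi => absurd hi (Finset.notMem_empty i)⟩
      funext i
      exact (hx i).symm
    · rintro ⟨⟨x, hxP, hx⟩, -⟩
      exact ⟨x, by rw [hPeq]; exact hxP, fun i => (congrFun hx i).symm⟩
  have hKPiff : ∀ S : Set (Fin m),
      (S = ∅ ∨ (⋂ i ∈ S, F i).Nonempty) ↔
        ∃ x ∈ ZZ.Pset a b, ∀ i ∈ S, ZZ.fv a b x i = 0 := by
    intro S
    constructor
    · rintro (rfl | ⟨w, hw⟩)
      · obtain ⟨x, hx⟩ := hPne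
        exact ⟨x, hx, fun i hi => absurd hi (Set.notMem_empty i)⟩
      · rcases Set.eq_empty_or_nonempty S with rfl | ⟨i₀, hi₀⟩
        · obtain ⟨x, hx⟩ := hPne
          exact ⟨x, hx, fun i hi => absurd hi (Set.notMem_empty i)⟩
        · have hmem : ∀ i ∈ S, w ∈ F i := fun i hi => Set.mem_iInter₂.mp hw i hi
          have hw0 := hmem i₀ hi₀
          rw [hF i₀] at hw0
          have hwP : w ∈ ZZ.Pset a b := by rw [← hPeq]; exact hw0.1
          refine ⟨w, hwP, fun i hi => ?_⟩
          have hmi := hmem i hi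
          rw [hF i] at hmi
          exact hmi.2
    · rintro ⟨x, hxP, hx⟩
      right
      refine ⟨x, Set.mem_iInter₂.mpr fun i hi => ?_⟩
      rw [hF i]
      exact ⟨by rw [hPeq]; exact hxP, hx i hi⟩
  have hZKP' : ZKP = {z | pim z ∈ C} := by
    rw [hZKP, hKP]
    ext z
    simp only [Set.mem_setOf_eq]
    constructor
    · rintro ⟨h1, h2⟩
      refine ⟨fun j => ⟨sq_nonneg _, ?_⟩,
        fun i hi => absurd hi (Finset.notMem_empty i), ?_⟩
      · calc ‖z j‖ ^ 2 ≤ 1 ^ 2 := by nlinarith [h1 j, norm_nonneg (z j)]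
          _ = 1 := one_pow 2
      · obtain ⟨x, hxP, hx⟩ := (hKPiff _).mp h2
        refine ⟨x, hxP, fun i hi => hx i ?_⟩
        rw [ZZ.mem_supC_iff] at hi
        have hi2 : ‖z i‖ ^ 2 < 1 := hi
        show ‖z i‖ < 1
        nlinarith [norm_nonneg (z i), hi2]
    · rintro ⟨h1, -, h3⟩
      constructor
      · intro i
        have h12 : ‖z i‖ ^ 2 ≤ 1 := (h1 i).2
        nlinarith [h12, norm_nonneg (z i)]
      · apply (hKPiff _).mpr
        obtain ⟨x, hxP, hx⟩ := h3
        refine ⟨x, hxP, fun i hi => hx i ?_⟩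
        rw [ZZ.mem_supC_iff]
        show ‖z i‖ ^ 2 < 1
        have hlt : ‖z i‖ < 1 := hi
        nlinarith [norm_nonneg (z i)]
    -- the base homeomorphism
  have hCcompact : IsCompact C := ZZ.fC_compact a b
  haveI : CompactSpace C := isCompact_iff_compactSpace.mp hCcompact
  have hbij : Function.Bijective
      (fun y : C => (⟨ZZ.hmap a b ∅ y.1, pkg.maps y.1 y.2⟩ : Q)) := by
    constructor
    · intro y y' h
      exact Subtype.ext (pkg.inj y.2 y'.2 (congrArg Subtype.val h))
    · intro q
      obtain ⟨y, hy, hval⟩ := pkg.surj q.2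
      exact ⟨⟨y, hy⟩, Subtype.ext hval⟩
  have he0cont : Continuous (fun y : C => (⟨ZZ.hmap a b ∅ y.1, pkg.maps y.1 y.2⟩ : Q)) :=
    Continuous.subtype_mk (ContinuousOn.restrict pkg.cont) _
  set hbase : C ≃ₜ Q :=
    Continuous.homeoOfEquivCompactToT2 (f := Equiv.ofBijective _ hbij) he0cont with hbasedef
  have hmemC : ∀ z : ZKP, pim (z : Fin m → ℂ) ∈ C := by
    intro z
    exact (Set.ext_iff.mp hZKP' z.1).mp z.2
  have hmemQ : ∀ w : ZP, pim (w : Fin m → ℂ) ∈ Q := by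
    intro w
    exact (Set.ext_iff.mp hZP' w.1).mp w.2
  set G : ZKP → (Fin m → ℝ) :=
    fun z => ((hbase ⟨pim z.1, hmemC z⟩ : Q) : Fin m → ℝ) with hGdef
  have hGQ : ∀ z, G z ∈ ZZ.fQ a b ∅ := fun z => (hbase ⟨pim z.1, hmemC z⟩).2
  have hGnn : ∀ z i, 0 ≤ G z i := fun z i => ((ZZ.mem_Qset_iff a b).mp (hGQ z).1).2 i
  have hGsupp : ∀ z i, G z i = 0 ↔ ‖(z : ZKP).1 i‖ ^ 2 = 0 := by
    intro z i
    exact pkg.supp (pim z.1) (hmemC z) i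
  have hGcont : Continuous G := by
    have h1 : Continuous (fun z : ZKP => (⟨pim z.1, hmemC z⟩ : C)) :=
      Continuous.subtype_mk (hpimcont.comp continuous_subtype_val) _
    exact continuous_subtype_val.comp (hbase.continuous.comp h1)
  set H : ZP → (Fin m → ℝ) :=
    fun w => ((hbase.symm ⟨pim w.1, hmemQ w⟩ : C) : Fin m → ℝ) with hHdef
  have hHC : ∀ w, H w ∈ ZZ.fC a b ∅ := fun w => (hbase.symm ⟨pim w.1, hmemQ w⟩).2
  have hHnn : ∀ w i, 0 ≤ H w i := fun w i => ((hHC w).1 i).1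
  have hHmap : ∀ w, ZZ.hmap a b ∅ (H w) = pim (w : ZP).1 := by
    intro w
    have h1 : hbase (hbase.symm ⟨pim w.1, hmemQ w⟩) = ⟨pim w.1, hmemQ w⟩ :=
      hbase.apply_symm_apply _
    exact congrArg Subtype.val h1
  have hHsupp : ∀ w i, H w i = 0 ↔ ‖(w : ZP).1 i‖ ^ 2 = 0 := by
    intro w i
    have h3 := pkg.supp (H w) (hHC w) i
    rw [hHmap w] at h3
    exact h3.symm.trans Iff.rfl
  -- the lifted maps
  have hEmem : ∀ z : ZKP,
      (fun i => (Real.sqrt (G z i) / ‖(z : Fin m → ℂ) i‖) • (z : Fin m → ℂ) i) ∈ ZP := by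
    intro z
    rw [hZP']
    show pim _ ∈ Q
    rw [show pim (fun i => (Real.sqrt (G z i) / ‖(z : Fin m → ℂ) i‖) • (z : Fin m → ℂ) i)
        = G z from ZZ.pim_scale (hGnn z) (hGsupp z)]
    exact hGQ z
  have hFmem : ∀ w : ZP,
      (fun i => (Real.sqrt (H w i) / ‖(w : Fin m → ℂ) i‖) • (w : Fin m → ℂ) i) ∈ ZKP := by
    intro w
    rw [hZKP']
    show pim _ ∈ C
    rw [show pim (fun i => (Real.sqrt (H w i) / ‖(w : Fin m → ℂ) i‖) • (w : Fin m → ℂ) i)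
        = H w from ZZ.pim_scale (hHnn w) (hHsupp w)]
    exact hHC w
  set Ef : ZKP → ZP := fun z =>
    ⟨fun i => (Real.sqrt (G z i) / ‖(z : Fin m → ℂ) i‖) • (z : Fin m → ℂ) i, hEmem z⟩
    with hEfdef
  set Ff : ZP → ZKP := fun w =>
    ⟨fun i => (Real.sqrt (H w i) / ‖(w : Fin m → ℂ) i‖) • (w : Fin m → ℂ) i, hFmem w⟩
    with hFfdef
  -- scalar cancellation
  have hsc : ∀ (s u : ℝ) (c : ℂ), 0 ≤ s → (s = 0 ↔ ‖c‖ ^ 2 = 0) → u = ‖c‖ ^ 2 →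
      (Real.sqrt u / ‖(Real.sqrt s / ‖c‖) • c‖) • ((Real.sqrt s / ‖c‖) • c) = c := by
    intro s u c hs hiff hueq
    by_cases hc : c = 0
    · simp [hc]
    · have hcn : 0 < ‖c‖ := norm_pos_iff.mpr hc
      have hs0 : s ≠ 0 := by
        intro h0
        have h1 := hiff.mp h0
        nlinarith [hcn]
      have hspos : 0 < s := lt_of_le_of_ne hs (Ne.symm hs0)
      have hnorm : ‖(Real.sqrt s / ‖c‖) • c‖ = Real.sqrt s := by
        rw [norm_smul, Real.norm_eq_abs,
          abs_of_nonneg (div_nonneg (Real.sqrt_nonneg _) hcn.le),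
          div_mul_cancel₀ _ (ne_of_gt hcn)]
      have hsqrt : 0 < Real.sqrt s := Real.sqrt_pos.mpr hspos
      rw [hnorm, smul_smul, hueq, Real.sqrt_sq (norm_nonneg c)]
      rw [show ‖c‖ / Real.sqrt s * (Real.sqrt s / ‖c‖) = 1 by
        rw [div_mul_div_comm, mul_comm (‖c‖) (Real.sqrt s)]
        exact div_self (ne_of_gt (mul_pos hsqrt hcn)), one_smul]
  have hleft : Function.LeftInverse Ff Ef := by
    intro z
    apply Subtype.ext
    funext i
    have hEpim : pim ((Ef z : Fin m → ℂ)) = G z := ZZ.pim_scale (hGnn z) (hGsupp z)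
    have hQeq : (⟨pim (Ef z : Fin m → ℂ), hmemQ (Ef z)⟩ : Q) = hbase ⟨pim z.1, hmemC z⟩ :=
      Subtype.ext hEpim
    have hHeq : H (Ef z) = pim z.1 := by
      show ((hbase.symm ⟨pim (Ef z : Fin m → ℂ), hmemQ (Ef z)⟩ : C) : Fin m → ℝ) = pim z.1
      rw [hQeq, hbase.symm_apply_apply]
    show (Real.sqrt (H (Ef z) i) / ‖(Ef z : Fin m → ℂ) i‖) • (Ef z : Fin m → ℂ) i = z.1 i
    rw [hHeq]
    exact hsc (G z i) (pim z.1 i) (z.1 i) (hGnn z i) (hGsupp z i) rfl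
  have hright : Function.RightInverse Ff Ef := by
    intro w
    apply Subtype.ext
    funext i
    have hFpim : pim ((Ff w : Fin m → ℂ)) = H w := ZZ.pim_scale (hHnn w) (hHsupp w)
    have hCeq : (⟨pim (Ff w : Fin m → ℂ), hmemC (Ff w)⟩ : C) = hbase.symm ⟨pim w.1, hmemQ w⟩ :=
      Subtype.ext hFpim
    have hGeq : G (Ff w) = pim w.1 := by
      show ((hbase ⟨pim (Ff w : Fin m → ℂ), hmemC (Ff w)⟩ : Q) : Fin m → ℝ) = pim w.1
      rw [hCeq, hbase.apply_symm_apply]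
    show (Real.sqrt (G (Ff w) i) / ‖(Ff w : Fin m → ℂ) i‖) • (Ff w : Fin m → ℂ) i = w.1 i
    rw [hGeq]
    exact hsc (H w i) (pim w.1 i) (w.1 i) (hHnn w i) (hHsupp w i) rfl
  -- continuity of the lifted map
  have hEcont : Continuous Ef := by
    apply Continuous.subtype_mk
    apply continuous_pi
    intro i
    rw [continuous_iff_continuousAt]
    intro z₀
    by_cases hz : (z₀ : Fin m → ℂ) i = 0
    · have hval : (Real.sqrt (G z₀ i) / ‖(z₀ : Fin m → ℂ) i‖) • (z₀ : Fin m → ℂ) i = 0 := by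
        rw [hz, smul_zero]
      show Filter.Tendsto
        (fun z : ZKP => (Real.sqrt (G z i) / ‖(z : Fin m → ℂ) i‖) • (z : Fin m → ℂ) i)
        (nhds z₀) (nhds ((Real.sqrt (G z₀ i) / ‖(z₀ : Fin m → ℂ) i‖) • (z₀ : Fin m → ℂ) i))
      rw [hval]
      apply squeeze_zero_norm (a := fun z : ZKP => Real.sqrt (G z i)) ?_ ?_
      · intro z
        by_cases hzz : (z : Fin m → ℂ) i = 0
        · rw [hzz, smul_zero, norm_zero]; exact Real.sqrt_nonneg _
        · have hcn : 0 < ‖(z : Fin m → ℂ) i‖ := norm_pos_iff.mpr hzz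
          rw [norm_smul, Real.norm_eq_abs,
            abs_of_nonneg (div_nonneg (Real.sqrt_nonneg _) hcn.le),
            div_mul_cancel₀ _ (ne_of_gt hcn)]
      · have hG0 : G z₀ i = 0 := (hGsupp z₀ i).mpr (by rw [hz]; simp)
        have hcont2 : Continuous fun z : ZKP => Real.sqrt (G z i) :=
          Real.continuous_sqrt.comp ((continuous_apply i).comp hGcont)
        have h6 := hcont2.tendsto z₀
        rw [hG0, Real.sqrt_zero] at h6
        exact h6
    · apply ContinuousAt.fun_smul
      · apply ContinuousAt.div
        · exact (Real.continuous_sqrt.comp ((continuous_apply i).comp hGcont)).continuousAt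
        · exact (((continuous_apply i).comp continuous_subtype_val).norm).continuousAt
        · exact ne_of_gt (norm_pos_iff.mpr hz)
      · exact ((continuous_apply i).comp continuous_subtype_val).continuousAt
  -- compactness of ZKP
  have hZKPcl : IsClosed ZKP := by
    rw [hZKP']
    exact IsClosed.preimage hpimcont hCcompact.isClosed
  have hZKPbd : Bornology.IsBounded ZKP := by
    rw [isBounded_iff_forall_norm_le]
    refine ⟨1, fun z hz => ?_⟩
    rw [hZKP'] at hz
    apply (pi_norm_le_iff_of_nonneg zero_le_one).mpr
    intro i
    have h2 : ‖z i‖ ^ 2 ≤ 1 := (hz.1 i).2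
    nlinarith [norm_nonneg (z i)]
  haveI : CompactSpace ZKP := isCompact_iff_compactSpace.mp
    (Metric.isCompact_of_isClosed_isBounded hZKPcl hZKPbd)
  refine ⟨Continuous.homeoOfEquivCompactToT2 (f := ⟨Ef, Ff, hleft, hright⟩) hEcont, ?_⟩
  intro t ht z w hw i
  show (Ef w : Fin m → ℂ) i = t i * (Ef z : Fin m → ℂ) i
  have hpim_eq : pim (w : Fin m → ℂ) = pim (z : Fin m → ℂ) := by
    funext k
    show ‖(w : Fin m → ℂ) k‖ ^ 2 = ‖(z : Fin m → ℂ) k‖ ^ 2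
    rw [hw k, norm_mul, ht k, one_mul]
  have hGeq : G w = G z := by
    have hCeq : (⟨pim w.1, hmemC w⟩ : C) = ⟨pim z.1, hmemC z⟩ := Subtype.ext hpim_eq
    show ((hbase ⟨pim w.1, hmemC w⟩ : Q) : Fin m → ℝ) =
      ((hbase ⟨pim z.1, hmemC z⟩ : Q) : Fin m → ℝ)
    rw [hCeq]
  have hnormeq : ‖(w : Fin m → ℂ) i‖ = ‖(z : Fin m → ℂ) i‖ := by
    rw [hw i, norm_mul, ht i, one_mul]
  show (Real.sqrt (G w i) / ‖(w : Fin m → ℂ) i‖) • (w : Fin m → ℂ) i =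
    t i * ((Real.sqrt (G z i) / ‖(z : Fin m → ℂ) i‖) • (z : Fin m → ℂ) i)
  rw [hGeq, hnormeq, hw i, mul_smul_comm]
end

section
/- Let {x : ⟨a_i,x⟩ + b_i ≥ 0, i = 1,…,m} and {x : ⟨a'_i,x⟩ + b'_i ≥ 0, i = 1,…,m} be generic presentations of bounded polytopes P, P' ⊆ ℝ^n with nonempty interior, and suppose K_P = K_{P'} as simplicial complexes on {1,…,m} (i.e. the polytopes are combinatorially equivalent with corresponding inequalities). Then there exists a T^m-equivariant homeomorphism Z_P → Z_{P'}. -/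
noncomputable section Aux17
open Classical


lemma gram_exists_solution {n : ℕ} {k : Type*} [Fintype k]
    (w : k → (Fin n → ℝ)) (hw : LinearIndependent ℝ w) (target : k → ℝ) :
    ∃ v : Fin n → ℝ, ∀ i, ∑ j, w i j * v j = target i := by
  classical
  let M : Matrix k k ℝ := fun i l => ∑ j, w i j * w l j
  have hker : ∀ c : k → ℝ, M.mulVec c = 0 → c = 0 := by
    intro c hc
    have key : ∑ j, (∑ i, c i * w i j) ^ 2 = ∑ i, c i * (M.mulVec c) i := by
      simp only [Matrix.mulVec, dotProduct, M, sq, Finset.mul_sum, Finset.sum_mul]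
      rw [Finset.sum_comm]
      refine Finset.sum_congr rfl fun i _ => ?_
      rw [Finset.sum_comm]
      refine Finset.sum_congr rfl fun l _ => ?_
      refine Finset.sum_congr rfl fun j _ => ?_
      ring
    rw [hc] at key
    simp only [Pi.zero_apply, mul_zero, Finset.sum_const_zero] at key
    have hz : ∀ j, (∑ i, c i * w i j) = 0 := by
      intro j
      have h1 : ∀ j ∈ (Finset.univ : Finset (Fin n)), (0:ℝ) ≤ (∑ i, c i * w i j) ^ 2 :=
        fun j _ => sq_nonneg _
      have := (Finset.sum_eq_zero_iff_of_nonneg h1).mp key j (Finset.mem_univ j)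
      exact pow_eq_zero_iff (by norm_num) |>.mp this
    have hsum : ∑ i, c i • w i = 0 := by
      funext j
      rw [Finset.sum_apply]
      simpa using hz j
    exact funext (Fintype.linearIndependent_iff.mp hw c hsum)
  have hinj : Function.Injective M.mulVecLin := by
    rw [← LinearMap.ker_eq_bot, LinearMap.ker_eq_bot']
    intro c hc
    exact hker c hc
  have hsurj := (LinearMap.injective_iff_surjective).mp hinj
  obtain ⟨c, hc⟩ := hsurj target
  refine ⟨fun j => ∑ i, c i * w i j, fun i => ?_⟩
  have : (M.mulVecLin c) i = target i := by rw [hc]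
  rw [← this]
  simp only [Matrix.mulVecLin_apply, Matrix.mulVec, dotProduct, M]
  simp only [Finset.mul_sum]
  rw [Finset.sum_comm]
  refine Finset.sum_congr rfl fun l _ => ?_
  rw [Finset.sum_mul]
  refine Finset.sum_congr rfl fun j _ => ?_
  ring


variable {n m : ℕ}

/-- bundled generic bounded presentation -/
structure GoodPres (n m : ℕ) where
  a : Fin m → (Fin n → ℝ)
  b : Fin m → ℝ
  bounded : Bornology.IsBounded {x : Fin n → ℝ | ∀ i, 0 ≤ ∑ j, a i j * x j + b i}
  intNe : (interior {x : Fin n → ℝ | ∀ i, 0 ≤ ∑ j, a i j * x j + b i}).Nonempty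
  generic : ∀ x ∈ {x : Fin n → ℝ | ∀ i, 0 ≤ ∑ j, a i j * x j + b i},
    LinearIndependent ℝ (fun i : {i : Fin m // ∑ j, a i j * x j + b i = 0} => a i.1)

namespace GoodPres

variable (Q : GoodPres n m)

def f (i : Fin m) (x : Fin n → ℝ) : ℝ := ∑ j, Q.a i j * x j + Q.b i

def g (i : Fin m) (x : Fin n → ℝ) : ℝ := ∑ j, Q.a i j * x j

def P : Set (Fin n → ℝ) := {x | ∀ i, 0 ≤ Q.f i x}

lemma P_def : Q.P = {x : Fin n → ℝ | ∀ i, 0 ≤ ∑ j, Q.a i j * x j + Q.b i} := rfl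

lemma f_eq_g_add (i : Fin m) (x : Fin n → ℝ) : Q.f i x = Q.g i x + Q.b i := rfl

lemma g_add (i : Fin m) (x y : Fin n → ℝ) : Q.g i (x + y) = Q.g i x + Q.g i y := by
  simp [g, mul_add, Finset.sum_add_distrib]

lemma g_smul (i : Fin m) (t : ℝ) (x : Fin n → ℝ) : Q.g i (t • x) = t * Q.g i x := by
  simp only [g, Pi.smul_apply, smul_eq_mul, Finset.mul_sum]
  exact Finset.sum_congr rfl fun j _ => by ring

lemma f_add_smul (i : Fin m) (x v : Fin n → ℝ) (t : ℝ) :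
    Q.f i (x + t • v) = Q.f i x + t * Q.g i v := by
  simp [f_eq_g_add, g_add, g_smul]; ring

lemma g_sub (i : Fin m) (x y : Fin n → ℝ) : Q.g i (x - y) = Q.g i x - Q.g i y := by
  have := Q.g_add i (x - y) y; simp at this; linarith

lemma f_sub_eq (i : Fin m) (x y : Fin n → ℝ) : Q.g i (x - y) = Q.f i x - Q.f i y := by
  rw [g_sub]; simp [f_eq_g_add]

lemma continuous_g (i : Fin m) : Continuous (Q.g i) := by
  unfold g; exact continuous_finset_sum _ fun j _ => (continuous_const.mul (continuous_apply j))

lemma continuous_f (i : Fin m) : Continuous (Q.f i) :=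
  (Q.continuous_g i).add continuous_const

lemma isClosed_P : IsClosed Q.P := by
  have : Q.P = ⋂ i, {x | 0 ≤ Q.f i x} := by ext x; simp [P, Set.mem_iInter]
  rw [this]
  exact isClosed_iInter fun i => isClosed_le continuous_const (Q.continuous_f i)

lemma bounded_P : Bornology.IsBounded Q.P := Q.bounded

lemma isCompact_P : IsCompact Q.P :=
  Metric.isCompact_iff_isClosed_bounded.mpr ⟨Q.isClosed_P, Q.bounded_P⟩

lemma nonempty_P : Q.P.Nonempty := Q.intNe.mono interior_subset

lemma convex_comb (i : Fin m) (x y : Fin n → ℝ) (s t : ℝ) (hst : s + t = 1) :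
    Q.f i (s • x + t • y) = s * Q.f i x + t * Q.f i y := by
  have h1 : Q.g i (s • x + t • y) = s * Q.g i x + t * Q.g i y := by
    rw [g_add, g_smul, g_smul]
  simp only [f_eq_g_add, h1]; linear_combination (-(Q.b i)) * hst

lemma convex_P : Convex ℝ Q.P := by
  intro x hx y hy s t hs ht hst
  intro i
  rw [Q.convex_comb i x y s t hst]
  have := hx i; have := hy i
  nlinarith

/-- active set -/
def Jset (x : Fin n → ℝ) : Finset (Fin m) :=
  Finset.univ.filter (fun i => Q.f i x = 0)

lemma mem_Jset {x : Fin n → ℝ} {i : Fin m} : i ∈ Q.Jset x ↔ Q.f i x = 0 := by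
  simp [Jset]

def G (I : Finset (Fin m)) : Set (Fin n → ℝ) := {x ∈ Q.P | ∀ i ∈ I, Q.f i x = 0}

lemma mem_G {I : Finset (Fin m)} {x : Fin n → ℝ} :
    x ∈ Q.G I ↔ x ∈ Q.P ∧ ∀ i ∈ I, Q.f i x = 0 := Iff.rfl

lemma G_subset_P (I : Finset (Fin m)) : Q.G I ⊆ Q.P := fun _ h => h.1

lemma mem_G_iff_subset {I : Finset (Fin m)} {x : Fin n → ℝ} :
    x ∈ Q.G I ↔ x ∈ Q.P ∧ I ⊆ Q.Jset x := by
  simp only [mem_G]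
  constructor
  · rintro ⟨h1, h2⟩; exact ⟨h1, fun i hi => Q.mem_Jset.mpr (h2 i hi)⟩
  · rintro ⟨h1, h2⟩; exact ⟨h1, fun i hi => Q.mem_Jset.mp (h2 hi)⟩

lemma self_mem_G_Jset {x : Fin n → ℝ} (hx : x ∈ Q.P) : x ∈ Q.G (Q.Jset x) :=
  Q.mem_G_iff_subset.mpr ⟨hx, le_refl _⟩

lemma isClosed_G (I : Finset (Fin m)) : IsClosed (Q.G I) := by
  have : Q.G I = Q.P ∩ ⋂ i ∈ I, {x | Q.f i x = 0} := by
    ext x; simp [mem_G, Set.mem_iInter]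
  rw [this]
  exact Q.isClosed_P.inter (isClosed_biInter fun i _ =>
    isClosed_eq (Q.continuous_f i) continuous_const)

lemma convex_G (I : Finset (Fin m)) : Convex ℝ (Q.G I) := by
  intro x hx y hy s t hs ht hst
  refine ⟨Q.convex_P hx.1 hy.1 hs ht hst, fun i hi => ?_⟩
  rw [Q.convex_comb i x y s t hst, hx.2 i hi, hy.2 i hi]; ring

/-- skeleton sets -/
def S (d : ℕ) : Set (Fin n → ℝ) := {x ∈ Q.P | n ≤ (Q.Jset x).card + d}

lemma S_subset_P (d : ℕ) : Q.S d ⊆ Q.P := fun _ h => h.1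

lemma S_mono {d d' : ℕ} (h : d ≤ d') : Q.S d ⊆ Q.S d' := by
  intro x hx; have h2 := hx.2; exact ⟨hx.1, by omega⟩

lemma S_n_eq_P : Q.S n = Q.P := by
  ext x; simp only [S, Set.mem_setOf_eq]
  exact ⟨fun h => h.1, fun h => ⟨h, by omega⟩⟩

/-- genericity as linear independence of subfamilies of active normals -/
lemma linIndep_subset_Jset {x : Fin n → ℝ} (hx : x ∈ Q.P) {I : Finset (Fin m)}
    (hI : I ⊆ Q.Jset x) :
    LinearIndependent ℝ (fun i : {i : Fin m // i ∈ I} => Q.a i.1) := by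
  have h := Q.generic x hx
  have hcomp : ∀ i : {i : Fin m // i ∈ I}, Q.f i.1 x = 0 := fun i =>
    Q.mem_Jset.mp (hI i.2)
  let e : {i : Fin m // i ∈ I} → {i : Fin m // ∑ j, Q.a i j * x j + Q.b i = 0} :=
    fun i => ⟨i.1, hcomp i⟩
  have he : Function.Injective e := by
    intro i j hij
    cases i; cases j; simpa [e, Subtype.ext_iff] using hij
  exact h.comp e he

lemma card_Jset_le {x : Fin n → ℝ} (hx : x ∈ Q.P) : (Q.Jset x).card ≤ n := by
  have h := Q.linIndep_subset_Jset hx (le_refl (Q.Jset x))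
  have := h.fintype_card_le_finrank
  simpa [Module.finrank_fintype_fun_eq_card, Fintype.card_coe] using this


lemma exists_center (I : Finset (Fin m)) (hne : (Q.G I).Nonempty) :
    ∃ c ∈ Q.G I, Q.Jset c = I := by
  obtain ⟨x₀, hx₀⟩ := hne
  have hx₀P : x₀ ∈ Q.P := hx₀.1
  set J := Q.Jset x₀ with hJ
  have hIJ : I ⊆ J := (Q.mem_G_iff_subset.mp hx₀).2
  have hli := Q.linIndep_subset_Jset hx₀P (le_refl J)
  obtain ⟨v, hv⟩ := gram_exists_solution (fun i : {i : Fin m // i ∈ J} => Q.a i.1) hli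
    (fun i => if i.1 ∈ I then 0 else 1)
  -- choose ε
  have hpos : ∀ j ∉ J, 0 < Q.f j x₀ := by
    intro j hj
    rcases lt_or_eq_of_le (hx₀P j) with h | h
    · exact h
    · exact absurd (Q.mem_Jset.mpr h.symm) hj
  set eps : ℝ := if h : (Jᶜ : Finset (Fin m)).Nonempty then
      (Jᶜ.inf' h fun j => Q.f j x₀ / (|Q.g j v| + 1)) else 1 with heps
  have heps_pos : 0 < eps := by
    rw [heps]
    split_ifs with h
    · apply Finset.lt_inf'_iff (α := ℝ) h |>.mpr
      intro j hj
      have hj' : j ∉ J := Finset.mem_compl.mp hj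
      exact div_pos (hpos j hj') (by positivity)
    · norm_num
  have heps_le : ∀ j ∉ J, eps * (|Q.g j v| + 1) ≤ Q.f j x₀ := by
    intro j hj
    have hmem : j ∈ Jᶜ := Finset.mem_compl.mpr hj
    have hne' : (Jᶜ : Finset (Fin m)).Nonempty := ⟨j, hmem⟩
    have : eps ≤ Q.f j x₀ / (|Q.g j v| + 1) := by
      rw [heps]; rw [dif_pos hne']
      exact Finset.inf'_le _ hmem
    calc eps * (|Q.g j v| + 1) ≤ (Q.f j x₀ / (|Q.g j v| + 1)) * (|Q.g j v| + 1) := by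
          apply mul_le_mul_of_nonneg_right this (by positivity)
      _ = Q.f j x₀ := by field_simp
  refine ⟨x₀ + eps • v, ?_, ?_⟩
  case _ =>
    -- membership in G I
    refine ⟨?_, ?_⟩
    · intro i
      by_cases hiJ : i ∈ J
      · have hfi : Q.f i x₀ = 0 := Q.mem_Jset.mp hiJ
        rw [Q.f_add_smul, hfi, zero_add]
        have hgv : Q.g i v = if i ∈ I then 0 else 1 := hv ⟨i, hiJ⟩
        by_cases hiI : i ∈ I
        · simp only [hiI, if_pos] at hgv
          rw [hgv]; ring_nf; exact le_refl 0
        · simp only [hiI, if_neg, not_false_iff] at hgv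
          rw [hgv]; positivity
      · rw [Q.f_add_smul]
        have h1 := heps_le i hiJ
        have h2 : eps * Q.g i v ≥ -(eps * |Q.g i v|) := by
          have := neg_abs_le (Q.g i v)
          nlinarith [heps_pos]
        nlinarith [hpos i hiJ, heps_pos]
    · intro i hiI
      have hiJ : i ∈ J := hIJ hiI
      have hfi : Q.f i x₀ = 0 := Q.mem_Jset.mp hiJ
      rw [Q.f_add_smul, hfi, zero_add]
      have hgv : Q.g i v = if i ∈ I then 0 else 1 := hv ⟨i, hiJ⟩
      simp only [hiI, if_pos] at hgv
      rw [hgv]; ring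
  case _ =>
    -- Jset = I
    ext i
    rw [Q.mem_Jset, Q.f_add_smul]
    constructor
    · intro hzero
      by_contra hiI
      by_cases hiJ : i ∈ J
      · have hfi : Q.f i x₀ = 0 := Q.mem_Jset.mp hiJ
        have hgv : Q.g i v = if i ∈ I then 0 else 1 := hv ⟨i, hiJ⟩
        simp only [hiI, if_neg, not_false_iff] at hgv
        rw [hfi, hgv, zero_add, mul_one] at hzero
        exact absurd hzero (ne_of_gt heps_pos)
      · have h1 := heps_le i hiJ
        have h2 : eps * Q.g i v ≥ -(eps * |Q.g i v|) := by
          have := neg_abs_le (Q.g i v)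
          nlinarith [heps_pos]
        nlinarith [hpos i hiJ, heps_pos]
    · intro hiI
      have hiJ : i ∈ J := hIJ hiI
      have hfi : Q.f i x₀ = 0 := Q.mem_Jset.mp hiJ
      have hgv : Q.g i v = if i ∈ I then 0 else 1 := hv ⟨i, hiJ⟩
      simp only [hiI, if_pos] at hgv
      rw [hfi, hgv]; ring

lemma eq_of_mem_G_card_n {I : Finset (Fin m)} (hcard : I.card = n)
    {x y : Fin n → ℝ} (hx : x ∈ Q.G I) (hy : y ∈ Q.G I) : x = y := by
  rcases Nat.eq_zero_or_pos n with hn | hn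
  · funext j; exact absurd j.2 (by omega)
  have hIne : I.Nonempty := Finset.card_pos.mp (by omega)
  have hli := Q.linIndep_subset_Jset hx.1 (Q.mem_G_iff_subset.mp hx).2
  have hspan : Submodule.span ℝ (Set.range fun i : {i : Fin m // i ∈ I} => Q.a i.1) = ⊤ := by
    have : Nonempty {i : Fin m // i ∈ I} := by
      obtain ⟨i, hi⟩ := hIne; exact ⟨⟨i, hi⟩⟩
    apply hli.span_eq_top_of_card_eq_finrank
    rw [Fintype.card_coe, Module.finrank_fintype_fun_eq_card, Fintype.card_fin, hcard]
  set u := x - y with hu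
  have hgu : ∀ i ∈ I, Q.g i u = 0 := by
    intro i hi
    rw [Q.f_sub_eq, hx.2 i hi, hy.2 i hi, sub_zero]
  -- linear functional pairing with u
  let D : (Fin n → ℝ) →ₗ[ℝ] ℝ :=
    { toFun := fun z => ∑ j, z j * u j
      map_add' := by intro z w; simp [add_mul, Finset.sum_add_distrib]
      map_smul' := by intro t z; simp [Finset.mul_sum]; exact Finset.sum_congr rfl fun j _ => by ring }
  have hDrange : Set.range (fun i : {i : Fin m // i ∈ I} => Q.a i.1) ⊆ (LinearMap.ker D : Set (Fin n → ℝ)) := by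
    rintro z ⟨i, rfl⟩
    simp only [SetLike.mem_coe, LinearMap.mem_ker]
    exact hgu i.1 i.2
  have hDtop : (⊤ : Submodule ℝ (Fin n → ℝ)) ≤ LinearMap.ker D := by
    rw [← hspan]
    exact Submodule.span_le.mpr hDrange
  have hDu : D u = 0 := hDtop (Submodule.mem_top)
  have : ∑ j, u j * u j = 0 := hDu
  have hu0 : u = 0 := by
    funext j
    have h1 : ∀ j ∈ (Finset.univ : Finset (Fin n)), (0:ℝ) ≤ u j * u j :=
      fun j _ => mul_self_nonneg _
    have := (Finset.sum_eq_zero_iff_of_nonneg h1).mp this j (Finset.mem_univ j)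
    exact mul_self_eq_zero.mp this
  have := sub_eq_zero.mp (hu ▸ hu0)
  exact this


end GoodPres
section FoldHelpers

variable {α : Type*} [DecidableEq α]

lemma exists_fold_max_mem (s : Finset α) (F : α → ℝ) (b : ℝ)
    (h : b < s.fold max b F) : ∃ j ∈ s, s.fold max b F = F j := by
  classical
  induction s using Finset.induction_on with
  | empty => simp at h
  | @insert a s ha ih =>
    rw [Finset.fold_insert ha] at h ⊢
    rcases max_choice (F a) (s.fold max b F) with hm | hm
    · exact ⟨a, Finset.mem_insert_self a s, hm⟩
    · rw [hm] at h ⊢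
      obtain ⟨j, hj, hje⟩ := ih h
      exact ⟨j, Finset.mem_insert_of_mem hj, hje⟩

lemma fold_max_mul_nonneg (t : ℝ) (ht : 0 ≤ t) (s : Finset α) (F : α → ℝ) :
    s.fold max 0 (fun j => t * F j) = t * s.fold max 0 F := by
  classical
  induction s using Finset.induction_on with
  | empty => simp
  | @insert a s ha ih =>
    rw [Finset.fold_insert ha, Finset.fold_insert ha, ih, mul_max_of_nonneg _ _ ht]

lemma continuous_fold_max {β : Type*} [TopologicalSpace β] (s : Finset α)
    (F : α → β → ℝ) (hF : ∀ j, Continuous (F j)) :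
    Continuous fun x => s.fold max 0 (fun j => F j x) := by
  classical
  induction s using Finset.induction_on with
  | empty => simpa using continuous_const
  | @insert a s ha ih =>
    simp only [Finset.fold_insert ha]
    exact (hF a).max ih

end FoldHelpers

namespace GoodPres

variable {n m : ℕ} (Q : GoodPres n m)

/-- radial gauge function for the face `G I` with center `c` -/
def rho (c : Fin n → ℝ) (I : Finset (Fin m)) (x : Fin n → ℝ) : ℝ :=
  Iᶜ.fold max 0 (fun j => 1 - Q.f j x / Q.f j c)

/-- radial projection to the boundary of the face -/
def piMap (c : Fin n → ℝ) (I : Finset (Fin m)) (x : Fin n → ℝ) : Fin n → ℝ :=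
  c + (Q.rho c I x)⁻¹ • (x - c)

variable {Q}

section RhoLemmas

variable {c : Fin n → ℝ} {I : Finset (Fin m)}

lemma f_center_pos (hcP : c ∈ Q.P) (hcJ : Q.Jset c = I) {j : Fin m} (hj : j ∉ I) :
    0 < Q.f j c := by
  rcases lt_or_eq_of_le (hcP j) with h | h
  · exact h
  · exact absurd (hcJ ▸ Q.mem_Jset.mpr h.symm) hj

lemma rho_nonneg (x : Fin n → ℝ) : 0 ≤ Q.rho c I x :=
  (Finset.le_fold_max _).mpr (Or.inl le_rfl)

lemma term_le_rho {j : Fin m} (hj : j ∉ I) (x : Fin n → ℝ) :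
    1 - Q.f j x / Q.f j c ≤ Q.rho c I x :=
  (Finset.le_fold_max _).mpr (Or.inr ⟨j, Finset.mem_compl.mpr hj, le_rfl⟩)

lemma rho_le_one (hcP : c ∈ Q.P) (hcJ : Q.Jset c = I) {x : Fin n → ℝ} (hx : x ∈ Q.P) :
    Q.rho c I x ≤ 1 := by
  apply (Finset.fold_max_le _).mpr
  refine ⟨zero_le_one, fun j hj => ?_⟩
  have hj' : j ∉ I := Finset.mem_compl.mp hj
  have h1 : 0 ≤ Q.f j x / Q.f j c := div_nonneg (hx j) (f_center_pos hcP hcJ hj').le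
  linarith

lemma rho_eq_one (hcP : c ∈ Q.P) (hcJ : Q.Jset c = I) {x : Fin n → ℝ} (hx : x ∈ Q.P)
    {j : Fin m} (hj : j ∉ I) (hfj : Q.f j x = 0) : Q.rho c I x = 1 := by
  refine le_antisymm (rho_le_one hcP hcJ hx) ?_
  have h2 := term_le_rho (Q := Q) (c := c) hj x
  rw [hfj] at h2
  simpa using h2

lemma rho_lt_one (hcP : c ∈ Q.P) (hcJ : Q.Jset c = I) {x : Fin n → ℝ}
    (h : ∀ j ∉ I, 0 < Q.f j x) : Q.rho c I x < 1 := by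
  apply (Finset.fold_max_lt _).mpr
  refine ⟨zero_lt_one, fun j hj => ?_⟩
  have hj' : j ∉ I := Finset.mem_compl.mp hj
  have h1 : 0 < Q.f j x / Q.f j c := div_pos (h j hj') (f_center_pos hcP hcJ hj')
  linarith

lemma rho_center_eq_zero (hcP : c ∈ Q.P) (hcJ : Q.Jset c = I) : Q.rho c I c = 0 := by
  refine le_antisymm ?_ (rho_nonneg c)
  apply (Finset.fold_max_le _).mpr
  refine ⟨le_rfl, fun j hj => ?_⟩
  have hj' : j ∉ I := Finset.mem_compl.mp hj
  rw [div_self (f_center_pos hcP hcJ hj').ne']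
  simp

lemma continuous_rho : Continuous (Q.rho c I) := by
  apply continuous_fold_max
  intro j
  exact continuous_const.sub ((Q.continuous_f j).div_const _)

lemma rho_pos (hcP : c ∈ Q.P) (hcJ : Q.Jset c = I) {x : Fin n → ℝ}
    (hx : x ∈ Q.G I) (hne : x ≠ c) : 0 < Q.rho c I x := by
  by_contra hle
  push_neg at hle
  have hterm : ∀ j ∉ I, Q.f j c ≤ Q.f j x := by
    intro j hj
    have h1 := (term_le_rho (c := c) hj x).trans hle
    have h2 : 1 ≤ Q.f j x / Q.f j c := by linarith
    have h3 := f_center_pos hcP hcJ hj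
    rw [le_div_iff₀ h3] at h2
    linarith
  -- the ray from c through x stays in P forever, contradicting boundedness
  have hray : ∀ t : ℝ, 0 ≤ t → c + t • (x - c) ∈ Q.P := by
    intro t ht k
    rw [Q.f_add_smul, Q.f_sub_eq]
    by_cases hk : k ∈ I
    · have h1 : Q.f k c = 0 := Q.mem_Jset.mp (hcJ ▸ hk)
      have h2 : Q.f k x = 0 := hx.2 k hk
      rw [h1, h2]; simp
    · have h1 := f_center_pos hcP hcJ hk
      have h2 := hterm k hk
      nlinarith
  obtain ⟨R, hR⟩ := isBounded_iff_forall_norm_le.mp Q.bounded_P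
  have hv : x - c ≠ 0 := sub_ne_zero.mpr hne
  have hvn : 0 < ‖x - c‖ := norm_pos_iff.mpr hv
  set t : ℝ := (|R| + ‖c‖ + 1) / ‖x - c‖ with htdef
  have ht : 0 ≤ t := by positivity
  have hmem := hray t ht
  have hbound := hR _ hmem
  have h1 : ‖t • (x - c)‖ ≤ ‖c + t • (x - c)‖ + ‖c‖ := by
    have := norm_add_le (c + t • (x - c)) (-c)
    simpa [add_assoc] using this
  have h2 : ‖t • (x - c)‖ = t * ‖x - c‖ := by
    rw [norm_smul, Real.norm_eq_abs, abs_of_nonneg ht]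
  have h3 : t * ‖x - c‖ = |R| + ‖c‖ + 1 := by
    rw [htdef, div_mul_cancel₀ _ hvn.ne']
  have h4 : R ≤ |R| := le_abs_self R
  linarith

lemma rho_exists_attain (hcP : c ∈ Q.P) (hcJ : Q.Jset c = I) {x : Fin n → ℝ}
    (hx : x ∈ Q.G I) (hne : x ≠ c) :
    ∃ j ∉ I, Q.rho c I x = 1 - Q.f j x / Q.f j c := by
  have hpos := rho_pos hcP hcJ hx hne
  obtain ⟨j, hj, hje⟩ := exists_fold_max_mem Iᶜ (fun j => 1 - Q.f j x / Q.f j c) 0 hpos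
  exact ⟨j, Finset.mem_compl.mp hj, hje⟩

/-- scaling identity along rays from the center -/
lemma rho_ray (hcP : c ∈ Q.P) (hcJ : Q.Jset c = I) (y : Fin n → ℝ) {t : ℝ} (ht : 0 ≤ t) :
    Q.rho c I (c + t • (y - c)) = t * Q.rho c I y := by
  unfold rho
  rw [← fold_max_mul_nonneg t ht]
  refine Finset.fold_congr fun j hj => ?_
  have hj' : j ∉ I := Finset.mem_compl.mp hj
  have hc := f_center_pos hcP hcJ hj'
  rw [Q.f_add_smul, Q.f_sub_eq]
  field_simp
  ring

end RhoLemmas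

section PiLemmas

variable {c : Fin n → ℝ} {I : Finset (Fin m)}

lemma f_piMap (x : Fin n → ℝ) (k : Fin m) :
    Q.f k (Q.piMap c I x) = Q.f k c + (Q.rho c I x)⁻¹ * (Q.f k x - Q.f k c) := by
  unfold piMap
  rw [Q.f_add_smul, Q.f_sub_eq]

lemma piMap_eq_of_rho_one {x : Fin n → ℝ} (h : Q.rho c I x = 1) : Q.piMap c I x = x := by
  unfold piMap
  rw [h]
  simp

lemma piMap_mem (hcP : c ∈ Q.P) (hcJ : Q.Jset c = I) {x : Fin n → ℝ}
    (hx : x ∈ Q.G I) (hne : x ≠ c) :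
    Q.piMap c I x ∈ Q.G I ∧ ∃ j ∉ I, Q.f j (Q.piMap c I x) = 0 := by
  have hρpos := rho_pos hcP hcJ hx hne
  have hρinv : 0 < (Q.rho c I x)⁻¹ := inv_pos.mpr hρpos
  constructor
  · constructor
    · intro k
      rw [f_piMap]
      by_cases hk : k ∈ I
      · have h1 : Q.f k c = 0 := Q.mem_Jset.mp (hcJ ▸ hk)
        have h2 : Q.f k x = 0 := hx.2 k hk
        rw [h1, h2]; simp
      · have h1 := f_center_pos hcP hcJ hk
        have h2 : 1 - Q.f k x / Q.f k c ≤ Q.rho c I x := term_le_rho hk x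
        -- f k c + ρ⁻¹ (f k x - f k c) ≥ f k c (1 - ρ⁻¹ ρ) = 0
        have h3 : Q.f k x - Q.f k c ≥ -(Q.rho c I x * Q.f k c) := by
          have := mul_le_mul_of_nonneg_right h2 h1.le
          rw [sub_mul, one_mul, div_mul_cancel₀ _ h1.ne'] at this
          linarith
        have h4 : (Q.rho c I x)⁻¹ * (Q.f k x - Q.f k c) ≥
            (Q.rho c I x)⁻¹ * (-(Q.rho c I x * Q.f k c)) :=
          mul_le_mul_of_nonneg_left h3 hρinv.le
        have h5 : (Q.rho c I x)⁻¹ * (-(Q.rho c I x * Q.f k c)) = -Q.f k c := by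
          rw [mul_neg, inv_mul_cancel_left₀ hρpos.ne']
        linarith
    · intro i hi
      rw [f_piMap]
      have h1 : Q.f i c = 0 := Q.mem_Jset.mp (hcJ ▸ hi)
      have h2 : Q.f i x = 0 := hx.2 i hi
      rw [h1, h2]; simp
  · obtain ⟨j, hj, hje⟩ := rho_exists_attain hcP hcJ hx hne
    refine ⟨j, hj, ?_⟩
    rw [f_piMap]
    have h1 := f_center_pos hcP hcJ hj
    have h2 : Q.f j x - Q.f j c = -(Q.rho c I x * Q.f j c) := by
      rw [hje]
      field_simp
      ring
    rw [h2]
    rw [mul_neg, inv_mul_cancel_left₀ hρpos.ne']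
    ring

lemma rho_piMap_eq_one (hcP : c ∈ Q.P) (hcJ : Q.Jset c = I) {x : Fin n → ℝ}
    (hx : x ∈ Q.G I) (hne : x ≠ c) : Q.rho c I (Q.piMap c I x) = 1 := by
  obtain ⟨hmem, j, hj, hje⟩ := piMap_mem hcP hcJ hx hne
  exact rho_eq_one hcP hcJ hmem.1 hj hje

end PiLemmas

end GoodPres
namespace GoodPres

variable {n m : ℕ}

/-- the cone extension map over the face `G I` -/
def coneMap (Q : GoodPres n m) (c c' : Fin n → ℝ) (I : Finset (Fin m))
    (Φ : (Fin n → ℝ) → (Fin n → ℝ)) (x : Fin n → ℝ) : Fin n → ℝ :=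
  c' + Q.rho c I x • (Φ (Q.piMap c I x) - c')

/-- inductive invariant -/
def Props (Q Q' : GoodPres n m) (Φ Ψ : (Fin n → ℝ) → (Fin n → ℝ)) (d : ℕ) : Prop :=
  (∀ x ∈ Q.S d, Φ x ∈ Q'.P ∧ Q'.Jset (Φ x) = Q.Jset x ∧ Ψ (Φ x) = x) ∧
    ContinuousOn Φ (Q.S d)

section Cone

variable {Q Q' : GoodPres n m} {c c' : Fin n → ℝ} {I : Finset (Fin m)}
  {Φ Ψ : (Fin n → ℝ) → (Fin n → ℝ)} {d : ℕ}

lemma coneMap_center (hcP : c ∈ Q.P) (hcJ : Q.Jset c = I) :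
    Q.coneMap c c' I Φ c = c' := by
  unfold coneMap
  rw [rho_center_eq_zero hcP hcJ, zero_smul, add_zero]

lemma coneMap_eq_of_boundary (hcP : c ∈ Q.P) (hcJ : Q.Jset c = I) {x : Fin n → ℝ}
    (hx : x ∈ Q.P) {j : Fin m} (hj : j ∉ I) (hfj : Q.f j x = 0) :
    Q.coneMap c c' I Φ x = Φ x := by
  unfold coneMap
  rw [piMap_eq_of_rho_one (rho_eq_one hcP hcJ hx hj hfj), rho_eq_one hcP hcJ hx hj hfj]
  simp

lemma piMap_mem_S (hcG : c ∈ Q.G I) (hcJ : Q.Jset c = I)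
    (hcard : I.card + (d + 1) = n) {x : Fin n → ℝ}
    (hxG : x ∈ Q.G I) (hxc : x ≠ c) : Q.piMap c I x ∈ Q.S d := by
  obtain ⟨hyG, j₀, hj₀, hfj₀⟩ := piMap_mem hcG.1 hcJ hxG hxc
  refine ⟨hyG.1, ?_⟩
  have hsub : insert j₀ I ⊆ Q.Jset (Q.piMap c I x) := by
    intro i hi
    rcases Finset.mem_insert.mp hi with rfl | hiI
    · exact Q.mem_Jset.mpr hfj₀
    · exact (Q.mem_G_iff_subset.mp hyG).2 hiI
  have hcard2 := Finset.card_le_card hsub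
  rw [Finset.card_insert_of_notMem hj₀] at hcard2
  omega

lemma cone_key (hcG : c ∈ Q.G I) (hcJ : Q.Jset c = I)
    (hc'G : c' ∈ Q'.G I) (hc'J : Q'.Jset c' = I)
    (hcard : I.card + (d + 1) = n)
    (hP1 : ∀ y ∈ Q.S d, Φ y ∈ Q'.P ∧ Q'.Jset (Φ y) = Q.Jset y ∧ Ψ (Φ y) = y)
    {x : Fin n → ℝ} (hxG : x ∈ Q.G I) (hxJ : Q.Jset x = I) :
    Q.coneMap c c' I Φ x ∈ Q'.P ∧ Q'.Jset (Q.coneMap c c' I Φ x) = I ∧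
      Q'.coneMap c' c I Ψ (Q.coneMap c c' I Φ x) = x := by
  have hcP : c ∈ Q.P := hcG.1
  have hc'P : c' ∈ Q'.P := hc'G.1
  by_cases hxc : x = c
  · subst hxc
    rw [coneMap_center hcP hcJ]
    exact ⟨hc'P, hc'J, by rw [coneMap_center hc'P hc'J]⟩
  · set ρ := Q.rho c I x with hρdef
    have hρpos : 0 < ρ := rho_pos hcP hcJ hxG hxc
    have hρlt : ρ < 1 := by
      apply rho_lt_one hcP hcJ
      intro j hj
      rcases lt_or_eq_of_le (hxG.1 j) with h | h
      · exact h
      · exact absurd (hxJ ▸ Q.mem_Jset.mpr h.symm) hj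
    have hρ0 : (0:ℝ) ≤ ρ := hρpos.le
    set y := Q.piMap c I x with hydef
    obtain ⟨hyG, j₀, hj₀, hfj₀⟩ := piMap_mem hcP hcJ hxG hxc
    have hyS : Q.piMap c I x ∈ Q.S d := piMap_mem_S hcG hcJ hcard hxG hxc
    obtain ⟨hy'P, hy'J, hΨy'⟩ := hP1 y hyS
    set y' := Φ y with hy'def
    have hy'G : y' ∈ Q'.G I := by
      rw [Q'.mem_G_iff_subset]
      refine ⟨hy'P, ?_⟩
      rw [hy'J]
      exact (Q.mem_G_iff_subset.mp hyG).2
    have hj₀' : Q'.f j₀ y' = 0 := by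
      have : j₀ ∈ Q'.Jset y' := by rw [hy'J]; exact Q.mem_Jset.mpr hfj₀
      exact Q'.mem_Jset.mp this
    have hcomb : Q.coneMap c c' I Φ x = (1 - ρ) • c' + ρ • y' := by
      unfold coneMap
      module
    have hHG : Q.coneMap c c' I Φ x ∈ Q'.G I := by
      rw [hcomb]
      exact Q'.convex_G I hc'G hy'G (by linarith) hρ0 (by ring)
    have hHf : ∀ j ∉ I, 0 < Q'.f j (Q.coneMap c c' I Φ x) := by
      intro j hj
      rw [hcomb, Q'.convex_comb j c' y' (1 - ρ) ρ (by ring)]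
      have h1 := f_center_pos hc'P hc'J hj
      have h2 := hy'P j
      nlinarith
    have hHJ : Q'.Jset (Q.coneMap c c' I Φ x) = I := by
      ext j
      rw [Q'.mem_Jset]
      constructor
      · intro h
        by_contra hjI
        exact absurd h (ne_of_gt (hHf j hjI))
      · intro hjI
        exact hHG.2 j hjI
    refine ⟨hHG.1, hHJ, ?_⟩
    have hρ' : Q'.rho c' I (Q.coneMap c c' I Φ x) = ρ := by
      show Q'.rho c' I (c' + ρ • (y' - c')) = ρ
      rw [rho_ray hc'P hc'J y' hρ0, rho_eq_one hc'P hc'J hy'P hj₀ hj₀', mul_one]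
    have hπ' : Q'.piMap c' I (Q.coneMap c c' I Φ x) = y' := by
      show Q'.piMap c' I (c' + ρ • (y' - c')) = y'
      unfold piMap
      rw [show Q'.rho c' I (c' + ρ • (y' - c')) = ρ from hρ']
      rw [add_sub_cancel_left, smul_smul, inv_mul_cancel₀ hρpos.ne', one_smul,
        add_sub_cancel]
    show c + Q'.rho c' I (Q.coneMap c c' I Φ x) • (Ψ (Q'.piMap c' I (Q.coneMap c c' I Φ x)) - c) = x
    rw [hρ', hπ', hΨy']
    have hyc : y - c = ρ⁻¹ • (x - c) := by
      rw [hydef]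
      unfold piMap
      rw [add_sub_cancel_left]
    rw [hyc, smul_smul, mul_inv_cancel₀ hρpos.ne', one_smul, add_sub_cancel]

lemma cone_cont (hcG : c ∈ Q.G I) (hcJ : Q.Jset c = I)
    (hc'G : c' ∈ Q'.G I) (hc'J : Q'.Jset c' = I)
    (hcard : I.card + (d + 1) = n)
    (hP1 : ∀ y ∈ Q.S d, Φ y ∈ Q'.P ∧ Q'.Jset (Φ y) = Q.Jset y ∧ Ψ (Φ y) = y)
    (hΦc : ContinuousOn Φ (Q.S d)) :
    ContinuousOn (Q.coneMap c c' I Φ) (Q.G I) := by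
  have hcP : c ∈ Q.P := hcG.1
  have hc'P : c' ∈ Q'.P := hc'G.1
  intro x hx
  by_cases hxc : x = c
  · -- continuity at the center, by squeezing
    rw [hxc]
    obtain ⟨M, hM⟩ := isBounded_iff_forall_norm_le.mp Q'.bounded_P
    have hbound : ∀ y ∈ Q.G I, dist (Q.coneMap c c' I Φ y) c' ≤ Q.rho c I y * (M + ‖c'‖) := by
      intro y hy
      by_cases hyc : y = c
      · subst hyc
        rw [coneMap_center hcP hcJ, dist_self, rho_center_eq_zero hcP hcJ, zero_mul]
      · have h1 : dist (Q.coneMap c c' I Φ y) c' = ‖Q.rho c I y • (Φ (Q.piMap c I y) - c')‖ := by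
          rw [dist_eq_norm]
          unfold coneMap
          rw [add_sub_cancel_left]
        rw [h1, norm_smul, Real.norm_eq_abs, abs_of_nonneg (rho_nonneg y)]
        apply mul_le_mul_of_nonneg_left _ (rho_nonneg y)
        have hyS := piMap_mem_S hcG hcJ hcard hy hyc
        have hΦP := (hP1 _ hyS).1
        calc ‖Φ (Q.piMap c I y) - c'‖ ≤ ‖Φ (Q.piMap c I y)‖ + ‖c'‖ := norm_sub_le _ _
          _ ≤ M + ‖c'‖ := by have := hM _ hΦP; linarith
    have hval : Q.coneMap c c' I Φ c = c' := coneMap_center hcP hcJ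
    rw [ContinuousWithinAt, hval, tendsto_iff_dist_tendsto_zero]
    apply squeeze_zero' (eventually_nhdsWithin_of_forall fun y _ => dist_nonneg)
      (eventually_nhdsWithin_of_forall hbound)
    have h2 : Filter.Tendsto (Q.rho c I) (nhdsWithin c (Q.G I)) (nhds 0) := by
      have := (continuous_rho (Q := Q) (c := c) (I := I)).continuousWithinAt
        (s := Q.G I) (x := c)
      rwa [ContinuousWithinAt, rho_center_eq_zero hcP hcJ] at this
    have := h2.mul_const (M + ‖c'‖)
    rwa [zero_mul] at this
  · -- continuity away from the center
    have hmem : Q.G I \ {c} ∈ nhdsWithin x (Q.G I) := by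
      rw [mem_nhdsWithin]
      exact ⟨{c}ᶜ, isClosed_singleton.isOpen_compl, hxc, fun y hy => ⟨hy.2, hy.1⟩⟩
    apply ContinuousWithinAt.mono_of_mem_nhdsWithin _ hmem
    have hρ : ContinuousWithinAt (Q.rho c I) (Q.G I \ {c}) x :=
      (continuous_rho).continuousWithinAt
    have hρne : Q.rho c I x ≠ 0 := (rho_pos hcP hcJ hx hxc).ne'
    have hρinv : ContinuousWithinAt (fun y => (Q.rho c I y)⁻¹) (Q.G I \ {c}) x :=
      ((continuous_rho).continuousAt.inv₀ hρne).continuousWithinAt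
    have hπ : ContinuousWithinAt (Q.piMap c I) (Q.G I \ {c}) x := by
      unfold piMap
      exact continuousWithinAt_const.add
        (hρinv.smul ((continuous_id.sub continuous_const).continuousWithinAt))
    have hmaps : Set.MapsTo (Q.piMap c I) (Q.G I \ {c}) (Q.S d) := by
      intro y hy
      exact piMap_mem_S hcG hcJ hcard hy.1 hy.2
    have hΦπ : ContinuousWithinAt (fun y => Φ (Q.piMap c I y)) (Q.G I \ {c}) x := by
      have hπx : Q.piMap c I x ∈ Q.S d := piMap_mem_S hcG hcJ hcard hx hxc
      exact (hΦc _ hπx).comp hπ hmaps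
    unfold coneMap
    exact continuousWithinAt_const.add (hρ.smul (hΦπ.sub continuousWithinAt_const))

end Cone

end GoodPres
namespace GoodPres

variable {n m : ℕ}

section Step

variable {Q Q' : GoodPres n m} {cf cf' : Finset (Fin m) → (Fin n → ℝ)}
  {Φ Ψ : (Fin n → ℝ) → (Fin n → ℝ)} {d : ℕ}

open Classical in
/-- one inductive extension step -/
noncomputable def stepMap (Q Q' : GoodPres n m) (cf cf' : Finset (Fin m) → (Fin n → ℝ))
    (Φ : (Fin n → ℝ) → (Fin n → ℝ)) (d : ℕ) (x : Fin n → ℝ) : Fin n → ℝ :=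
  if x ∈ Q.S d then Φ x else Q.coneMap (cf (Q.Jset x)) (cf' (Q.Jset x)) (Q.Jset x) Φ x

lemma finite_continuousOn {X Y : Type*} [TopologicalSpace X] [T1Space X]
    [TopologicalSpace Y] {s : Set X} (hs : s.Finite) (f : X → Y) : ContinuousOn f s := by
  intro x hx
  have hclosed : IsClosed (s \ {x}) := (hs.subset Set.diff_subset).isClosed
  have hle : nhdsWithin x s ≤ pure x := by
    intro A hA
    rw [mem_nhdsWithin]
    refine ⟨(s \ {x})ᶜ, hclosed.isOpen_compl, by simp, fun y hy => ?_⟩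
    have h1 : y ∉ s \ {x} := hy.1
    have h2 : y ∈ s := hy.2
    have : y = x := by
      by_contra hne
      exact h1 ⟨h2, hne⟩
    rw [this]
    exact hA
  exact (tendsto_pure_nhds f x).mono_left hle

lemma step_half (hd : d + 1 ≤ n)
    (hK : ∀ I : Finset (Fin m), (Q.G I).Nonempty ↔ (Q'.G I).Nonempty)
    (hcf : ∀ I, (Q.G I).Nonempty → cf I ∈ Q.G I ∧ Q.Jset (cf I) = I)
    (hcf' : ∀ I, (Q'.G I).Nonempty → cf' I ∈ Q'.G I ∧ Q'.Jset (cf' I) = I)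
    (hP1 : Props Q Q' Φ Ψ d) (hP2 : Props Q' Q Ψ Φ d) :
    Props Q Q' (stepMap Q Q' cf cf' Φ d) (stepMap Q' Q cf' cf Ψ d) (d + 1) := by
  classical
  constructor
  · -- pointwise properties
    intro x hx
    by_cases hxd : x ∈ Q.S d
    · obtain ⟨hP, hJ, hΨ⟩ := hP1.1 x hxd
      have e1 : stepMap Q Q' cf cf' Φ d x = Φ x := if_pos hxd
      have hΦS : Φ x ∈ Q'.S d := ⟨hP, by rw [hJ]; exact hxd.2⟩
      have e2 : stepMap Q' Q cf' cf Ψ d (Φ x) = Ψ (Φ x) := if_pos hΦS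
      rw [e1]
      exact ⟨hP, hJ, by rw [e2, hΨ]⟩
    · have hxP : x ∈ Q.P := hx.1
      have hxG : x ∈ Q.G (Q.Jset x) := Q.self_mem_G_Jset hxP
      have hcard : (Q.Jset x).card + (d + 1) = n := by
        have h1 := hx.2
        have h2 : ¬(n ≤ (Q.Jset x).card + d) := fun hcon => hxd ⟨hxP, hcon⟩
        omega
      have hGne : (Q.G (Q.Jset x)).Nonempty := ⟨x, hxG⟩
      have hG'ne : (Q'.G (Q.Jset x)).Nonempty := (hK _).mp hGne
      obtain ⟨hcG, hcJ⟩ := hcf _ hGne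
      obtain ⟨hc'G, hc'J⟩ := hcf' _ hG'ne
      have hkey := cone_key hcG hcJ hc'G hc'J hcard hP1.1 hxG rfl
      have e1 : stepMap Q Q' cf cf' Φ d x =
          Q.coneMap (cf (Q.Jset x)) (cf' (Q.Jset x)) (Q.Jset x) Φ x := if_neg hxd
      rw [e1]
      refine ⟨hkey.1, hkey.2.1, ?_⟩
      have hHS : Q.coneMap (cf (Q.Jset x)) (cf' (Q.Jset x)) (Q.Jset x) Φ x ∉ Q'.S d := by
        intro hcon
        have := hcon.2
        rw [hkey.2.1] at this
        omega
      have e2 : stepMap Q' Q cf' cf Ψ d (Q.coneMap (cf (Q.Jset x)) (cf' (Q.Jset x)) (Q.Jset x) Φ x) =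
          Q'.coneMap (cf' (Q'.Jset (Q.coneMap (cf (Q.Jset x)) (cf' (Q.Jset x)) (Q.Jset x) Φ x)))
            (cf (Q'.Jset (Q.coneMap (cf (Q.Jset x)) (cf' (Q.Jset x)) (Q.Jset x) Φ x)))
            (Q'.Jset (Q.coneMap (cf (Q.Jset x)) (cf' (Q.Jset x)) (Q.Jset x) Φ x)) Ψ
            (Q.coneMap (cf (Q.Jset x)) (cf' (Q.Jset x)) (Q.Jset x) Φ x) := if_neg hHS
      rw [e2, hkey.2.1, hkey.2.2]
  · -- continuity
    set 𝒥 : Finset (Finset (Fin m)) :=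
      Finset.univ.filter (fun I : Finset (Fin m) =>
        (Q.G I).Nonempty ∧ I.card + (d + 1) = n) with h𝒥
    have hdecomp : Q.S (d + 1) = ⋃ I ∈ (↑𝒥 : Set (Finset (Fin m))), Q.G I := by
      ext x
      constructor
      · intro hx
        have h1 : n - (d + 1) ≤ (Q.Jset x).card := by
          have := hx.2; omega
        obtain ⟨I, hIsub, hIcard⟩ := Finset.exists_subset_card_eq h1
        have hxGI : x ∈ Q.G I := Q.mem_G_iff_subset.mpr ⟨hx.1, hIsub⟩
        have hI𝒥 : I ∈ 𝒥 := by
          rw [h𝒥, Finset.mem_filter]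
          exact ⟨Finset.mem_univ I, ⟨x, hxGI⟩, by omega⟩
        exact Set.mem_biUnion hI𝒥 hxGI
      · intro hx
        obtain ⟨I, hI𝒥, hxGI⟩ := Set.mem_iUnion₂.mp hx
        have hI𝒥' : I ∈ 𝒥 := hI𝒥
        rw [h𝒥, Finset.mem_filter] at hI𝒥'
        obtain ⟨-, -, hIcard⟩ := hI𝒥'
        refine ⟨hxGI.1, ?_⟩
        have hsub : I ⊆ Q.Jset x := (Q.mem_G_iff_subset.mp hxGI).2
        have := Finset.card_le_card hsub
        omega
    have hagree : ∀ I ∈ 𝒥, ∀ y ∈ Q.G I,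
        stepMap Q Q' cf cf' Φ d y = Q.coneMap (cf I) (cf' I) I Φ y := by
      intro I hI y hy
      rw [h𝒥, Finset.mem_filter] at hI
      obtain ⟨-, hGne, hIcard⟩ := hI
      obtain ⟨hcG, hcJ⟩ := hcf I hGne
      by_cases hyd : y ∈ Q.S d
      · have hsub : I ⊆ Q.Jset y := (Q.mem_G_iff_subset.mp hy).2
        have hcardlt : I.card < (Q.Jset y).card := by
          have := hyd.2; omega
        have hne : I ≠ Q.Jset y := fun he => by rw [he] at hcardlt; omega
        obtain ⟨j, hjJ, hjI⟩ := Finset.exists_of_ssubset (hsub.ssubset_of_ne hne)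
        have hfj : Q.f j y = 0 := Q.mem_Jset.mp hjJ
        rw [coneMap_eq_of_boundary hcG.1 hcJ hy.1 hjI hfj]
        exact if_pos hyd
      · have hsub : I ⊆ Q.Jset y := (Q.mem_G_iff_subset.mp hy).2
        have hcardle : (Q.Jset y).card ≤ I.card := by
          have h2 : ¬(n ≤ (Q.Jset y).card + d) := fun hcon => hyd ⟨hy.1, hcon⟩
          omega
        have hJy : Q.Jset y = I := (Finset.eq_of_subset_of_card_le hsub hcardle).symm
        have e1 : stepMap Q Q' cf cf' Φ d y =
            Q.coneMap (cf (Q.Jset y)) (cf' (Q.Jset y)) (Q.Jset y) Φ y := if_neg hyd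
        rw [e1, hJy]
    rw [hdecomp]
    intro x hx
    rw [ContinuousWithinAt, nhdsWithin_biUnion 𝒥.finite_toSet (fun I => Q.G I) x]
    rw [Filter.tendsto_iSup]
    intro I
    rw [Filter.tendsto_iSup]
    intro hI
    by_cases hxGI : x ∈ Q.G I
    · have hImem : I ∈ 𝒥 := hI
      have hI' := hImem
      rw [h𝒥, Finset.mem_filter] at hI'
      obtain ⟨-, hGne, hIcard⟩ := hI'
      have hG'ne : (Q'.G I).Nonempty := (hK I).mp hGne
      obtain ⟨hcG, hcJ⟩ := hcf I hGne
      obtain ⟨hc'G, hc'J⟩ := hcf' I hG'ne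
      have hcone := cone_cont (Ψ := Ψ) hcG hcJ hc'G hc'J hIcard hP1.1 hP1.2
      exact ((hcone x hxGI).congr (hagree I hImem) (hagree I hImem x hxGI))
    · have := continuousWithinAt_of_notMem_closure (f := stepMap Q Q' cf cf' Φ d)
        (by rw [(Q.isClosed_G I).closure_eq]; exact hxGI)
      exact this

lemma base_half (hK : ∀ I : Finset (Fin m), (Q.G I).Nonempty ↔ (Q'.G I).Nonempty)
    (hcf : ∀ I, (Q.G I).Nonempty → cf I ∈ Q.G I ∧ Q.Jset (cf I) = I)
    (hcf' : ∀ I, (Q'.G I).Nonempty → cf' I ∈ Q'.G I ∧ Q'.Jset (cf' I) = I) :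
    Props Q Q' (fun x => cf' (Q.Jset x)) (fun x => cf (Q'.Jset x)) 0 := by
  have key : ∀ x ∈ Q.S 0, (Q.Jset x).card = n ∧ x = cf (Q.Jset x) := by
    intro x hx
    have hcard : (Q.Jset x).card = n := by
      have h1 := Q.card_Jset_le hx.1
      have h2 := hx.2
      omega
    have hGne : (Q.G (Q.Jset x)).Nonempty := ⟨x, Q.self_mem_G_Jset hx.1⟩
    obtain ⟨hcG, hcJ⟩ := hcf _ hGne
    exact ⟨hcard, Q.eq_of_mem_G_card_n hcard (Q.self_mem_G_Jset hx.1) hcG⟩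
  constructor
  · intro x hx
    obtain ⟨hcard, hxc⟩ := key x hx
    have hGne : (Q.G (Q.Jset x)).Nonempty := ⟨x, Q.self_mem_G_Jset hx.1⟩
    have hG'ne : (Q'.G (Q.Jset x)).Nonempty := (hK _).mp hGne
    obtain ⟨hc'G, hc'J⟩ := hcf' _ hG'ne
    refine ⟨hc'G.1, hc'J, ?_⟩
    show cf (Q'.Jset (cf' (Q.Jset x))) = x
    rw [hc'J, ← hxc]
  · have hfin : (Q.S 0).Finite := by
      have hsub : Q.S 0 ⊆ cf '' Set.univ := by
        intro x hx
        exact ⟨Q.Jset x, Set.mem_univ _, ((key x hx).2).symm⟩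
      exact (Set.finite_univ.image cf).subset hsub
    exact finite_continuousOn hfin _

theorem exists_pair (hK : ∀ I : Finset (Fin m), (Q.G I).Nonempty ↔ (Q'.G I).Nonempty) :
    ∀ d, d ≤ n → ∃ Φ Ψ, Props Q Q' Φ Ψ d ∧ Props Q' Q Ψ Φ d := by
  classical
  have hex : ∀ (R : GoodPres n m) (I : Finset (Fin m)),
      ∃ cpt, (R.G I).Nonempty → cpt ∈ R.G I ∧ R.Jset cpt = I := by
    intro R I
    by_cases h : (R.G I).Nonempty
    · obtain ⟨cpt, h1, h2⟩ := R.exists_center I h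
      exact ⟨cpt, fun _ => ⟨h1, h2⟩⟩
    · exact ⟨0, fun hcon => absurd hcon h⟩
  obtain ⟨cf, hcf⟩ := Classical.axiomOfChoice (hex Q)
  obtain ⟨cf', hcf'⟩ := Classical.axiomOfChoice (hex Q')
  intro d
  induction d with
  | zero =>
    intro _
    exact ⟨_, _, base_half hK hcf hcf', base_half (fun I => (hK I).symm) hcf' hcf⟩
  | succ d ih =>
    intro hd
    obtain ⟨Φ, Ψ, hP1, hP2⟩ := ih (by omega)
    exact ⟨_, _, step_half hd hK hcf hcf' hP1 hP2,
      step_half hd (fun I => (hK I).symm) hcf' hcf hP2 hP1⟩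

/-- the face-preserving homeomorphism-pair between the two polytopes -/
theorem exists_face_homeo (hK : ∀ I : Finset (Fin m), (Q.G I).Nonempty ↔ (Q'.G I).Nonempty) :
    ∃ Φ Ψ : (Fin n → ℝ) → (Fin n → ℝ),
      (∀ x ∈ Q.P, Φ x ∈ Q'.P ∧ (∀ j, Q.f j x = 0 ↔ Q'.f j (Φ x) = 0) ∧ Ψ (Φ x) = x) ∧
      (∀ x ∈ Q'.P, Ψ x ∈ Q.P ∧ (∀ j, Q'.f j x = 0 ↔ Q.f j (Ψ x) = 0) ∧ Φ (Ψ x) = x) ∧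
      ContinuousOn Φ Q.P ∧ ContinuousOn Ψ Q'.P := by
  obtain ⟨Φ, Ψ, hP1, hP2⟩ := exists_pair hK n le_rfl
  refine ⟨Φ, Ψ, ?_, ?_, ?_, ?_⟩
  · intro x hx
    obtain ⟨h1, h2, h3⟩ := hP1.1 x (Q.S_n_eq_P ▸ hx)
    refine ⟨h1, fun j => ?_, h3⟩
    rw [← Q.mem_Jset, ← Q'.mem_Jset, h2]
  · intro x hx
    obtain ⟨h1, h2, h3⟩ := hP2.1 x (Q'.S_n_eq_P ▸ hx)
    refine ⟨h1, fun j => ?_, h3⟩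
    rw [← Q.mem_Jset, ← Q'.mem_Jset, h2]
  · exact Q.S_n_eq_P ▸ hP1.2
  · exact Q'.S_n_eq_P ▸ hP2.2

end Step

end GoodPres
namespace GoodPres

variable {n m : ℕ}

def linT (Q : GoodPres n m) : (Fin n → ℝ) →ₗ[ℝ] (Fin m → ℝ) where
  toFun := fun x i => Q.g i x
  map_add' := fun x y => funext fun i => Q.g_add i x y
  map_smul' := fun t x => funext fun i => Q.g_smul i t x

lemma linT_apply (Q : GoodPres n m) (x : Fin n → ℝ) (i : Fin m) :
    linT Q x i = Q.g i x := rfl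

lemma linT_ker (Q : GoodPres n m) : LinearMap.ker (linT Q) = ⊥ := by
  rw [LinearMap.ker_eq_bot']
  intro v hv
  have hgv : ∀ i, Q.g i v = 0 := fun i => congrFun hv i
  by_contra hv0
  obtain ⟨p, hp⟩ := Q.nonempty_P
  have hray : ∀ t : ℝ, 0 ≤ t → p + t • v ∈ Q.P := by
    intro t ht i
    rw [Q.f_add_smul, hgv i, mul_zero, add_zero]
    exact hp i
  obtain ⟨R, hR⟩ := isBounded_iff_forall_norm_le.mp Q.bounded_P
  have hvn : 0 < ‖v‖ := norm_pos_iff.mpr hv0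
  set t : ℝ := (|R| + ‖p‖ + 1) / ‖v‖ with htdef
  have ht : 0 ≤ t := by positivity
  have hbound := hR _ (hray t ht)
  have h1 : ‖t • v‖ ≤ ‖p + t • v‖ + ‖p‖ := by
    have := norm_add_le (p + t • v) (-p)
    simpa [add_assoc] using this
  have h2 : ‖t • v‖ = t * ‖v‖ := by
    rw [norm_smul, Real.norm_eq_abs, abs_of_nonneg ht]
  have h3 : t * ‖v‖ = |R| + ‖p‖ + 1 := by
    rw [htdef, div_mul_cancel₀ _ hvn.ne']
  have h4 : R ≤ |R| := le_abs_self R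
  linarith

lemma exists_leftInv (Q : GoodPres n m) :
    ∃ L : (Fin m → ℝ) →ₗ[ℝ] (Fin n → ℝ), ∀ x, L (linT Q x) = x := by
  obtain ⟨L, hL⟩ := (linT Q).exists_leftInverse_of_injective (linT_ker Q)
  exact ⟨L, fun x => LinearMap.congr_fun hL x⟩

lemma f_bound (Q : GoodPres n m) : ∃ C : ℝ, ∀ i, ∀ x ∈ Q.P, Q.f i x ≤ C := by
  have hCi : ∀ i : Fin m, ∃ Ci, ∀ x ∈ Q.P, Q.f i x ≤ Ci := by
    intro i
    obtain ⟨x₀, -, h⟩ := Q.isCompact_P.exists_isMaxOn Q.nonempty_P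
      (Q.continuous_f i).continuousOn
    exact ⟨Q.f i x₀, fun x hx => h hx⟩
  choose C hC using hCi
  refine ⟨Finset.univ.fold max 0 C, fun i x hx => ?_⟩
  refine le_trans (hC i x hx) ?_
  exact (Finset.le_fold_max _).mpr (Or.inr ⟨i, Finset.mem_univ i, le_rfl⟩)

end GoodPres
section ScalarLemmas

lemma norm_scale_sq (ζ : ℂ) (fv gv : ℝ) (hf : ‖ζ‖ ^ 2 = fv) (hg : 0 ≤ gv)
    (hiff : fv = 0 ↔ gv = 0) :
    ‖((‖ζ‖⁻¹ * Real.sqrt gv : ℝ) • ζ)‖ ^ 2 = gv := by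
  by_cases hz : ζ = 0
  · have hfv : fv = 0 := by rw [← hf, hz]; simp
    have hgv : gv = 0 := hiff.mp hfv
    rw [hz, smul_zero, hgv]
    simp
  · have hζ : (0:ℝ) < ‖ζ‖ := norm_pos_iff.mpr hz
    rw [norm_smul, Real.norm_eq_abs, abs_of_nonneg (by positivity), mul_pow, mul_pow,
      Real.sq_sqrt hg, inv_pow]
    have hab : (0:ℝ) < ‖ζ‖ := hζ
    field_simp

lemma scale_inv (ζ : ℂ) (fv gv : ℝ) (hf : ‖ζ‖ ^ 2 = fv) (hg : 0 ≤ gv)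
    (hiff : fv = 0 ↔ gv = 0) :
    ((‖((‖ζ‖⁻¹ * Real.sqrt gv : ℝ) • ζ)‖⁻¹ * Real.sqrt fv : ℝ) •
      ((‖ζ‖⁻¹ * Real.sqrt gv : ℝ) • ζ)) = ζ := by
  by_cases hz : ζ = 0
  · rw [hz, smul_zero, smul_zero]
  · have hζ : (0:ℝ) < ‖ζ‖ := norm_pos_iff.mpr hz
    have hfv : 0 < fv := by rw [← hf]; positivity
    have hgv : 0 < gv := by
      rcases lt_or_eq_of_le hg with h | h
      · exact h
      · exact absurd (hiff.mpr h.symm) hfv.ne'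
    have hsg : 0 < Real.sqrt gv := Real.sqrt_pos.mpr hgv
    have hab : (0:ℝ) < ‖ζ‖ := hζ
    have hnorm : ‖((‖ζ‖⁻¹ * Real.sqrt gv : ℝ) • ζ)‖ = Real.sqrt gv := by
      rw [norm_smul, Real.norm_eq_abs, abs_of_nonneg (by positivity)]
      field_simp
    have hsf : Real.sqrt fv = ‖ζ‖ := by rw [← hf, Real.sqrt_sq (norm_nonneg _)]
    rw [hnorm, smul_smul, hsf]
    have : (Real.sqrt gv)⁻¹ * ‖ζ‖ * (‖ζ‖⁻¹ * Real.sqrt gv) = 1 := by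
      field_simp
    rw [this, one_smul]

lemma norm_scale (ζ : ℂ) (gv : ℝ) (hg : 0 ≤ gv) (h0 : ζ = 0 → gv = 0) :
    ‖((‖ζ‖⁻¹ * Real.sqrt gv : ℝ) • ζ)‖ = Real.sqrt gv := by
  by_cases hz : ζ = 0
  · rw [hz, smul_zero, h0 hz]
    simp
  · have hζ : (0:ℝ) < ‖ζ‖ := norm_pos_iff.mpr hz
    have hab : (0:ℝ) < ‖ζ‖ := hζ
    rw [norm_smul, Real.norm_eq_abs, abs_of_nonneg (by positivity)]
    field_simp

end ScalarLemmas

namespace GoodPres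

theorem Zside {n m : ℕ} (Q Q' : GoodPres n m)
    (Φ Ψ : (Fin n → ℝ) → (Fin n → ℝ))
    (hΦ : ∀ x ∈ Q.P, Φ x ∈ Q'.P ∧ (∀ j, Q.f j x = 0 ↔ Q'.f j (Φ x) = 0) ∧ Ψ (Φ x) = x)
    (hΨ : ∀ x ∈ Q'.P, Ψ x ∈ Q.P ∧ (∀ j, Q'.f j x = 0 ↔ Q.f j (Ψ x) = 0) ∧ Φ (Ψ x) = x)
    (hΦc : ContinuousOn Φ Q.P) (hΨc : ContinuousOn Ψ Q'.P) :
    ∃ e : {z : Fin m → ℂ | ∃ x ∈ Q.P, ∀ i, ‖z i‖ ^ 2 = Q.f i x} ≃ₜ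
          {z : Fin m → ℂ | ∃ x ∈ Q'.P, ∀ i, ‖z i‖ ^ 2 = Q'.f i x},
      ∀ t : Fin m → ℂ, (∀ i, ‖t i‖ = 1) →
        ∀ z w : {z : Fin m → ℂ | ∃ x ∈ Q.P, ∀ i, ‖z i‖ ^ 2 = Q.f i x},
          (∀ i, (w : Fin m → ℂ) i = t i * (z : Fin m → ℂ) i) →
          ∀ i, ((e w : Fin m → ℂ)) i = t i * ((e z : Fin m → ℂ)) i := by
  classical
  obtain ⟨L, hL⟩ := exists_leftInv Q
  obtain ⟨L', hL'⟩ := exists_leftInv Q'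
  set ZQ : Set (Fin m → ℂ) := {z | ∃ x ∈ Q.P, ∀ i, ‖z i‖ ^ 2 = Q.f i x} with hZQdef
  set ZQ' : Set (Fin m → ℂ) := {z | ∃ x ∈ Q'.P, ∀ i, ‖z i‖ ^ 2 = Q'.f i x} with hZQ'def
  set xz : (Fin m → ℂ) → (Fin n → ℝ) := fun z => L (fun i => ‖z i‖ ^ 2 - Q.b i) with hxzdef
  set xz' : (Fin m → ℂ) → (Fin n → ℝ) := fun w => L' (fun i => ‖w i‖ ^ 2 - Q'.b i) with hxz'def
  have hxzspec : ∀ (z : Fin m → ℂ) (x : Fin n → ℝ), (∀ i, ‖z i‖ ^ 2 = Q.f i x) → xz z = x := by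
    intro z x hzi
    have harg : (fun i => ‖z i‖ ^ 2 - Q.b i) = linT Q x := by
      funext i
      rw [hzi i, linT_apply, Q.f_eq_g_add]
      ring
    show L (fun i => ‖z i‖ ^ 2 - Q.b i) = x
    rw [harg, hL]
  have hxz'spec : ∀ (w : Fin m → ℂ) (x : Fin n → ℝ), (∀ i, ‖w i‖ ^ 2 = Q'.f i x) → xz' w = x := by
    intro w x hwi
    have harg : (fun i => ‖w i‖ ^ 2 - Q'.b i) = linT Q' x := by
      funext i
      rw [hwi i, linT_apply, Q'.f_eq_g_add]
      ring
    show L' (fun i => ‖w i‖ ^ 2 - Q'.b i) = x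
    rw [harg, hL']
  have hxzcont : Continuous xz := by
    apply L.continuous_of_finiteDimensional.comp
    exact continuous_pi fun i => (((continuous_apply i).norm.pow 2).sub continuous_const)
  have hchar : ∀ z, z ∈ ZQ ↔ (xz z ∈ Q.P ∧ ∀ i, ‖z i‖ ^ 2 = Q.f i (xz z)) := by
    intro z
    constructor
    · rintro ⟨x, hxP, hxi⟩
      have hxx : xz z = x := hxzspec z x hxi
      rw [hxx]
      exact ⟨hxP, hxi⟩
    · rintro ⟨h1, h2⟩
      exact ⟨xz z, h1, h2⟩
  have hchar' : ∀ w, w ∈ ZQ' ↔ (xz' w ∈ Q'.P ∧ ∀ i, ‖w i‖ ^ 2 = Q'.f i (xz' w)) := by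
    intro w
    constructor
    · rintro ⟨x, hxP, hxi⟩
      have hxx : xz' w = x := hxz'spec w x hxi
      rw [hxx]
      exact ⟨hxP, hxi⟩
    · rintro ⟨h1, h2⟩
      exact ⟨xz' w, h1, h2⟩
  set E : (Fin m → ℂ) → (Fin m → ℂ) :=
    fun z i => ((‖z i‖⁻¹ * Real.sqrt (Q'.f i (Φ (xz z))) : ℝ)) • z i with hEdef
  set E' : (Fin m → ℂ) → (Fin m → ℂ) :=
    fun w i => ((‖w i‖⁻¹ * Real.sqrt (Q.f i (Ψ (xz' w))) : ℝ)) • w i with hE'def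
  have hnormE : ∀ z ∈ ZQ, ∀ i, ‖E z i‖ ^ 2 = Q'.f i (Φ (xz z)) := by
    intro z hz i
    obtain ⟨hxP, hxi⟩ := (hchar z).mp hz
    obtain ⟨hΦP, hiff, -⟩ := hΦ (xz z) hxP
    exact norm_scale_sq (z i) _ _ (hxi i) (hΦP i) (hiff i)
  have hnormE' : ∀ w ∈ ZQ', ∀ i, ‖E' w i‖ ^ 2 = Q.f i (Ψ (xz' w)) := by
    intro w hw i
    obtain ⟨hxP, hxi⟩ := (hchar' w).mp hw
    obtain ⟨hΨP, hiff, -⟩ := hΨ (xz' w) hxP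
    exact norm_scale_sq (w i) _ _ (hxi i) (hΨP i) (hiff i)
  have hmemE : ∀ z ∈ ZQ, E z ∈ ZQ' := by
    intro z hz
    obtain ⟨hxP, hxi⟩ := (hchar z).mp hz
    exact ⟨Φ (xz z), (hΦ (xz z) hxP).1, hnormE z hz⟩
  have hmemE' : ∀ w ∈ ZQ', E' w ∈ ZQ := by
    intro w hw
    obtain ⟨hxP, hxi⟩ := (hchar' w).mp hw
    exact ⟨Ψ (xz' w), (hΨ (xz' w) hxP).1, hnormE' w hw⟩
  have hxzE : ∀ z ∈ ZQ, xz' (E z) = Φ (xz z) := fun z hz => hxz'spec (E z) _ (hnormE z hz)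
  have hxzE' : ∀ w ∈ ZQ', xz (E' w) = Ψ (xz' w) := fun w hw => hxzspec (E' w) _ (hnormE' w hw)
  have hinvE : ∀ z ∈ ZQ, E' (E z) = z := by
    intro z hz
    obtain ⟨hxP, hxi⟩ := (hchar z).mp hz
    obtain ⟨hΦP, hiff, hΨΦ⟩ := hΦ (xz z) hxP
    funext i
    show ((‖E z i‖⁻¹ * Real.sqrt (Q.f i (Ψ (xz' (E z)))) : ℝ)) • E z i = z i
    rw [hxzE z hz, hΨΦ]
    exact scale_inv (z i) _ _ (hxi i) (hΦP i) (hiff i)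
  have hinvE' : ∀ w ∈ ZQ', E (E' w) = w := by
    intro w hw
    obtain ⟨hxP, hxi⟩ := (hchar' w).mp hw
    obtain ⟨hΨP, hiff, hΦΨ⟩ := hΨ (xz' w) hxP
    funext i
    show ((‖E' w i‖⁻¹ * Real.sqrt (Q'.f i (Φ (xz (E' w)))) : ℝ)) • E' w i = w i
    rw [hxzE' w hw, hΦΨ]
    exact scale_inv (w i) _ _ (hxi i) (hΨP i) (hiff i)
  -- continuity of E on ZQ
  have hEcont : ContinuousOn E ZQ := by
    intro z hz
    obtain ⟨hxP, hxi⟩ := (hchar z).mp hz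
    show Filter.Tendsto E (nhdsWithin z ZQ) (nhds (E z))
    rw [tendsto_pi_nhds]
    intro i
    have hΦxz : ContinuousWithinAt (fun w => Φ (xz w)) ZQ z :=
      (hΦc (xz z) hxP).comp hxzcont.continuousWithinAt
        (fun w hw => ((hchar w).mp hw).1)
    have hgc : ContinuousWithinAt (fun w => Q'.f i (Φ (xz w))) ZQ z :=
      ((Q'.continuous_f i).continuousWithinAt).comp hΦxz (Set.mapsTo_univ _ _)
    have hsqrtc : ContinuousWithinAt (fun w => Real.sqrt (Q'.f i (Φ (xz w)))) ZQ z :=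
      (Real.continuous_sqrt.continuousWithinAt).comp hgc (Set.mapsTo_univ _ _)
    by_cases hzi : z i = 0
    · -- squeeze
      have hEzi : E z i = 0 := by
        show ((‖z i‖⁻¹ * Real.sqrt (Q'.f i (Φ (xz z))) : ℝ)) • z i = 0
        rw [hzi, smul_zero]
      rw [show E z i = (0:ℂ) from hEzi]
      rw [tendsto_zero_iff_norm_tendsto_zero]
      have hg0 : Q'.f i (Φ (xz z)) = 0 := by
        obtain ⟨-, hiff, -⟩ := hΦ (xz z) hxP
        apply (hiff i).mp
        rw [← hxi i, hzi]
        simp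
      have htend : Filter.Tendsto (fun w => Real.sqrt (Q'.f i (Φ (xz w))))
          (nhdsWithin z ZQ) (nhds 0) := by
        have := hsqrtc
        rw [ContinuousWithinAt, hg0, Real.sqrt_zero] at this
        exact this
      apply htend.congr'
      apply eventually_nhdsWithin_of_forall
      intro w hw
      obtain ⟨hwP, hwi⟩ := (hchar w).mp hw
      obtain ⟨hΦPw, hiffw, -⟩ := hΦ (xz w) hwP
      symm
      exact norm_scale (w i) _ (hΦPw i) (fun h0 => (hiffw i).mp (by rw [← hwi i, h0]; simp))
    · have hnormne : ‖z i‖ ≠ 0 := norm_ne_zero_iff.mpr hzi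
      have hnc : Continuous (fun w : Fin m → ℂ => ‖w i‖) := (continuous_apply i).norm
      have hninv : ContinuousWithinAt (fun w : Fin m → ℂ => ‖w i‖⁻¹) ZQ z :=
        (hnc.continuousAt.inv₀ hnormne).continuousWithinAt
      exact ((hninv.mul hsqrtc).smul ((continuous_apply i).continuousWithinAt))
  -- compactness of ZQ
  have hZQclosed : IsClosed ZQ := by
    have heq : ZQ = (xz ⁻¹' Q.P) ∩ ⋂ i, {z | ‖z i‖ ^ 2 = Q.f i (xz z)} := by
      ext z
      rw [hchar z]
      simp [Set.mem_iInter]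
    rw [heq]
    refine (Q.isClosed_P.preimage hxzcont).inter (isClosed_iInter fun i => ?_)
    exact isClosed_eq ((continuous_apply i).norm.pow 2) ((Q.continuous_f i).comp hxzcont)
  have hZQbdd : Bornology.IsBounded ZQ := by
    obtain ⟨C, hC⟩ := f_bound Q
    rw [isBounded_iff_forall_norm_le]
    refine ⟨Real.sqrt (max C 0), fun z hz => ?_⟩
    obtain ⟨hxP, hxi⟩ := (hchar z).mp hz
    rw [pi_norm_le_iff_of_nonneg (Real.sqrt_nonneg _)]
    intro i
    have h1 : ‖z i‖ ^ 2 ≤ max C 0 := le_trans (by rw [hxi i]; exact hC i _ hxP) (le_max_left _ _)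
    have h2 : ‖z i‖ = Real.sqrt (‖z i‖ ^ 2) := (Real.sqrt_sq (norm_nonneg _)).symm
    rw [h2]
    exact Real.sqrt_le_sqrt h1
  have hZQcompact : IsCompact ZQ :=
    Metric.isCompact_iff_isClosed_bounded.mpr ⟨hZQclosed, hZQbdd⟩
  haveI : CompactSpace ↥ZQ := isCompact_iff_compactSpace.mp hZQcompact
  -- the equivalence
  set eqv : ↥ZQ ≃ ↥ZQ' :=
    { toFun := fun z => ⟨E z.1, hmemE z.1 z.2⟩
      invFun := fun w => ⟨E' w.1, hmemE' w.1 w.2⟩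
      left_inv := fun z => Subtype.ext (hinvE z.1 z.2)
      right_inv := fun w => Subtype.ext (hinvE' w.1 w.2) } with heqv
  have hcont : Continuous eqv := by
    apply Continuous.subtype_mk
    exact hEcont.comp_continuous continuous_subtype_val fun z => z.2
  refine ⟨Continuous.homeoOfEquivCompactToT2 (f := eqv) hcont, ?_⟩
  intro t ht z w hw i
  have hxzw : xz w.1 = xz z.1 := by
    show L (fun i => ‖w.1 i‖ ^ 2 - Q.b i) = L (fun i => ‖z.1 i‖ ^ 2 - Q.b i)
    congr 1
    funext i
    rw [hw i, norm_mul, ht i, one_mul]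
  show E w.1 i = t i * E z.1 i
  show ((‖w.1 i‖⁻¹ * Real.sqrt (Q'.f i (Φ (xz w.1))) : ℝ)) • w.1 i =
    t i * (((‖z.1 i‖⁻¹ * Real.sqrt (Q'.f i (Φ (xz z.1))) : ℝ)) • z.1 i)
  rw [hxzw, hw i, norm_mul, ht i, one_mul, Complex.real_smul, Complex.real_smul]
  ring

end GoodPres

end Aux17

/-- Two generic presentations (with `m` inequalities in ℝⁿ each) of bounded
polytopes `P`, `P'` with nonempty interior producing the same simplicial complex
`K_P = K_{P'}` yield `T^m`-equivariantly homeomorphic moment-angle manifolds `Z_P ≅ Z_{P'}`. -/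
theorem ZP_equivariant_homeomorphism_of_combinatorial_equivalence
    (n m : ℕ) (hn : 1 ≤ n) (hm : 1 ≤ m)
    (a : Fin m → (Fin n → ℝ)) (b : Fin m → ℝ)
    (a' : Fin m → (Fin n → ℝ)) (b' : Fin m → ℝ)
    (P P' : Set (Fin n → ℝ))
    (hP : P = {x | ∀ i, 0 ≤ ∑ j, a i j * x j + b i})
    (hP' : P' = {x | ∀ i, 0 ≤ ∑ j, a' i j * x j + b' i})
    (hPbdd : Bornology.IsBounded P) (hP'bdd : Bornology.IsBounded P')
    (hPint : (interior P).Nonempty) (hP'int : (interior P').Nonempty)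
    (hgeneric : ∀ x ∈ P, LinearIndependent ℝ
      (fun i : {i : Fin m // ∑ j, a i j * x j + b i = 0} => a i.1))
    (hgeneric' : ∀ x ∈ P', LinearIndependent ℝ
      (fun i : {i : Fin m // ∑ j, a' i j * x j + b' i = 0} => a' i.1))
    (F F' : Fin m → Set (Fin n → ℝ))
    (hF : ∀ i, F i = {x ∈ P | ∑ j, a i j * x j + b i = 0})
    (hF' : ∀ i, F' i = {x ∈ P' | ∑ j, a' i j * x j + b' i = 0})
    (hKK : {I : Set (Fin m) | I = ∅ ∨ (⋂ i ∈ I, F i).Nonempty} =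
           {I : Set (Fin m) | I = ∅ ∨ (⋂ i ∈ I, F' i).Nonempty})
    (ZP ZP' : Set (Fin m → ℂ))
    (hZP : ZP = {z | ∃ x ∈ P, ∀ i, ‖z i‖ ^ 2 = ∑ j, a i j * x j + b i})
    (hZP' : ZP' = {z | ∃ x ∈ P', ∀ i, ‖z i‖ ^ 2 = ∑ j, a' i j * x j + b' i}) :
    ∃ e : ZP ≃ₜ ZP',
      ∀ t : Fin m → ℂ, (∀ i, ‖t i‖ = 1) →
        ∀ z w : ZP, (∀ i, (w : Fin m → ℂ) i = t i * (z : Fin m → ℂ) i) →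
          ∀ i, (e w : Fin m → ℂ) i = t i * (e z : Fin m → ℂ) i := by
  classical
  obtain ⟨Q, rfl, rfl⟩ : ∃ Q : GoodPres n m, a = Q.a ∧ b = Q.b :=
    ⟨⟨a, b, hP ▸ hPbdd, hP ▸ hPint, hP ▸ hgeneric⟩, rfl, rfl⟩
  obtain ⟨Q', rfl, rfl⟩ : ∃ Q' : GoodPres n m, a' = Q'.a ∧ b' = Q'.b :=
    ⟨⟨a', b', hP' ▸ hP'bdd, hP' ▸ hP'int, hP' ▸ hgeneric'⟩, rfl, rfl⟩
  have hPQ : P = Q.P := hP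
  have hPQ' : P' = Q'.P := hP'
  subst hPQ
  subst hPQ'
  subst hZP
  subst hZP'
  have hKfin : ∀ I : Finset (Fin m), (Q.G I).Nonempty ↔ (Q'.G I).Nonempty := by
    intro I
    have hmem := Set.ext_iff.mp hKK (↑I : Set (Fin m))
    simp only [Set.mem_setOf_eq] at hmem
    have h1 : ∀ (R : GoodPres n m) (Fv : Fin m → Set (Fin n → ℝ)),
        (∀ i, Fv i = {x ∈ R.P | ∑ j, R.a i j * x j + R.b i = 0}) →
        ((R.G I).Nonempty ↔
          ((↑I : Set (Fin m)) = ∅ ∨ (⋂ i ∈ (↑I : Set (Fin m)), Fv i).Nonempty)) := by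
      intro R Fv hFv
      by_cases hI : I = ∅
      · subst hI
        simp only [Finset.coe_empty]
        constructor
        · intro _
          exact Or.inl (by trivial)
        · intro _
          obtain ⟨p, hp⟩ := R.nonempty_P
          exact ⟨p, hp, fun i hi => absurd hi (Finset.notMem_empty i)⟩
      · have hIne : (↑I : Set (Fin m)) ≠ ∅ := fun h => hI (Finset.coe_eq_empty.mp h)
        have heq : (⋂ i ∈ (↑I : Set (Fin m)), Fv i) = R.G I := by
          ext x
          simp only [Set.mem_iInter, hFv, Set.mem_setOf_eq, Finset.mem_coe]
          constructor
          · intro h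
            obtain ⟨i₀, hi₀⟩ := Finset.nonempty_iff_ne_empty.mpr hI
            exact ⟨(h i₀ hi₀).1, fun i hi => (h i hi).2⟩
          · intro h i hi
            exact ⟨h.1, h.2 i hi⟩
        rw [heq]
        constructor
        · intro h
          exact Or.inr h
        · rintro (h | h)
          · exact absurd h hIne
          · exact h
    rw [h1 Q F hF, hmem, ← h1 Q' F' hF']
  obtain ⟨Φ, Ψ, hΦ, hΨ, hΦc, hΨc⟩ := GoodPres.exists_face_homeo (Q := Q) (Q' := Q') hKfin
  exact GoodPres.Zside Q Q' Φ Ψ hΦ hΨ hΦc hΨc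
end

section
/- Suppose that for every I ∈ K the set of vectors {a_i : i ∈ I} can be extended to a basis of the lattice ℤ^n (the fan is regular). Then the group G acts freely on U(K): if g ∈ G, z ∈ U(K) and g_i z_i = z_i for all i = 1,…,m, then g_i = 1 for all i. -/
lemma my_zpow_sum {G : Type*} [CommGroup G] {ι : Type*} (x : G) (s : Finset ι)
    (f : ι → ℤ) : x ^ (∑ i ∈ s, f i) = ∏ i ∈ s, x ^ f i := by
  classical
  induction s using Finset.induction_on with
  | empty => simp
  | insert _ _ h ih => rw [Finset.sum_insert h, Finset.prod_insert h, zpow_add, ih]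

/-- If for every `I ∈ K` the vectors `{a i : i ∈ I}` can be extended to a basis
of the lattice `ℤⁿ` (the fan is regular), then the group
`G = {g ∈ (ℂ^×)^m : ∏ᵢ gᵢ^{a_{ij}} = 1 for all j}` acts freely on `U(K)`. -/
theorem G_acts_freely_on_UK_of_regular (n m : ℕ) (hn : 1 ≤ n) (hm : 1 ≤ m)
    (a : Fin m → (Fin n → ℤ)) (K : Set (Set (Fin m)))
    (hKempty : ∅ ∈ K) (hKdown : ∀ I ∈ K, ∀ J ⊆ I, J ∈ K)
    (hreg : ∀ I ∈ K, ∃ (bas : Module.Basis (Fin n) ℤ (Fin n → ℤ)) (f : I → Fin n),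
      Function.Injective f ∧ ∀ i : I, bas (f i) = a i.1)
    (g : Fin m → ℂ) (hg0 : ∀ i, g i ≠ 0)
    (hg : ∀ j, ∏ i, g i ^ (a i j) = 1)
    (z : Fin m → ℂ) (hz : {i | z i = 0} ∈ K)
    (hfix : ∀ i, g i * z i = z i) :
    ∀ i, g i = 1 := by
  classical
  -- units version of g
  set u : Fin m → ℂˣ := fun i => Units.mk0 (g i) (hg0 i) with hu_def
  have hu : ∀ j, ∏ i, u i ^ (a i j) = 1 := by
    intro j
    apply Units.ext
    push_cast
    simpa [hu_def] using hg j
  have hone : ∀ i, z i ≠ 0 → g i = 1 := by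
    intro i hzi
    have := hfix i
    field_simp at this
    tauto
  -- key: for any linear functional L, ∏ i, u i ^ L (a i) = 1
  have key : ∀ (L : (Fin n → ℤ) →ₗ[ℤ] ℤ), ∏ i, u i ^ (L (a i)) = 1 := by
    intro L
    have h1 : ∀ i : Fin m, u i ^ (L (a i))
        = ∏ j, (u i ^ (a i j)) ^ (L fun k => if j = k then 1 else 0) := by
      intro i
      rw [LinearMap.pi_apply_eq_sum_univ L (a i), my_zpow_sum]
      refine Finset.prod_congr rfl fun j _ => ?_
      rw [smul_eq_mul, zpow_mul]
    calc ∏ i, u i ^ (L (a i))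
        = ∏ i, ∏ j, (u i ^ (a i j)) ^ (L fun k => if j = k then 1 else 0) := by
          exact Finset.prod_congr rfl fun i _ => h1 i
      _ = ∏ j, (∏ i, u i ^ (a i j)) ^ (L fun k => if j = k then 1 else 0) := by
          rw [Finset.prod_comm]
          exact Finset.prod_congr rfl fun j _ => (Finset.prod_zpow _ _ _)
      _ = 1 := by simp [hu]
  intro i₀
  by_cases hz0 : z i₀ = 0
  · obtain ⟨bas, f, hf, hbf⟩ := hreg _ hz
    set i' : {i | z i = 0} := ⟨i₀, hz0⟩ with hi'
    set L := bas.coord (f i') with hL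
    have hprod : ∏ i, u i ^ (L (a i)) = u i₀ := by
      rw [Finset.prod_eq_single i₀]
      · have : L (a i₀) = 1 := by
          have := hbf i'
          simp only [hL] at *
          rw [← this, Module.Basis.coord_apply, Module.Basis.repr_self]
          simp
        rw [this, zpow_one]
      · intro i _ hne
        by_cases hzi : z i = 0
        · have : L (a i) = 0 := by
            have h2 := hbf ⟨i, hzi⟩
            simp only [hL]
            rw [← h2, Module.Basis.coord_apply, Module.Basis.repr_self]
            have : f ⟨i, hzi⟩ ≠ f i' := by
              intro h
              exact hne (congrArg Subtype.val (hf h))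
            simp [Finsupp.single_apply, this]
          rw [this, zpow_zero]
        · have : u i = 1 := Units.ext (by
            simp only [hu_def, Units.val_mk0, Units.val_one]; exact hone i hzi)
          rw [this, one_zpow]
      · intro h
        exact absurd (Finset.mem_univ i₀) h
    have : u i₀ = 1 := by rw [← hprod, key]
    have h3 := congrArg Units.val this
    simp only [hu_def, Units.val_mk0, Units.val_one] at h3
    exact h3
  · exact hone i₀ hz0
end

section
/- Suppose that for every I ∈ K the vectors {a_i : i ∈ I} are linearly independent over ℝ (the fan is simplicial and rational). Then the group G acts almost freely on U(K): for every z ∈ U(K) the isotropy subgroup {g ∈ G : g_i z_i = z_i for all i = 1,…,m} is finite. -/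
open Finset

private lemma zpow_sum₀ {α : Type*} {M₀ : Type*} [CommGroupWithZero M₀] {x : M₀} (hx : x ≠ 0)
    (s : Finset α) (c : α → ℤ) : x ^ (∑ i ∈ s, c i) = ∏ i ∈ s, x ^ c i := by
  classical
  induction s using Finset.induction_on with
  | empty => simp
  | insert _ _ h ih =>
      rw [Finset.sum_insert h, Finset.prod_insert h, zpow_add₀ hx, ih]

/-- If for every `I ∈ K` the vectors `{a i : i ∈ I}` are linearly independent
over ℝ (the fan is simplicial and rational), then the group
`G = {g ∈ (ℂ^×)^m : ∏ᵢ gᵢ^{a_{ij}} = 1 for all j}` acts almost freely on `U(K)`: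
all isotropy subgroups are finite. -/
theorem G_acts_almost_freely_on_UK (n m : ℕ) (hn : 1 ≤ n) (hm : 1 ≤ m)
    (a : Fin m → (Fin n → ℤ)) (K : Set (Set (Fin m)))
    (hKempty : ∅ ∈ K) (hKdown : ∀ I ∈ K, ∀ J ⊆ I, J ∈ K)
    (hInd : ∀ I ∈ K, LinearIndependent ℝ (fun i : I => fun j => (a i.1 j : ℝ))) :
    ∀ z : Fin m → ℂ, {i | z i = 0} ∈ K →
      Set.Finite {g : Fin m → ℂ |
        ((∀ i, g i ≠ 0) ∧ ∀ j, ∏ i, g i ^ (a i j) = 1) ∧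
        ∀ i, g i * z i = z i} := by
  classical
  intro z hz
  -- Key: each coordinate of an isotropy element is a `d i`-th root of unity for a fixed `d i`.
  have key : ∀ i : Fin m, ∃ d : ℕ, 0 < d ∧ ∀ g : Fin m → ℂ,
      (((∀ i', g i' ≠ 0) ∧ ∀ j, ∏ i', g i' ^ (a i' j) = 1) ∧
        ∀ i', g i' * z i' = z i') → g i ^ d = 1 := by
    intro i
    by_cases hi : z i = 0
    · -- the hard case: use linear independence
      set I : Set (Fin m) := {i' | z i' = 0} with hIdef
      have hiI : i ∈ I := hi
      set vQ : I → (Fin n → ℚ) := fun i' => fun j => (a i'.1 j : ℚ) with hvQ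
      -- ℚ-linear independence of the rational vectors
      have hR : LinearIndependent ℝ (fun i' : I => fun j => (a i'.1 j : ℝ)) := hInd I hz
      have hQR : LinearIndependent ℚ (fun i' : I => fun j => (a i'.1 j : ℝ)) :=
        hR.restrict_scalars (by
          intro p q hpq
          have : (p : ℝ) = (q : ℝ) := by simpa [Rat.smul_one_eq_cast] using hpq
          exact_mod_cast this)
      have hQ : LinearIndependent ℚ vQ := by
        refine LinearIndependent.of_comp
          (LinearMap.compLeft (Algebra.linearMap ℚ ℝ) (Fin n)) ?_
        have hcomp : (⇑(LinearMap.compLeft (Algebra.linearMap ℚ ℝ) (Fin n)) ∘ vQ)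
            = fun i' : I => fun j => (a i'.1 j : ℝ) := by
          funext i' j
          simp only [hvQ, Function.comp_apply]
          show (Algebra.linearMap ℚ ℝ) ((a i'.1 j : ℚ)) = _
          simp
        rw [hcomp]
        exact hQR
      -- the linear map `c ↦ ∑ c i • vQ i` is injective
      set ψ : (I → ℚ) →ₗ[ℚ] (Fin n → ℚ) := Fintype.linearCombination ℚ vQ with hψ
      have hinj : Function.Injective ψ := by
        rw [← LinearMap.ker_eq_bot, LinearMap.ker_eq_bot']
        intro c hc
        have h0 : ∑ i', c i' • vQ i' = 0 := by
          rw [← Fintype.linearCombination_apply ℚ vQ c]; exact hc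
        funext i'
        exact Fintype.linearIndependent_iff.mp hQ c h0 i'
      -- dual functional picking out the `i`-th coordinate
      obtain ⟨f, hf⟩ := LinearMap.dualMap_surjective_of_injective hinj
        (LinearMap.proj (⟨i, hiI⟩ : I))
      have hδ : ∀ i' : I, f (vQ i') = if i'.1 = i then 1 else 0 := by
        intro i'
        have h1 : ψ (fun k => if k = i' then (1:ℚ) else 0) = vQ i' := by
          rw [hψ, Fintype.linearCombination_apply]
          simp
        have h2 := LinearMap.congr_fun hf (fun k => if k = i' then (1:ℚ) else 0)
        have h3 : f (ψ (fun k => if k = i' then (1:ℚ) else 0))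
            = (if (⟨i, hiI⟩ : I) = i' then (1:ℚ) else 0) := h2
        rw [h1] at h3
        rw [h3]
        by_cases hc : i'.1 = i
        · have he : (⟨i, hiI⟩ : I) = i' := Subtype.ext hc.symm
          simp [he, hc]
        · have he : (⟨i, hiI⟩ : I) ≠ i' := fun h => hc (by rw [← h])
          simp [he, hc]
      -- represent `f` by a rational vector `x`
      set x : Fin n → ℚ := fun j => f (fun k => if j = k then 1 else 0) with hxd
      have hfc : ∀ c : Fin n → ℚ, f c = ∑ j, c j * x j := by
        intro c
        refine (LinearMap.pi_apply_eq_sum_univ f c).trans ?_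
        exact Finset.sum_congr rfl fun j _ => by rw [smul_eq_mul, hxd]
      -- clear denominators
      set d : ℕ := ∏ j, (x j).den with hdd
      have hdpos : 0 < d := Finset.prod_pos fun j _ => (x j).pos
      set y : Fin n → ℤ := fun j => (x j).num * ((d / (x j).den : ℕ) : ℤ) with hyd
      have hyx : ∀ j, (y j : ℚ) = x j * d := by
        intro j
        have hdvd : (x j).den ∣ d := Finset.dvd_prod_of_mem _ (Finset.mem_univ j)
        have h1 : ((x j).den : ℚ) * ((d / (x j).den : ℕ) : ℚ) = (d : ℚ) := by
          rw [← Nat.cast_mul, Nat.mul_div_cancel' hdvd]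
        have h2 : ((x j).num : ℚ) = x j * ((x j).den : ℚ) := (Rat.mul_den_eq_num _).symm
        calc (y j : ℚ)
            = (((x j).num * ((d / (x j).den : ℕ) : ℤ) : ℤ) : ℚ) := by rw [hyd]
          _ = ((x j).num : ℚ) * ((d / (x j).den : ℕ) : ℚ) := by
              rw [Int.cast_mul, Int.cast_natCast]
          _ = x j * (((x j).den : ℚ) * ((d / (x j).den : ℕ) : ℚ)) := by rw [h2]; ring
          _ = x j * d := by rw [h1]
      -- the integer linear combinations
      have hsum : ∀ i' : Fin m, z i' = 0 →
          (∑ j, a i' j * y j) = if i' = i then (d : ℤ) else 0 := by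
        intro i' hzi'
        have hmem : i' ∈ I := hzi'
        have hcast : ((∑ j, a i' j * y j : ℤ) : ℚ)
            = ((if i' = i then (d : ℤ) else 0 : ℤ) : ℚ) := by
          rw [Int.cast_sum]
          calc ∑ j, ((a i' j * y j : ℤ) : ℚ)
              = ∑ j, ((a i' j : ℚ) * x j) * (d : ℚ) := by
                refine Finset.sum_congr rfl fun j _ => by
                  rw [Int.cast_mul, hyx]; ring
            _ = (∑ j, (a i' j : ℚ) * x j) * (d : ℚ) := by rw [← Finset.sum_mul]
            _ = f (vQ ⟨i', hmem⟩) * (d : ℚ) := by rw [hfc (vQ ⟨i', hmem⟩)]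
            _ = (if i' = i then (1:ℚ) else 0) * (d : ℚ) := by rw [hδ ⟨i', hmem⟩]
            _ = ((if i' = i then (d : ℤ) else 0 : ℤ) : ℚ) := by split_ifs <;> simp
        exact_mod_cast hcast
      -- conclude
      refine ⟨d, hdpos, fun g hg => ?_⟩
      obtain ⟨⟨hg0, hgp⟩, hfix⟩ := hg
      have hone : ∀ i', z i' ≠ 0 → g i' = 1 := fun i' h =>
        mul_right_cancel₀ h (by rw [hfix i', one_mul])
      have main : (1 : ℂ) = ∏ i', g i' ^ (∑ j, a i' j * y j) := by
        calc (1 : ℂ) = ∏ j, (∏ i', g i' ^ (a i' j)) ^ (y j) := by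
              simp [hgp]
          _ = ∏ j, ∏ i', g i' ^ (a i' j * y j) := by
              refine Finset.prod_congr rfl fun j _ => ?_
              rw [← Finset.prod_zpow]
              exact Finset.prod_congr rfl fun i' _ => (zpow_mul (g i') (a i' j) (y j)).symm
          _ = ∏ i', ∏ j, g i' ^ (a i' j * y j) := Finset.prod_comm
          _ = ∏ i', g i' ^ (∑ j, a i' j * y j) := by
              refine Finset.prod_congr rfl fun i' _ => (zpow_sum₀ (hg0 i') _ _).symm
      have hfinal : (1 : ℂ) = g i ^ (d : ℤ) := by
        rw [main]
        calc ∏ i', g i' ^ (∑ j, a i' j * y j)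
            = ∏ i', (if i' = i then g i ^ (d : ℤ) else 1) := by
              refine Finset.prod_congr rfl fun i' _ => ?_
              by_cases hzi' : z i' = 0
              · rw [hsum i' hzi']
                by_cases hii : i' = i
                · simp [hii]
                · simp [hii]
              · have hne : i' ≠ i := fun h => hzi' (h ▸ hi)
                rw [hone i' hzi']
                simp [hne]
          _ = g i ^ (d : ℤ) := by simp
      rw [← zpow_natCast]
      exact hfinal.symm
    · -- z i ≠ 0 : g i = 1
      refine ⟨1, one_pos, fun g hg => ?_⟩
      have h1 : g i * z i = z i := hg.2 i
      have : g i = 1 := mul_right_cancel₀ hi (by rw [h1, one_mul])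
      simp [this]
  choose d hd hgd using key
  have hfin : ∀ i, {w : ℂ | w ^ d i = 1}.Finite := by
    intro i
    apply Set.Finite.subset (Polynomial.nthRoots (d i) (1 : ℂ)).toFinset.finite_toSet
    intro w hw
    rw [Finset.mem_coe, Multiset.mem_toFinset, Polynomial.mem_nthRoots (hd i)]
    exact hw
  apply Set.Finite.subset (Set.Finite.pi hfin)
  intro g hg
  rw [Set.mem_pi]
  intro i _
  exact hgd i g hg
end
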